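/- arXiv:1607.08899 — 8 statements merged into one kernel-verified Lean document; each statement's English description precedes it below -/
import Mathlib

section
/- Let X be a geodesic metric space, N : ℝ≥1 × ℝ≥0 → ℝ≥0 a Morse gauge, γ : [a,b] → X an N-Morse geodesic segment, and σ : [a',b'] → X a continuous (K,C)-quasigeodesic with σ(a') = γ(a) and σ(b') = γ(b). Then the Hausdorff distance between the images of γ and σ is at most 2·N(K,C). -/
open Set Metric Filter

/-- A map is a geodesic on the interval `I`: distances equal parameter differences. -/
def IsGeodesicOn {X : Type*} [MetricSpace X] (γ : ℝ → X) (I : Set ℝ) : Prop :=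
  ∀ s ∈ I, ∀ t ∈ I, dist (γ s) (γ t) = |s - t|

/-- A `(K,C)`-quasigeodesic on the interval `I`. -/
def IsQuasigeodesicOn {X : Type*} [MetricSpace X] (K C : ℝ) (q : ℝ → X) (I : Set ℝ) : Prop :=
  ∀ s ∈ I, ∀ t ∈ I,
    (1 / K) * |s - t| - C ≤ dist (q s) (q t) ∧ dist (q s) (q t) ≤ K * |s - t| + C

/-- The closed `r`-neighborhood of a subset. -/
def nbhd {X : Type*} [MetricSpace X] (A : Set X) (r : ℝ) : Set X :=
  {x | ∃ y ∈ A, dist x y ≤ r}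

/-- A path `γ` (on domain `I`) is `N`-Morse: every `(K,C)`-quasigeodesic with endpoints
on `γ` lies in the `N K C`-neighborhood of `γ`. -/
def IsMorseOn {X : Type*} [MetricSpace X] (N : ℝ → ℝ → ℝ) (γ : ℝ → X) (I : Set ℝ) : Prop :=
  ∀ K C : ℝ, 1 ≤ K → 0 ≤ C → ∀ (q : ℝ → X) (a b : ℝ), a ≤ b →
    IsQuasigeodesicOn K C q (Icc a b) → q a ∈ γ '' I → q b ∈ γ '' I →
    q '' Icc a b ⊆ nbhd (γ '' I) (N K C)

/-- A Morse gauge takes nonnegative values. -/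
def MorseGauge (N : ℝ → ℝ → ℝ) : Prop := ∀ K C : ℝ, 1 ≤ K → 0 ≤ C → 0 ≤ N K C

/-- A geodesic metric space: any two points are joined by a geodesic. -/
def GeodesicSpace (X : Type*) [MetricSpace X] : Prop :=
  ∀ x y : X, ∃ γ : ℝ → X, IsGeodesicOn γ (Icc 0 (dist x y)) ∧ γ 0 = x ∧ γ (dist x y) = y

lemma nbhd_isClosed {X : Type*} [MetricSpace X] {A : Set X} (hA : IsCompact A) (r : ℝ) :
    IsClosed (nbhd A r) := by
  rcases A.eq_empty_or_nonempty with h | hne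
  · have : nbhd A r = ∅ := by simp [nbhd, h]
    rw [this]; exact isClosed_empty
  · have : nbhd A r = {x | infDist x A ≤ r} := by
      ext x
      constructor
      · rintro ⟨y, hy, hxy⟩
        exact le_trans (infDist_le_dist_of_mem hy) hxy
      · intro hx
        obtain ⟨y, hy, hdy⟩ := hA.exists_infDist_eq_dist hne x
        exact ⟨y, hy, hdy ▸ hx⟩
    rw [this]
    exact isClosed_le (continuous_infDist_pt A) continuous_const

/-- a continuous (K,C)-quasigeodesic with the same endpoints as an
N-Morse geodesic segment is within Hausdorff distance 2·N(K,C) of it. -/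
theorem stmt0 {X : Type*} [MetricSpace X] (hX : GeodesicSpace X)
    (N : ℝ → ℝ → ℝ) (hN : MorseGauge N)
    (γ σ : ℝ → X) (a b a' b' K C : ℝ) (hab : a ≤ b) (ha'b' : a' ≤ b')
    (hK : 1 ≤ K) (hC : 0 ≤ C)
    (hγ : IsGeodesicOn γ (Icc a b)) (hM : IsMorseOn N γ (Icc a b))
    (hσ : IsQuasigeodesicOn K C σ (Icc a' b'))
    (hcont : ContinuousOn σ (Icc a' b'))
    (he1 : σ a' = γ a) (he2 : σ b' = γ b) :
    Metric.hausdorffDist (γ '' Icc a b) (σ '' Icc a' b') ≤ 2 * N K C := by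
  set M := N K C with hMdef
  have hM0 : 0 ≤ M := hN K C hK hC
  -- γ is 1-Lipschitz on Icc a b, hence continuous on it
  have hγcont : ContinuousOn γ (Icc a b) := by
    apply LipschitzOnWith.continuousOn (K := 1)
    intro s hs t ht
    rw [edist_dist, hγ s hs t ht]
    simp [ENNReal.coe_one, one_mul, edist_dist, Real.dist_eq, ENNReal.ofReal_le_ofReal_iff,
      abs_nonneg]
  -- σ-side: σ image is in the M-neighborhood of γ image
  have hσside : σ '' Icc a' b' ⊆ nbhd (γ '' Icc a b) M := by
    apply hM K C hK hC σ a' b' ha'b' hσ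
    · exact ⟨a, left_mem_Icc.2 hab, he1.symm⟩
    · exact ⟨b, right_mem_Icc.2 hab, he2.symm⟩
  apply hausdorffDist_le_of_mem_dist (by linarith)
  · -- γ-side: every point of γ is within 2M of σ's image
    rintro x ⟨t, ht, rfl⟩
    -- covering [a',b'] by two relatively closed sets
    set F₁ := nbhd (γ '' Icc a t) M with hF₁
    set F₂ := nbhd (γ '' Icc t b) M with hF₂
    have hsub₁ : Icc a t ⊆ Icc a b := Icc_subset_Icc le_rfl ht.2
    have hsub₂ : Icc t b ⊆ Icc a b := Icc_subset_Icc ht.1 le_rfl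
    have hcl₁ : IsClosed F₁ :=
      nbhd_isClosed (isCompact_Icc.image_of_continuousOn (hγcont.mono hsub₁)) M
    have hcl₂ : IsClosed F₂ :=
      nbhd_isClosed (isCompact_Icc.image_of_continuousOn (hγcont.mono hsub₂)) M
    have hA : IsClosed (Icc a' b' ∩ σ ⁻¹' F₁) :=
      ContinuousOn.preimage_isClosed_of_isClosed hcont isClosed_Icc hcl₁
    have hB : IsClosed (Icc a' b' ∩ σ ⁻¹' F₂) :=
      ContinuousOn.preimage_isClosed_of_isClosed hcont isClosed_Icc hcl₂
    have hcover : Icc a' b' ⊆ (Icc a' b' ∩ σ ⁻¹' F₁) ∪ (Icc a' b' ∩ σ ⁻¹' F₂) := by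
      intro s hs
      obtain ⟨y, ⟨u, hu, rfl⟩, hd⟩ := hσside ⟨s, hs, rfl⟩
      rcases le_total u t with h | h
      · exact Or.inl ⟨hs, ⟨γ u, ⟨u, ⟨hu.1, h⟩, rfl⟩, hd⟩⟩
      · exact Or.inr ⟨hs, ⟨γ u, ⟨u, ⟨h, hu.2⟩, rfl⟩, hd⟩⟩
    have hne₁ : (Icc a' b' ∩ (Icc a' b' ∩ σ ⁻¹' F₁)).Nonempty := by
      refine ⟨a', left_mem_Icc.2 ha'b', left_mem_Icc.2 ha'b',
        ⟨γ a, ⟨a, ⟨le_rfl, ht.1⟩, rfl⟩, ?_⟩⟩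
      rw [he1]; simp [hM0]
    have hne₂ : (Icc a' b' ∩ (Icc a' b' ∩ σ ⁻¹' F₂)).Nonempty := by
      refine ⟨b', right_mem_Icc.2 ha'b', right_mem_Icc.2 ha'b',
        ⟨γ b, ⟨b, ⟨ht.2, le_rfl⟩, rfl⟩, ?_⟩⟩
      rw [he2]; simp [hM0]
    have hconn : IsPreconnected (Icc a' b' : Set ℝ) := isPreconnected_Icc
    obtain ⟨s, -, ⟨⟨hs, hsF₁⟩, ⟨-, hsF₂⟩⟩⟩ :=
      isPreconnected_closed_iff.1 hconn _ _ hA hB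
        (fun x hx => (hcover hx).imp id id) hne₁ hne₂
    obtain ⟨y₁, ⟨u₁, hu₁, rfl⟩, hd₁⟩ := hsF₁
    obtain ⟨y₂, ⟨u₂, hu₂, rfl⟩, hd₂⟩ := hsF₂
    have hdu : dist (γ u₁) (γ u₂) = u₂ - u₁ := by
      rw [hγ u₁ (hsub₁ hu₁) u₂ (hsub₂ hu₂), abs_of_nonpos (by linarith [hu₁.2, hu₂.1]),
        neg_sub]
    have hdu2 : u₂ - u₁ ≤ 2 * M := by
      rw [← hdu]
      calc dist (γ u₁) (γ u₂) ≤ dist (γ u₁) (σ s) + dist (σ s) (γ u₂) := dist_triangle _ _ _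
        _ ≤ 2 * M := by rw [dist_comm (γ u₁) (σ s)]; linarith
    rcases le_total (t - u₁) (u₂ - t) with h | h
    · have htu : dist (γ t) (γ u₁) = t - u₁ := by
        rw [hγ t ht u₁ (hsub₁ hu₁), abs_of_nonneg (by linarith [hu₁.2])]
      refine ⟨σ s, ⟨s, hs, rfl⟩, ?_⟩
      calc dist (γ t) (σ s) ≤ dist (γ t) (γ u₁) + dist (γ u₁) (σ s) := dist_triangle _ _ _
        _ ≤ 2 * M := by rw [dist_comm (γ u₁) (σ s)]; rw [htu]; linarith
    · have htu : dist (γ t) (γ u₂) = u₂ - t := by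
        rw [hγ t ht u₂ (hsub₂ hu₂), abs_of_nonpos (by linarith [hu₂.1]), neg_sub]
      refine ⟨σ s, ⟨s, hs, rfl⟩, ?_⟩
      calc dist (γ t) (σ s) ≤ dist (γ t) (γ u₂) + dist (γ u₂) (σ s) := dist_triangle _ _ _
        _ ≤ 2 * M := by rw [dist_comm (γ u₂) (σ s)]; rw [htu]; linarith
  · rintro x hx
    obtain ⟨y, hy, hd⟩ := hσside hx
    exact ⟨y, hy, by linarith⟩
end

section
/- Let X be a geodesic metric space and γ₁, γ₂ : [0,∞) → X be N-Morse geodesic rays with γ₁(0) = γ₂(0) = e. Let x₁ = γ₁(v₁), x₂ = γ₂(v₂), and let γ be a geodesic from x₁ to x₂. Then the geodesic triangle γ₁([0,v₁]) ∪ γ ∪ γ₂([0,v₂]) is 4·N(3,0)-slim, i.e., each side lies in the 4·N(3,0)-neighborhood of the union of the other two sides. -/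
open Set Metric Filter

/-- Reversal of a geodesic segment is a geodesic segment. -/
lemma geodesicOn_reverse {X : Type*} [MetricSpace X] {γ : ℝ → X} {L : ℝ}
    (hγ : IsGeodesicOn γ (Icc 0 L)) :
    IsGeodesicOn (fun t => γ (L - t)) (Icc 0 L) := by
  intro s hs t ht
  rw [hγ (L - s) ⟨by linarith [hs.1, hs.2], by linarith [hs.1]⟩
      (L - t) ⟨by linarith [ht.1, ht.2], by linarith [ht.1]⟩,
    show L - s - (L - t) = -(s - t) by ring, abs_neg]

/-- The concatenation of a geodesic `[e,z]` with a geodesic emanating from `z` that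
stays at distance at least `dist e z` from `e` is a `(3,0)`-quasigeodesic. -/
lemma concat_qg {X : Type*} [MetricSpace X] {σ g : ℝ → X} {ρ M : ℝ}
    (hρ0 : 0 ≤ ρ) (hM : 0 ≤ M)
    (hσ : IsGeodesicOn σ (Icc 0 ρ)) (hg : IsGeodesicOn g (Icc 0 M))
    (hlink : σ ρ = g 0)
    (hmin : ∀ u ∈ Icc 0 M, ρ ≤ dist (σ 0) (g u)) :
    IsQuasigeodesicOn 3 0 (fun s => if s ≤ ρ then σ s else g (s - ρ)) (Icc 0 (ρ + M)) := by
  have key : ∀ s ∈ Icc 0 (ρ + M), ∀ t ∈ Icc 0 (ρ + M), s ≤ t →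
      (1 / 3 : ℝ) * |s - t| - 0 ≤
        dist (if s ≤ ρ then σ s else g (s - ρ)) (if t ≤ ρ then σ t else g (t - ρ)) ∧
      dist (if s ≤ ρ then σ s else g (s - ρ)) (if t ≤ ρ then σ t else g (t - ρ)) ≤
        3 * |s - t| + 0 := by
    intro s hs t ht hst
    obtain ⟨hs0, hsT⟩ := hs
    obtain ⟨ht0, htT⟩ := ht
    rcases le_or_gt t ρ with htρ | htρ
    · rw [if_pos (hst.trans htρ), if_pos htρ, hσ s ⟨hs0, hst.trans htρ⟩ t ⟨ht0, htρ⟩]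
      have := abs_nonneg (s - t)
      constructor <;> linarith
    · rcases le_or_gt s ρ with hsρ | hsρ
      · rw [if_pos hsρ, if_neg (not_le.mpr htρ)]
        have hmem : t - ρ ∈ Icc (0:ℝ) M := ⟨by linarith, by linarith⟩
        have h1 : dist (σ s) (σ ρ) = ρ - s := by
          rw [hσ s ⟨hs0, hsρ⟩ ρ ⟨hρ0, le_refl ρ⟩, abs_of_nonpos (by linarith), neg_sub]
        have h2 : dist (g 0) (g (t - ρ)) = t - ρ := by
          rw [hg 0 ⟨le_refl 0, hM⟩ (t - ρ) hmem, zero_sub, abs_neg,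
            abs_of_nonneg (by linarith)]
        have h3 : dist (σ 0) (σ s) = s := by
          rw [hσ 0 ⟨le_refl 0, hρ0⟩ s ⟨hs0, hsρ⟩, zero_sub, abs_neg, abs_of_nonneg hs0]
        have h4 : ρ ≤ dist (σ 0) (g (t - ρ)) := hmin _ hmem
        rw [hlink] at h1
        have hup : dist (σ s) (g (t - ρ)) ≤ (ρ - s) + (t - ρ) := by
          have ht1 := dist_triangle (σ s) (g 0) (g (t - ρ))
          linarith
        have hlow1 : ρ - s ≤ dist (σ s) (g (t - ρ)) := by
          have ht2 := dist_triangle (σ 0) (σ s) (g (t - ρ))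
          linarith
        have hlow2 : (t - ρ) - (ρ - s) ≤ dist (σ s) (g (t - ρ)) := by
          have ht3 := dist_triangle (g 0) (σ s) (g (t - ρ))
          rw [dist_comm (g 0) (σ s)] at ht3
          linarith
        have habs : |s - t| = (ρ - s) + (t - ρ) := by
          rw [abs_of_nonpos (by linarith : s - t ≤ 0)]; ring
        rw [habs]
        constructor
        · rcases le_or_gt (t - ρ) (2 * (ρ - s)) with h | h
          · linarith
          · linarith
        · linarith
      · rw [if_neg (not_le.mpr hsρ), if_neg (not_le.mpr htρ),
          hg (s - ρ) ⟨by linarith, by linarith⟩ (t - ρ) ⟨by linarith, by linarith⟩,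
          show s - ρ - (t - ρ) = s - t by ring]
        have := abs_nonneg (s - t)
        constructor <;> linarith
  intro s hs t ht
  dsimp only
  rcases le_total s t with h | h
  · exact key s hs t ht h
  · obtain ⟨h1, h2⟩ := key t ht s hs h
    rw [dist_comm] at h1 h2
    rw [abs_sub_comm] at h1 h2
    exact ⟨h1, h2⟩

/-- Main work lemma: with `t₀` a minimizer of `dist e (γ ·)` on `[0,L]`, we get the
slimness statement for the side `γ₂` and for the part of `γ` after `t₀`. -/
lemma half_lemma {X : Type*} [MetricSpace X] (hX : GeodesicSpace X)
    (N : ℝ → ℝ → ℝ) (hN : MorseGauge N) (e : X)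
    (γ₁ γ₂ : ℝ → X)
    (hγ₁ : IsGeodesicOn γ₁ (Ici 0)) (hγ₂ : IsGeodesicOn γ₂ (Ici 0))
    (hM₁ : IsMorseOn N γ₁ (Ici 0)) (hM₂ : IsMorseOn N γ₂ (Ici 0))
    (h₁0 : γ₁ 0 = e) (h₂0 : γ₂ 0 = e)
    (v₁ v₂ : ℝ) (hv₁ : 0 ≤ v₁) (hv₂ : 0 ≤ v₂)
    (γ : ℝ → X) (L : ℝ) (hL0 : 0 ≤ L)
    (hγ : IsGeodesicOn γ (Icc 0 L)) (hγa : γ 0 = γ₁ v₁) (hγb : γ L = γ₂ v₂)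
    (t₀ : ℝ) (ht₀ : t₀ ∈ Icc 0 L)
    (hmin : ∀ t ∈ Icc 0 L, dist e (γ t₀) ≤ dist e (γ t)) :
    (∀ u ∈ Icc 0 v₂, ∃ y ∈ γ₁ '' Icc 0 v₁ ∪ γ '' Icc 0 L, dist (γ₂ u) y ≤ 4 * N 3 0) ∧
    (∀ t ∈ Icc t₀ L, ∃ y ∈ γ₁ '' Icc 0 v₁ ∪ γ₂ '' Icc 0 v₂, dist (γ t) y ≤ 4 * N 3 0) := by
  have hδ : 0 ≤ N 3 0 := hN 3 0 (by norm_num) le_rfl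
  set δ := N 3 0 with hδdef
  obtain ⟨ht₀0, ht₀L⟩ := ht₀
  obtain ⟨σ, hσ, hσ0, hσe⟩ := hX e (γ t₀)
  set ρ := dist e (γ t₀) with hρdef
  have hρ0 : 0 ≤ ρ := dist_nonneg
  -- distances along the rays
  have hd₁ : ∀ w, 0 ≤ w → dist e (γ₁ w) = w := by
    intro w hw
    rw [← h₁0, hγ₁ 0 self_mem_Ici w hw, zero_sub, abs_neg, abs_of_nonneg hw]
  have hd₂ : ∀ w, 0 ≤ w → dist e (γ₂ w) = w := by
    intro w hw
    rw [← h₂0, hγ₂ 0 self_mem_Ici w hw, zero_sub, abs_neg, abs_of_nonneg hw]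
  have hρv₁ : ρ ≤ v₁ := by
    have := hmin 0 ⟨le_rfl, hL0⟩
    rw [hγa, hd₁ v₁ hv₁] at this
    rw [hρdef]; exact this
  have hρv₂ : ρ ≤ v₂ := by
    have := hmin L ⟨hL0, le_rfl⟩
    rw [hγb, hd₂ v₂ hv₂] at this
    rw [hρdef]; exact this
  have hσ0' : ∀ s, 0 ≤ s → s ≤ ρ → dist e (σ s) = s := by
    intro s h0 h1
    rw [← hσ0, hσ 0 ⟨le_rfl, hρ0⟩ s ⟨h0, h1⟩, zero_sub, abs_neg, abs_of_nonneg h0]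
  -- the two concatenated quasigeodesics
  have hg₂ : IsGeodesicOn (fun u => γ (t₀ + u)) (Icc 0 (L - t₀)) := by
    intro u hu v hv
    rw [hγ (t₀ + u) ⟨by linarith [hu.1], by linarith [hu.2]⟩
        (t₀ + v) ⟨by linarith [hv.1], by linarith [hv.2]⟩,
      show t₀ + u - (t₀ + v) = u - v by ring]
  have hg₁ : IsGeodesicOn (fun u => γ (t₀ - u)) (Icc 0 t₀) := by
    intro u hu v hv
    rw [hγ (t₀ - u) ⟨by linarith [hu.2], by linarith [hu.1]⟩
        (t₀ - v) ⟨by linarith [hv.2], by linarith [hv.1]⟩,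
      show t₀ - u - (t₀ - v) = -(u - v) by ring, abs_neg]
  have hq₂ : IsQuasigeodesicOn 3 0 (fun s => if s ≤ ρ then σ s else γ (t₀ + (s - ρ)))
      (Icc 0 (ρ + (L - t₀))) :=
    concat_qg hρ0 (by linarith) hσ hg₂
      (by rw [hσe]; show γ t₀ = γ (t₀ + 0); rw [add_zero])
      (fun u hu => by
        rw [hσ0]; exact hmin (t₀ + u) ⟨by linarith [hu.1], by linarith [hu.2]⟩)
  have hq₁ : IsQuasigeodesicOn 3 0 (fun s => if s ≤ ρ then σ s else γ (t₀ - (s - ρ)))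
      (Icc 0 (ρ + t₀)) :=
    concat_qg hρ0 ht₀0 hσ hg₁
      (by rw [hσe]; show γ t₀ = γ (t₀ - 0); rw [sub_zero])
      (fun u hu => by
        rw [hσ0]; exact hmin (t₀ - u) ⟨by linarith [hu.2], by linarith [hu.1]⟩)
  -- evaluation of the concatenations on the γ-part
  have hceval₂ : ∀ t', t₀ ≤ t' → t' ≤ L →
      (if ρ + (t' - t₀) ≤ ρ then σ (ρ + (t' - t₀)) else γ (t₀ + (ρ + (t' - t₀) - ρ)))
        = γ t' := by
    intro t' h1 h2
    by_cases h : ρ + (t' - t₀) ≤ ρ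
    · have ht'e : t' = t₀ := le_antisymm (by linarith) h1
      rw [if_pos h, show ρ + (t' - t₀) = ρ by rw [ht'e]; ring, hσe, ht'e]
    · rw [if_neg h, show t₀ + (ρ + (t' - t₀) - ρ) = t' by ring]
  -- endpoints
  have hc₂a : (fun s => if s ≤ ρ then σ s else γ (t₀ + (s - ρ))) 0 ∈ γ₂ '' Ici 0 := by
    refine ⟨0, self_mem_Ici, ?_⟩
    simp only
    rw [if_pos hρ0, hσ0, h₂0]
  have hc₂T : (if ρ + (L - t₀) ≤ ρ then σ (ρ + (L - t₀)) else γ (t₀ + (ρ + (L - t₀) - ρ)))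
      = γ₂ v₂ := by
    rw [← hγb]; exact hceval₂ L ht₀L le_rfl
  have hc₂b : (fun s => if s ≤ ρ then σ s else γ (t₀ + (s - ρ))) (ρ + (L - t₀)) ∈ γ₂ '' Ici 0 :=
    ⟨v₂, hv₂, hc₂T.symm⟩
  have hc₁a : (fun s => if s ≤ ρ then σ s else γ (t₀ - (s - ρ))) 0 ∈ γ₁ '' Ici 0 := by
    refine ⟨0, self_mem_Ici, ?_⟩
    simp only
    rw [if_pos hρ0, hσ0, h₁0]
  have hc₁T : (if ρ + t₀ ≤ ρ then σ (ρ + t₀) else γ (t₀ - (ρ + t₀ - ρ))) = γ₁ v₁ := by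
    rw [← hγa]
    by_cases h : ρ + t₀ ≤ ρ
    · have h0 : t₀ = 0 := le_antisymm (by linarith) ht₀0
      rw [if_pos h, show ρ + t₀ = ρ by rw [h0]; ring, hσe, h0]
    · rw [if_neg h, show t₀ - (ρ + t₀ - ρ) = 0 by ring]
  have hc₁b : (fun s => if s ≤ ρ then σ s else γ (t₀ - (s - ρ))) (ρ + t₀) ∈ γ₁ '' Ici 0 :=
    ⟨v₁, hv₁, hc₁T.symm⟩
  -- Morse property applications
  have morse₂ : ∀ s ∈ Icc 0 (ρ + (L - t₀)), ∃ w, 0 ≤ w ∧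
      dist (if s ≤ ρ then σ s else γ (t₀ + (s - ρ))) (γ₂ w) ≤ δ := by
    intro s hs
    have happ := hM₂ 3 0 (by norm_num) le_rfl _ 0 (ρ + (L - t₀)) (by linarith) hq₂ hc₂a hc₂b
      ⟨s, hs, rfl⟩
    simp only [nbhd, Set.mem_setOf_eq] at happ
    obtain ⟨y, ⟨w, hw, rfl⟩, hd⟩ := happ
    exact ⟨w, hw, hd⟩
  have morse₁ : ∀ s ∈ Icc 0 (ρ + t₀), ∃ w, 0 ≤ w ∧
      dist (if s ≤ ρ then σ s else γ (t₀ - (s - ρ))) (γ₁ w) ≤ δ := by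
    intro s hs
    have happ := hM₁ 3 0 (by norm_num) le_rfl _ 0 (ρ + t₀) (by linarith) hq₁ hc₁a hc₁b
      ⟨s, hs, rfl⟩
    simp only [nbhd, Set.mem_setOf_eq] at happ
    obtain ⟨y, ⟨w, hw, rfl⟩, hd⟩ := happ
    exact ⟨w, hw, hd⟩
  -- points of σ are 2δ-close to the segment of γ₁
  have hσγ₁ : ∀ s, 0 ≤ s → s ≤ ρ → ∃ w', 0 ≤ w' ∧ w' ≤ v₁ ∧ dist (σ s) (γ₁ w') ≤ 2 * δ := by
    intro s h0 h1
    obtain ⟨w, hw0, hwd⟩ := morse₁ s ⟨h0, by linarith⟩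
    rw [if_pos h1] at hwd
    have hwb : w ≤ v₁ + δ := by
      have h2 := dist_triangle e (σ s) (γ₁ w)
      rw [hσ0' s h0 h1, hd₁ w hw0] at h2
      linarith
    refine ⟨min w v₁, le_min hw0 hv₁, min_le_right _ _, ?_⟩
    have h3 : dist (γ₁ w) (γ₁ (min w v₁)) ≤ δ := by
      rw [hγ₁ w hw0 (min w v₁) (le_min hw0 hv₁)]
      rcases le_total w v₁ with h | h
      · rw [min_eq_left h, sub_self, abs_zero]; exact hδ
      · rw [min_eq_right h, abs_of_nonneg (by linarith)]; linarith
    calc dist (σ s) (γ₁ (min w v₁)) ≤ dist (σ s) (γ₁ w) + dist (γ₁ w) (γ₁ (min w v₁)) :=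
        dist_triangle _ _ _
      _ ≤ 2 * δ := by linarith
  -- continuity
  have hc₂lip : LipschitzOnWith 3 (fun s => if s ≤ ρ then σ s else γ (t₀ + (s - ρ)))
      (Icc 0 (ρ + (L - t₀))) := by
    apply LipschitzOnWith.of_dist_le_mul
    intro x hx y hy
    have h2 := (hq₂ x hx y hy).2
    have h3 : ((3 : NNReal) : ℝ) = 3 := by norm_num
    rw [Real.dist_eq, h3]
    simp only at h2
    linarith
  have hc₂cont : ContinuousOn (fun s => dist e (if s ≤ ρ then σ s else γ (t₀ + (s - ρ))))
      (Icc 0 (ρ + (L - t₀))) := (continuous_const.dist continuous_id).comp_continuousOn hc₂lip.continuousOn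
  have hγlip : LipschitzOnWith 1 γ (Icc 0 L) := by
    apply LipschitzOnWith.of_dist_le_mul
    intro x hx y hy
    rw [hγ x hx y hy, Real.dist_eq]
    have h1 : ((1 : NNReal) : ℝ) = 1 := by norm_num
    rw [h1, one_mul]
  have hfcont : ContinuousOn (fun t => dist e (γ t)) (Icc 0 L) :=
    (continuous_const.dist continuous_id).comp_continuousOn hγlip.continuousOn
  constructor
  -- Part 1: the side γ₂
  · intro u hu
    have hIVT := intermediate_value_Icc (by linarith : (0:ℝ) ≤ ρ + (L - t₀)) hc₂cont
    have hf0 : dist e (if (0:ℝ) ≤ ρ then σ 0 else γ (t₀ + (0 - ρ))) = 0 := by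
      rw [if_pos hρ0, hσ0, dist_self]
    have hfT : dist e (if ρ + (L - t₀) ≤ ρ then σ (ρ + (L - t₀))
        else γ (t₀ + (ρ + (L - t₀) - ρ))) = v₂ := by
      rw [hc₂T, hd₂ v₂ hv₂]
    have humem : u ∈ (fun s => dist e (if s ≤ ρ then σ s else γ (t₀ + (s - ρ)))) ''
        Icc 0 (ρ + (L - t₀)) := by
      apply hIVT
      rw [hf0, hfT]
      exact hu
    obtain ⟨s, hsmem, hsu⟩ := humem
    simp only at hsu
    obtain ⟨w, hw0, hwd⟩ := morse₂ s hsmem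
    have hwu : |w - u| ≤ δ := by
      have h5 := abs_dist_sub_le (γ₂ w) (if s ≤ ρ then σ s else γ (t₀ + (s - ρ))) e
      rw [dist_comm (γ₂ w) e, hd₂ w hw0,
        dist_comm (if s ≤ ρ then σ s else γ (t₀ + (s - ρ))) e, hsu,
        dist_comm (γ₂ w) (if s ≤ ρ then σ s else γ (t₀ + (s - ρ)))] at h5
      exact h5.trans hwd
    have hguc : dist (γ₂ u) (if s ≤ ρ then σ s else γ (t₀ + (s - ρ))) ≤ 2 * δ := by
      have h6 := dist_triangle (γ₂ u) (γ₂ w) (if s ≤ ρ then σ s else γ (t₀ + (s - ρ)))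
      have h7 : dist (γ₂ u) (γ₂ w) ≤ δ := by
        rw [hγ₂ u hu.1 w hw0, abs_sub_comm]
        exact hwu
      rw [dist_comm (γ₂ w) (if s ≤ ρ then σ s else γ (t₀ + (s - ρ)))] at h6
      linarith
    by_cases hsρ : s ≤ ρ
    · rw [if_pos hsρ] at hguc
      obtain ⟨w', hw'0, hw'v, hw'd⟩ := hσγ₁ s hsmem.1 hsρ
      refine ⟨γ₁ w', Set.mem_union_left _ ⟨w', ⟨hw'0, hw'v⟩, rfl⟩, ?_⟩
      calc dist (γ₂ u) (γ₁ w') ≤ dist (γ₂ u) (σ s) + dist (σ s) (γ₁ w') := dist_triangle _ _ _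
        _ ≤ 4 * δ := by linarith
    · rw [if_neg hsρ] at hguc
      push_neg at hsρ
      refine ⟨γ (t₀ + (s - ρ)), Set.mem_union_right _
        ⟨t₀ + (s - ρ), ⟨by linarith [hsmem.1], by linarith [hsmem.2]⟩, rfl⟩, ?_⟩
      linarith
  -- Part 2: the part of γ after t₀
  · intro t ht
    obtain ⟨htt₀, htL⟩ := ht
    have ht0 : 0 ≤ t := le_trans ht₀0 htt₀
    have hsmem : ρ + (t - t₀) ∈ Icc (0:ℝ) (ρ + (L - t₀)) := ⟨by linarith, by linarith⟩
    obtain ⟨w, hw0, hwd⟩ := morse₂ (ρ + (t - t₀)) hsmem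
    rw [hceval₂ t htt₀ htL] at hwd
    by_cases hwv : w ≤ v₂ + 3 * δ
    · refine ⟨γ₂ (min w v₂), Set.mem_union_right _
        ⟨min w v₂, ⟨le_min hw0 hv₂, min_le_right _ _⟩, rfl⟩, ?_⟩
      have h3 : dist (γ₂ w) (γ₂ (min w v₂)) ≤ 3 * δ := by
        rw [hγ₂ w hw0 (min w v₂) (le_min hw0 hv₂)]
        rcases le_total w v₂ with h | h
        · rw [min_eq_left h, sub_self, abs_zero]; linarith
        · rw [min_eq_right h, abs_of_nonneg (by linarith)]; linarith
      calc dist (γ t) (γ₂ (min w v₂)) ≤ dist (γ t) (γ₂ w) + dist (γ₂ w) (γ₂ (min w v₂)) :=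
          dist_triangle _ _ _
        _ ≤ 4 * δ := by linarith
    · push_neg at hwv
      have hfar : v₂ ≤ dist e (γ t) := by
        have h2 := dist_triangle e (γ t) (γ₂ w)
        rw [hd₂ w hw0] at h2
        linarith
      have hIVT := intermediate_value_Icc htt₀ (hfcont.mono (Icc_subset_Icc ht₀0 htL))
      have hvmem : v₂ ∈ Icc (dist e (γ t₀)) (dist e (γ t)) := ⟨by rw [← hρdef]; exact hρv₂, hfar⟩
      obtain ⟨t', ht'mem, hft'⟩ := hIVT hvmem
      simp only at hft'
      obtain ⟨ht't₀, ht't⟩ := ht'mem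
      have ht'L : t' ≤ L := le_trans ht't htL
      have hs'mem : ρ + (t' - t₀) ∈ Icc (0:ℝ) (ρ + (L - t₀)) := ⟨by linarith, by linarith⟩
      obtain ⟨w', hw'0, hw'd⟩ := morse₂ (ρ + (t' - t₀)) hs'mem
      rw [hceval₂ t' ht't₀ ht'L] at hw'd
      have hw'v : |w' - v₂| ≤ δ := by
        have h5 := abs_dist_sub_le (γ₂ w') (γ t') e
        rw [dist_comm (γ₂ w') e, hd₂ w' hw'0, dist_comm (γ t') e, hft',
          dist_comm (γ₂ w') (γ t')] at h5
        exact h5.trans hw'd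
      have h6 : dist (γ t') (γ₂ v₂) ≤ 2 * δ := by
        have h7 := dist_triangle (γ t') (γ₂ w') (γ₂ v₂)
        have h8 : dist (γ₂ w') (γ₂ v₂) ≤ δ := by
          rw [hγ₂ w' hw'0 v₂ hv₂]
          exact hw'v
        linarith
      have h9 : dist (γ t') (γ L) = L - t' := by
        rw [hγ t' ⟨le_trans ht₀0 ht't₀, ht'L⟩ L ⟨hL0, le_rfl⟩,
          abs_of_nonpos (by linarith), neg_sub]
      have h10 : L - t' ≤ 2 * δ := by
        rw [← h9, hγb]; exact h6
      refine ⟨γ₂ v₂, Set.mem_union_right _ ⟨v₂, ⟨hv₂, le_rfl⟩, rfl⟩, ?_⟩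
      have h11 : dist (γ t) (γ₂ v₂) = L - t := by
        rw [← hγb, hγ t ⟨ht0, htL⟩ L ⟨hL0, le_rfl⟩, abs_of_nonpos (by linarith), neg_sub]
      rw [h11]; linarith

/-- a triangle with two N-Morse sides emanating from a common point
is 4·N(3,0)-slim. -/
theorem stmt1 {X : Type*} [MetricSpace X] (hX : GeodesicSpace X)
    (N : ℝ → ℝ → ℝ) (hN : MorseGauge N) (e : X)
    (γ₁ γ₂ : ℝ → X)
    (hγ₁ : IsGeodesicOn γ₁ (Ici 0)) (hγ₂ : IsGeodesicOn γ₂ (Ici 0))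
    (hM₁ : IsMorseOn N γ₁ (Ici 0)) (hM₂ : IsMorseOn N γ₂ (Ici 0))
    (h₁0 : γ₁ 0 = e) (h₂0 : γ₂ 0 = e)
    (v₁ v₂ : ℝ) (hv₁ : 0 ≤ v₁) (hv₂ : 0 ≤ v₂)
    (γ : ℝ → X) (L : ℝ) (hL : L = dist (γ₁ v₁) (γ₂ v₂))
    (hγ : IsGeodesicOn γ (Icc 0 L)) (hγa : γ 0 = γ₁ v₁) (hγb : γ L = γ₂ v₂) :
    γ₁ '' Icc 0 v₁ ⊆ nbhd (γ₂ '' Icc 0 v₂ ∪ γ '' Icc 0 L) (4 * N 3 0) ∧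
    γ₂ '' Icc 0 v₂ ⊆ nbhd (γ₁ '' Icc 0 v₁ ∪ γ '' Icc 0 L) (4 * N 3 0) ∧
    γ '' Icc 0 L ⊆ nbhd (γ₁ '' Icc 0 v₁ ∪ γ₂ '' Icc 0 v₂) (4 * N 3 0) := by
  have hL0 : 0 ≤ L := by rw [hL]; exact dist_nonneg
  have hγlip : LipschitzOnWith 1 γ (Icc 0 L) := by
    apply LipschitzOnWith.of_dist_le_mul
    intro x hx y hy
    rw [hγ x hx y hy, Real.dist_eq]
    have h1 : ((1 : NNReal) : ℝ) = 1 := by norm_num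
    rw [h1, one_mul]
  have hfcont : ContinuousOn (fun t => dist e (γ t)) (Icc 0 L) :=
    (continuous_const.dist continuous_id).comp_continuousOn hγlip.continuousOn
  obtain ⟨t₀, ht₀, hminOn⟩ := isCompact_Icc.exists_isMinOn ⟨0, left_mem_Icc.mpr hL0⟩ hfcont
  have hmin : ∀ t ∈ Icc 0 L, dist e (γ t₀) ≤ dist e (γ t) := fun t ht =>
    isMinOn_iff.mp hminOn t ht
  have H := half_lemma hX N hN e γ₁ γ₂ hγ₁ hγ₂ hM₁ hM₂ h₁0 h₂0 v₁ v₂ hv₁ hv₂ γ L hL0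
    hγ hγa hγb t₀ ht₀ hmin
  have hγ' : IsGeodesicOn (fun t => γ (L - t)) (Icc 0 L) := geodesicOn_reverse hγ
  have hγa' : (fun t => γ (L - t)) 0 = γ₂ v₂ := by simp only; rw [sub_zero, hγb]
  have hγb' : (fun t => γ (L - t)) L = γ₁ v₁ := by simp only; rw [sub_self, hγa]
  have ht₀' : L - t₀ ∈ Icc 0 L := ⟨by linarith [ht₀.2], by linarith [ht₀.1]⟩
  have hmin' : ∀ t ∈ Icc 0 L, dist e ((fun t => γ (L - t)) (L - t₀)) ≤
      dist e ((fun t => γ (L - t)) t) := by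
    intro t ht
    simp only
    rw [show L - (L - t₀) = t₀ by ring]
    exact hmin (L - t) ⟨by linarith [ht.2], by linarith [ht.1]⟩
  have H' := half_lemma hX N hN e γ₂ γ₁ hγ₂ hγ₁ hM₂ hM₁ h₂0 h₁0 v₂ v₁ hv₂ hv₁
    (fun t => γ (L - t)) L hL0 hγ' hγa' hγb' (L - t₀) ht₀' hmin'
  have himg : (fun t => γ (L - t)) '' Icc 0 L = γ '' Icc 0 L := by
    apply Set.Subset.antisymm
    · rintro x ⟨t, ht, rfl⟩
      exact ⟨L - t, ⟨by linarith [ht.2], by linarith [ht.1]⟩, rfl⟩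
    · rintro x ⟨t, ht, rfl⟩
      refine ⟨L - t, ⟨by linarith [ht.2], by linarith [ht.1]⟩, ?_⟩
      simp only
      rw [show L - (L - t) = t by ring]
  refine ⟨?_, ?_, ?_⟩
  · rintro x ⟨u, hu, rfl⟩
    obtain ⟨y, hy, hd⟩ := H'.1 u hu
    rw [himg] at hy
    exact ⟨y, hy, hd⟩
  · rintro x ⟨u, hu, rfl⟩
    obtain ⟨y, hy, hd⟩ := H.1 u hu
    exact ⟨y, hy, hd⟩
  · rintro x ⟨t, ht, rfl⟩
    by_cases htt : t₀ ≤ t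
    · obtain ⟨y, hy, hd⟩ := H.2 t ⟨htt, ht.2⟩
      exact ⟨y, hy, hd⟩
    · push_neg at htt
      obtain ⟨y, hy, hd⟩ := H'.2 (L - t) ⟨by linarith, by linarith [ht.1]⟩
      rw [show L - (L - t) = t by ring] at hd
      refine ⟨y, ?_, hd⟩
      rcases hy with h | h
      · exact Or.inr h
      · exact Or.inl h
end

section
/- Let X be a proper geodesic metric space, e ∈ X, N a Morse gauge, and let γ_x, γ_y : [0,∞) → X be N-Morse geodesic rays with γ_x(0) = γ_y(0) = e. Suppose R ∈ ℕ satisfies d(γ_x(R), γ_y(t)) > 4·N(3,0) for all t ≥ 0. For each n > R let γ_n be a geodesic from γ_x(n) to γ_y(n). Then some subsequence of (γ_n) converges uniformly on compact sets to a biinfinite geodesic γ : ℝ → X, and γ is contained in the 4·N(3,0)-neighborhood of γ_x ∪ γ_y. -/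
open Set Metric Filter Topology

private lemma quasi_of_le {X : Type*} [MetricSpace X] {K C : ℝ} {q : ℝ → X} {I : Set ℝ}
    (h : ∀ s ∈ I, ∀ t ∈ I, s ≤ t →
      (1 / K) * |s - t| - C ≤ dist (q s) (q t) ∧ dist (q s) (q t) ≤ K * |s - t| + C) :
    IsQuasigeodesicOn K C q I := by
  intro s hs t ht
  rcases le_total s t with hst | hst
  · exact h s hs t ht hst
  · have H := h t ht s hs hst
    rwa [dist_comm (q t) (q s), abs_sub_comm t s] at H

private lemma ray_image_closed {X : Type*} [MetricSpace X] {γ : ℝ → X}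
    (h : IsGeodesicOn γ (Ici 0)) : IsClosed (γ '' Ici 0) := by
  apply IsSeqClosed.isClosed
  intro x p hmem hlim
  choose s hs hγs using hmem
  have hsd : ∀ k, s k = dist (x k) (γ 0) := by
    intro k
    have H := h (s k) (hs k) 0 (mem_Ici.mpr le_rfl)
    rw [hγs k] at H
    rw [H, sub_zero, abs_of_nonneg (hs k)]
  have hslim : Tendsto s atTop (𝓝 (dist p (γ 0))) := by
    have H : Tendsto (fun k => dist (x k) (γ 0)) atTop (𝓝 (dist p (γ 0))) :=
      hlim.dist tendsto_const_nhds
    exact H.congr (fun k => (hsd k).symm)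
  have hT : (0:ℝ) ≤ dist p (γ 0) := dist_nonneg
  have h2 : Tendsto (fun k => γ (s k)) atTop (𝓝 (γ (dist p (γ 0)))) := by
    rw [tendsto_iff_dist_tendsto_zero]
    have heq : ∀ k, dist (γ (s k)) (γ (dist p (γ 0))) = |s k - dist p (γ 0)| :=
      fun k => h (s k) (hs k) (dist p (γ 0)) hT
    rw [show (fun k => dist (γ (s k)) (γ (dist p (γ 0)))) = fun k => |s k - dist p (γ 0)|
      from funext heq]
    have := (hslim.sub_const (dist p (γ 0))).abs
    simpa using this
  have h3 : Tendsto (fun k => γ (s k)) atTop (𝓝 p) := hlim.congr (fun k => (hγs k).symm)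
  exact ⟨dist p (γ 0), mem_Ici.mpr hT, tendsto_nhds_unique h2 h3⟩

private lemma key {X : Type*} [MetricSpace X] [ProperSpace X] (hX : GeodesicSpace X)
    (N : ℝ → ℝ → ℝ) (hN : MorseGauge N) (e : X) (γx γy : ℝ → X)
    (hγx : IsGeodesicOn γx (Ici 0)) (hγy : IsGeodesicOn γy (Ici 0))
    (hMx : IsMorseOn N γx (Ici 0)) (hMy : IsMorseOn N γy (Ici 0))
    (hx0 : γx 0 = e) (hy0 : γy 0 = e)
    (R : ℕ) (hR : ∀ t : ℝ, 0 ≤ t → 4 * N 3 0 < dist (γx (R : ℝ)) (γy t))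
    (n : ℕ) (σ : ℝ → X) (L : ℝ)
    (hL : L = dist (γx (n : ℝ)) (γy (n : ℝ)))
    (hσ : IsGeodesicOn σ (Icc 0 L)) (hσ0 : σ 0 = γx (n : ℝ)) (hσL : σ L = γy (n : ℝ)) :
    ∃ c, 0 ≤ c ∧ c ≤ L ∧ dist e (σ c) ≤ (R:ℝ) ∧ (n : ℝ) - R ≤ c ∧ (n : ℝ) - R ≤ L - c ∧
      ∀ t ∈ Icc (0:ℝ) L, σ t ∈ nbhd (γx '' Ici 0 ∪ γy '' Ici 0) (N 3 0) := by
  have hD : 0 ≤ N 3 0 := hN 3 0 (by norm_num) le_rfl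
  have hL0 : 0 ≤ L := hL ▸ dist_nonneg
  have hσcont : ContinuousOn σ (Icc 0 L) := by
    refine (LipschitzOnWith.of_dist_le_mul (K := 1) fun a ha b hb => ?_).continuousOn
    rw [hσ a ha b hb, Real.dist_eq]
    simp
  obtain ⟨c, hc, hmin0⟩ := isCompact_Icc.exists_isMinOn (nonempty_Icc.mpr hL0)
    ((continuous_const.dist continuous_id).comp_continuousOn hσcont)
  have hmin : ∀ b ∈ Icc (0:ℝ) L, dist e (σ c) ≤ dist e (σ b) := fun b hb =>
    isMinOn_iff.mp hmin0 b hb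
  have hc0 : 0 ≤ c := hc.1
  have hcL : c ≤ L := hc.2
  obtain ⟨η, hη, hη0, hηm⟩ := hX e (σ c)
  set m := dist e (σ c) with hmdef
  have hm0 : 0 ≤ m := dist_nonneg
  have hηd : ∀ r ∈ Icc (0:ℝ) m, dist e (η r) = r := by
    intro r hr
    rw [← hη0, hη 0 ⟨le_rfl, hm0⟩ r hr, zero_sub, abs_neg, abs_of_nonneg hr.1]
  -- ########## first quasigeodesic : from e to γy n ##########
  set M1 := m + (L - c) with hM1def
  have hM1m : m ≤ M1 := by rw [hM1def]; linarith
  have hM10 : 0 ≤ M1 := le_trans hm0 hM1m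
  set q1 : ℝ → X := fun r => if r ≤ m then η r else σ (c + (r - m)) with hq1def
  have hq1η : ∀ r, r ≤ m → q1 r = η r := fun r hr => if_pos hr
  have hq1σ : ∀ r, m < r → q1 r = σ (c + (r - m)) := fun r hr => if_neg (not_le.mpr hr)
  have hq1quasi : IsQuasigeodesicOn 3 0 q1 (Icc 0 M1) := by
    apply quasi_of_le
    intro s hs t ht hst
    rcases le_or_gt t m with h1 | h1
    · rw [hq1η s (le_trans hst h1), hq1η t h1, hη s ⟨hs.1, le_trans hst h1⟩ t ⟨ht.1, h1⟩]
      constructor <;> linarith [abs_nonneg (s - t)]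
    · rcases le_or_gt s m with h2 | h2
      · -- mixed case
        have htM : t ≤ m + (L - c) := hM1def ▸ ht.2
        have hbparam : c + (t - m) ∈ Icc (0:ℝ) L := ⟨by linarith, by linarith⟩
        rw [hq1η s h2, hq1σ t h1]
        have d1 : dist (η s) (σ c) = m - s := by
          rw [← hηm, hη s ⟨hs.1, h2⟩ m ⟨hm0, le_rfl⟩, abs_of_nonpos (by linarith)]
          ring
        have d2 : dist (σ c) (σ (c + (t - m))) = t - m := by
          rw [hσ c hc (c + (t - m)) hbparam, abs_of_nonpos (by linarith)]
          ring
        have d3 : m ≤ dist e (σ (c + (t - m))) := hmin _ hbparam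
        have d4 : dist e (η s) = s := hηd s ⟨hs.1, h2⟩
        have tri1 : dist (σ c) (σ (c + (t - m))) ≤
            dist (σ c) (η s) + dist (η s) (σ (c + (t - m))) := dist_triangle _ _ _
        have tri2 : dist e (σ (c + (t - m))) ≤
            dist e (η s) + dist (η s) (σ (c + (t - m))) := dist_triangle _ _ _
        have tri3 : dist (η s) (σ (c + (t - m))) ≤
            dist (η s) (σ c) + dist (σ c) (σ (c + (t - m))) := dist_triangle _ _ _
        rw [dist_comm (σ c) (η s)] at tri1
        have habs : |s - t| = t - s := by rw [abs_of_nonpos (by linarith)]; ring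
        rw [habs]
        constructor
        · rcases le_or_gt (t - m) (2 * (m - s)) with hcase | hcase
          · linarith
          · linarith
        · linarith
      · -- both beyond the corner
        have hsM : s ≤ m + (L - c) := hM1def ▸ hs.2
        have htM : t ≤ m + (L - c) := hM1def ▸ ht.2
        have hsp : c + (s - m) ∈ Icc (0:ℝ) L := ⟨by linarith, by linarith⟩
        have htp : c + (t - m) ∈ Icc (0:ℝ) L := ⟨by linarith, by linarith⟩
        rw [hq1σ s h2, hq1σ t h1, hσ _ hsp _ htp,
          show c + (s - m) - (c + (t - m)) = s - t by ring]
        constructor <;> linarith [abs_nonneg (s - t)]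
  have hq1start : q1 0 = e := by rw [hq1η 0 hm0, hη0]
  have hq1end : q1 M1 = γy (n:ℝ) := by
    rcases eq_or_lt_of_le hM1m with heq | hlt
    · have hLc : L = c := by
        have : m = m + (L - c) := hM1def ▸ heq
        linarith
      rw [← heq, hq1η m le_rfl, hηm, ← hLc, hσL]
    · have harg : c + (M1 - m) = L := by rw [hM1def]; ring
      rw [hq1σ M1 hlt, harg, hσL]
  have hQ1 : q1 '' Icc 0 M1 ⊆ nbhd (γy '' Ici 0) (N 3 0) :=
    hMy 3 0 (by norm_num) le_rfl q1 0 M1 hM10 hq1quasi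
      ⟨0, mem_Ici.mpr le_rfl, hy0.trans hq1start.symm⟩
      ⟨(n:ℝ), mem_Ici.mpr (Nat.cast_nonneg n), hq1end.symm⟩
  have hσy : ∀ t' ∈ Icc c L, σ t' ∈ nbhd (γy '' Ici 0) (N 3 0) := by
    intro t' ht'
    have hr : m + (t' - c) ∈ Icc (0:ℝ) M1 := ⟨by linarith [ht'.1], by rw [hM1def]; linarith [ht'.2]⟩
    have hv : q1 (m + (t' - c)) = σ t' := by
      rcases le_or_gt (m + (t' - c)) m with h | h
      · have ht'c : t' = c := le_antisymm (by linarith) ht'.1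
        rw [hq1η _ h, ht'c, show m + (c - c) = m by ring, hηm]
      · rw [hq1σ _ h]; congr 1; ring
    have := hQ1 ⟨m + (t' - c), hr, rfl⟩
    rwa [hv] at this
  have hηy : ∀ r ∈ Icc (0:ℝ) m, η r ∈ nbhd (γy '' Ici 0) (N 3 0) := by
    intro r hr
    have := hQ1 ⟨r, ⟨hr.1, le_trans hr.2 hM1m⟩, rfl⟩
    rwa [hq1η r hr.2] at this
  -- ########## second quasigeodesic : from γx n to e ##########
  set M2 := c + m with hM2def
  have hcM2 : c ≤ M2 := by rw [hM2def]; linarith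
  have hM20 : 0 ≤ M2 := le_trans hc0 hcM2
  set q2 : ℝ → X := fun r => if r ≤ c then σ r else η (m - (r - c)) with hq2def
  have hq2σ : ∀ r, r ≤ c → q2 r = σ r := fun r hr => if_pos hr
  have hq2η : ∀ r, c < r → q2 r = η (m - (r - c)) := fun r hr => if_neg (not_le.mpr hr)
  have hq2quasi : IsQuasigeodesicOn 3 0 q2 (Icc 0 M2) := by
    apply quasi_of_le
    intro s hs t ht hst
    rcases le_or_gt t c with h1 | h1
    · rw [hq2σ s (le_trans hst h1), hq2σ t h1,
        hσ s ⟨hs.1, le_trans (le_trans hst h1) hcL⟩ t ⟨ht.1, le_trans h1 hcL⟩]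
      constructor <;> linarith [abs_nonneg (s - t)]
    · rcases le_or_gt s c with h2 | h2
      · -- mixed case
        have htM : t ≤ c + m := hM2def ▸ ht.2
        have hb : m - (t - c) ∈ Icc (0:ℝ) m := ⟨by linarith, by linarith⟩
        rw [hq2σ s h2, hq2η t h1]
        have d1 : dist (σ s) (σ c) = c - s := by
          rw [hσ s ⟨hs.1, le_trans h2 hcL⟩ c hc, abs_of_nonpos (by linarith)]
          ring
        have d2 : dist (σ c) (η (m - (t - c))) = t - c := by
          rw [← hηm, hη m ⟨hm0, le_rfl⟩ _ hb,
            show m - (m - (t - c)) = t - c by ring, abs_of_nonneg (by linarith)]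
        have d3 : m ≤ dist e (σ s) := hmin s ⟨hs.1, le_trans h2 hcL⟩
        have d4 : dist e (η (m - (t - c))) = m - (t - c) := hηd _ hb
        have tri1 : dist (σ s) (σ c) ≤
            dist (σ s) (η (m - (t - c))) + dist (η (m - (t - c))) (σ c) := dist_triangle _ _ _
        have tri2 : dist e (σ s) ≤
            dist e (η (m - (t - c))) + dist (η (m - (t - c))) (σ s) := dist_triangle _ _ _
        have tri3 : dist (σ s) (η (m - (t - c))) ≤
            dist (σ s) (σ c) + dist (σ c) (η (m - (t - c))) := dist_triangle _ _ _
        rw [dist_comm (η (m - (t - c))) (σ c)] at tri1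
        rw [dist_comm (η (m - (t - c))) (σ s)] at tri2
        have habs : |s - t| = t - s := by rw [abs_of_nonpos (by linarith)]; ring
        rw [habs]
        constructor
        · rcases le_or_gt (c - s) (2 * (t - c)) with hcase | hcase
          · linarith
          · linarith
        · linarith
      · -- both beyond the corner
        have hsM : s ≤ c + m := hM2def ▸ hs.2
        have htM : t ≤ c + m := hM2def ▸ ht.2
        have hbs : m - (s - c) ∈ Icc (0:ℝ) m := ⟨by linarith, by linarith⟩
        have hbt : m - (t - c) ∈ Icc (0:ℝ) m := ⟨by linarith, by linarith⟩
        rw [hq2η s h2, hq2η t h1, hη _ hbs _ hbt,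
          show m - (s - c) - (m - (t - c)) = t - s by ring, abs_sub_comm t s]
        constructor <;> linarith [abs_nonneg (s - t)]
  have hq2start : q2 0 = γx (n:ℝ) := by rw [hq2σ 0 hc0, hσ0]
  have hq2end : q2 M2 = e := by
    rcases le_or_gt M2 c with h | h
    · have hm' : m = 0 := by
        have : c + m ≤ c := hM2def ▸ h
        linarith
      have hpe : e = σ c := by
        rw [← dist_eq_zero (x := e) (y := σ c), ← hmdef, hm']
      rw [hq2σ M2 h, hM2def, hm', add_zero, ← hpe]
    · rw [hq2η M2 h, show m - (M2 - c) = 0 by rw [hM2def]; ring, hη0]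
  have hQ2 : q2 '' Icc 0 M2 ⊆ nbhd (γx '' Ici 0) (N 3 0) :=
    hMx 3 0 (by norm_num) le_rfl q2 0 M2 hM20 hq2quasi
      ⟨(n:ℝ), mem_Ici.mpr (Nat.cast_nonneg n), hq2start.symm⟩
      ⟨0, mem_Ici.mpr le_rfl, hx0.trans hq2end.symm⟩
  have hσx : ∀ t' ∈ Icc (0:ℝ) c, σ t' ∈ nbhd (γx '' Ici 0) (N 3 0) := by
    intro t' ht'
    have := hQ2 ⟨t', ⟨ht'.1, le_trans ht'.2 hcM2⟩, rfl⟩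
    rwa [hq2σ t' ht'.2] at this
  have hηx : ∀ r ∈ Icc (0:ℝ) m, η r ∈ nbhd (γx '' Ici 0) (N 3 0) := by
    intro r hr
    have hr' : c + (m - r) ∈ Icc (0:ℝ) M2 := ⟨by linarith [hr.2], by rw [hM2def]; linarith [hr.1]⟩
    have hv : q2 (c + (m - r)) = η r := by
      rcases le_or_gt (c + (m - r)) c with h | h
      · have hrm : r = m := le_antisymm hr.2 (by linarith)
        rw [hq2σ _ h, show c + (m - r) = c by rw [hrm]; ring, ← hηm, hrm]
      · rw [hq2η _ h]; congr 1; ring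
    have := hQ2 ⟨c + (m - r), hr', rfl⟩
    rwa [hv] at this
  -- ########## m ≤ R ##########
  have hmR : m ≤ (R:ℝ) := by
    by_contra hcon
    push_neg at hcon
    have hRm : (R:ℝ) ∈ Icc (0:ℝ) m := ⟨Nat.cast_nonneg R, le_of_lt hcon⟩
    obtain ⟨u, hu, hdu⟩ := hηx (R:ℝ) hRm
    obtain ⟨v, hv, hdv⟩ := hηy (R:ℝ) hRm
    obtain ⟨s', hs', rfl⟩ := hu
    obtain ⟨t', ht', rfl⟩ := hv
    have h1 : dist e (γx s') = s' := by
      rw [← hx0, hγx 0 (mem_Ici.mpr le_rfl) s' hs', zero_sub, abs_neg, abs_of_nonneg hs']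
    have h2 : dist e (η (R:ℝ)) = (R:ℝ) := hηd _ hRm
    have h3 : |s' - (R:ℝ)| ≤ N 3 0 := by
      have H := abs_dist_sub_le (γx s') (η (R:ℝ)) e
      rw [dist_comm (γx s') e, h1, dist_comm (η (R:ℝ)) e, h2,
        dist_comm (γx s') (η (R:ℝ))] at H
      exact le_trans H hdu
    have h4 : dist (γx (R:ℝ)) (γx s') = |(R:ℝ) - s'| := hγx _ (mem_Ici.mpr (Nat.cast_nonneg R)) s' hs'
    have h5 : dist (γx (R:ℝ)) (γy t') ≤
        dist (γx (R:ℝ)) (γx s') + dist (γx s') (η (R:ℝ)) + dist (η (R:ℝ)) (γy t') :=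
      dist_triangle4 _ _ _ _
    have h6 := hR t' ht'
    rw [h4, abs_sub_comm (R:ℝ) s', dist_comm (γx s') (η (R:ℝ))] at h5
    linarith
  -- ########## distance bounds ##########
  have hσ0c : dist (σ 0) (σ c) = c := by
    rw [hσ 0 ⟨le_rfl, hL0⟩ c hc, zero_sub, abs_neg, abs_of_nonneg hc0]
  have hσcL : dist (σ c) (σ L) = L - c := by
    rw [hσ c hc L ⟨hL0, le_rfl⟩, abs_of_nonpos (by linarith)]
    ring
  have hnc : (n:ℝ) - R ≤ c := by
    have tri : dist e (σ 0) ≤ dist e (σ c) + dist (σ c) (σ 0) := dist_triangle _ _ _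
    have hde : dist e (σ 0) = (n:ℝ) := by
      rw [hσ0, ← hx0, hγx 0 (mem_Ici.mpr le_rfl) (n:ℝ) (mem_Ici.mpr (Nat.cast_nonneg n)), zero_sub, abs_neg,
        abs_of_nonneg (Nat.cast_nonneg n)]
    rw [hde, dist_comm (σ c) (σ 0), hσ0c, ← hmdef] at tri
    linarith
  have hnLc : (n:ℝ) - R ≤ L - c := by
    have tri : dist e (σ L) ≤ dist e (σ c) + dist (σ c) (σ L) := dist_triangle _ _ _
    have hde : dist e (σ L) = (n:ℝ) := by
      rw [hσL, ← hy0, hγy 0 (mem_Ici.mpr le_rfl) (n:ℝ) (mem_Ici.mpr (Nat.cast_nonneg n)), zero_sub, abs_neg,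
        abs_of_nonneg (Nat.cast_nonneg n)]
    rw [hde, hσcL, ← hmdef] at tri
    linarith
  refine ⟨c, hc0, hcL, hmR, hnc, hnLc, ?_⟩
  intro t ht
  rcases le_total t c with h | h
  · obtain ⟨y, hy, hd⟩ := hσx t ⟨ht.1, h⟩
    exact ⟨y, Or.inl hy, hd⟩
  · obtain ⟨y, hy, hd⟩ := hσy t ⟨h, ht.2⟩
    exact ⟨y, Or.inr hy, hd⟩
/-- the geodesics joining points escaping along two diverging N-Morse rays
subconverge (uniformly on compact sets, after reparameterization) to a biinfinite geodesic
lying in the 4·N(3,0)-neighborhood of the union of the rays. -/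
theorem stmt4 {X : Type*} [MetricSpace X] [ProperSpace X] (hX : GeodesicSpace X)
    (N : ℝ → ℝ → ℝ) (hN : MorseGauge N) (e : X)
    (γx γy : ℝ → X)
    (hγx : IsGeodesicOn γx (Ici 0)) (hγy : IsGeodesicOn γy (Ici 0))
    (hMx : IsMorseOn N γx (Ici 0)) (hMy : IsMorseOn N γy (Ici 0))
    (hx0 : γx 0 = e) (hy0 : γy 0 = e)
    (R : ℕ) (hR : ∀ t : ℝ, 0 ≤ t → 4 * N 3 0 < dist (γx (R : ℝ)) (γy t))
    (γn : ℕ → ℝ → X) (L : ℕ → ℝ) (hLd : ∀ n : ℕ, L n = dist (γx (n : ℝ)) (γy (n : ℝ)))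
    (hgn : ∀ n : ℕ, R < n →
      IsGeodesicOn (γn n) (Icc 0 (L n)) ∧ γn n 0 = γx (n : ℝ) ∧ γn n (L n) = γy (n : ℝ)) :
    ∃ φ : ℕ → ℕ, StrictMono φ ∧ (∀ k, R < φ k) ∧
      ∃ (c : ℕ → ℝ) (γ : ℝ → X), IsGeodesicOn γ univ ∧
        (∀ T > (0:ℝ), ∀ ε > (0:ℝ), ∃ k₀ : ℕ, ∀ k ≥ k₀,
          Icc (c k - T) (c k + T) ⊆ Icc 0 (L (φ k)) ∧
          ∀ s ∈ Icc (-T) T, dist (γn (φ k) (s + c k)) (γ s) ≤ ε) ∧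
        γ '' univ ⊆ nbhd (γx '' Ici 0 ∪ γy '' Ici 0) (4 * N 3 0) := by
  classical
  haveI : Nonempty X := ⟨e⟩
  have hD : (0:ℝ) ≤ N 3 0 := hN 3 0 (by norm_num) le_rfl
  have hkey : ∀ n : ℕ, ∃ c : ℝ, R < n →
      (0 ≤ c ∧ c ≤ L n ∧ dist e (γn n c) ≤ (R:ℝ) ∧ (n:ℝ) - R ≤ c ∧ (n:ℝ) - R ≤ L n - c ∧
        ∀ t' ∈ Icc (0:ℝ) (L n), γn n t' ∈ nbhd (γx '' Ici 0 ∪ γy '' Ici 0) (N 3 0)) := by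
    intro n
    by_cases h : R < n
    · obtain ⟨c, hc1, hc2, hc3, hc4, hc5, hc6⟩ :=
        key hX N hN e γx γy hγx hγy hMx hMy hx0 hy0 R hR n (γn n) (L n)
          (hLd n) (hgn n h).1 (hgn n h).2.1 (hgn n h).2.2
      exact ⟨c, fun _ => ⟨hc1, hc2, hc3, hc4, hc5, hc6⟩⟩
    · exact ⟨0, fun h' => absurd h' h⟩
  choose c0 hc0 using hkey
  set F : ℕ → ℚ → X := fun n q =>
    if R < n ∧ 0 ≤ (q:ℝ) + c0 n ∧ (q:ℝ) + c0 n ≤ L n then γn n ((q:ℝ) + c0 n) else e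
    with hFdef
  have hFmem : ∀ (n : ℕ) (q : ℚ), F n q ∈ closedBall e ((R:ℝ) + |(q:ℝ)|) := by
    intro n q
    rw [hFdef]
    dsimp only
    split_ifs with h
    · obtain ⟨hn, hd0, hdL⟩ := h
      obtain ⟨h1, h2, h3, -, -, -⟩ := hc0 n hn
      have hdist : dist (γn n ((q:ℝ) + c0 n)) (γn n (c0 n)) = |(q:ℝ)| := by
        rw [(hgn n hn).1 _ ⟨hd0, hdL⟩ _ ⟨h1, h2⟩, show (q:ℝ) + c0 n - c0 n = (q:ℝ) by ring]
      rw [mem_closedBall]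
      calc dist (γn n ((q:ℝ) + c0 n)) e
          ≤ dist (γn n ((q:ℝ) + c0 n)) (γn n (c0 n)) + dist (γn n (c0 n)) e :=
            dist_triangle _ _ _
        _ ≤ (R:ℝ) + |(q:ℝ)| := by
            rw [hdist, dist_comm]
            linarith
    · simp only [mem_closedBall, dist_self]
      positivity
  obtain ⟨g, -, ψ, hψ, hconv0⟩ :=
    (isCompact_univ_pi fun q : ℚ => isCompact_closedBall e ((R:ℝ) + |(q:ℝ)|)).tendsto_subseq
      (x := F) (fun n => Set.mem_univ_pi.mpr fun q => hFmem n q)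
  set φ : ℕ → ℕ := fun k => ψ (k + (R + 1)) with hφdef
  have hφmono : StrictMono φ := fun a b h => hψ (by omega)
  have hφge : ∀ k, k + R + 1 ≤ φ k := fun k =>
    le_trans (by omega : k + R + 1 ≤ k + (R + 1)) hψ.le_apply
  have hφR : ∀ k, R < φ k := fun k => by have := hφge k; omega
  have hφcast : ∀ k : ℕ, (k:ℝ) + 1 ≤ (φ k:ℝ) - R := by
    intro k
    have h : ((k + R + 1 : ℕ) : ℝ) ≤ (φ k : ℝ) := Nat.cast_le.mpr (hφge k)
    push_cast at h
    linarith
  have hs4 : ∀ k, (φ k:ℝ) - R ≤ c0 (φ k) := fun k => (hc0 (φ k) (hφR k)).2.2.2.1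
  have hs5 : ∀ k, (φ k:ℝ) - R ≤ L (φ k) - c0 (φ k) := fun k => (hc0 (φ k) (hφR k)).2.2.2.2.1
  have hs6 : ∀ k, ∀ t' ∈ Icc (0:ℝ) (L (φ k)),
      γn (φ k) t' ∈ nbhd (γx '' Ici 0 ∪ γy '' Ici 0) (N 3 0) :=
    fun k => (hc0 (φ k) (hφR k)).2.2.2.2.2
  have hdom : ∀ (s : ℝ) (k : ℕ), |s| ≤ (k:ℝ) + 1 →
      0 ≤ s + c0 (φ k) ∧ s + c0 (φ k) ≤ L (φ k) := by
    intro s k hk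
    have h1 := hφcast k
    have h2 := hs4 k
    have h3 := hs5 k
    constructor
    · linarith [neg_abs_le s]
    · linarith [le_abs_self s]
  have hGdist : ∀ (s t : ℝ) (k : ℕ), |s| ≤ (k:ℝ) + 1 → |t| ≤ (k:ℝ) + 1 →
      dist (γn (φ k) (s + c0 (φ k))) (γn (φ k) (t + c0 (φ k))) = |s - t| := by
    intro s t k hs ht
    have h := (hgn (φ k) (hφR k)).1 _ ⟨(hdom s k hs).1, (hdom s k hs).2⟩
      _ ⟨(hdom t k ht).1, (hdom t k ht).2⟩
    rwa [show s + c0 (φ k) - (t + c0 (φ k)) = s - t by ring] at h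
  have hGF : ∀ (q : ℚ) (k : ℕ), |(q:ℝ)| ≤ (k:ℝ) + 1 →
      F (φ k) q = γn (φ k) ((q:ℝ) + c0 (φ k)) := by
    intro q k hq
    rw [hFdef]
    dsimp only
    rw [if_pos ⟨hφR k, (hdom _ k hq).1, (hdom _ k hq).2⟩]
  have hqconv : ∀ q : ℚ, Tendsto (fun k => F (φ k) q) atTop (𝓝 (g q)) := by
    intro q
    have h1 : Tendsto (fun j => F (ψ j) q) atTop (𝓝 (g q)) := tendsto_pi_nhds.mp hconv0 q
    exact h1.comp (tendsto_add_atTop_nat (R + 1))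
  have hceil : ∀ (s : ℝ) (k : ℕ), ⌈|s|⌉₊ ≤ k → |s| ≤ (k:ℝ) + 1 := by
    intro s k hk
    have h := Nat.ceil_le.mp hk
    linarith
  have hCauchy : ∀ s : ℝ, CauchySeq (fun k => γn (φ k) (s + c0 (φ k))) := by
    intro s
    rw [Metric.cauchySeq_iff]
    intro ε hε
    obtain ⟨q, hq1, hq2⟩ := exists_rat_btwn (show s - ε / 8 < s + ε / 8 by linarith)
    have hqs : |(q:ℝ) - s| ≤ ε / 4 := by rw [abs_le]; constructor <;> linarith
    obtain ⟨N1, hN1⟩ := Metric.tendsto_atTop.mp (hqconv q) (ε / 8) (by linarith)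
    refine ⟨max N1 (max ⌈|s|⌉₊ ⌈|(q:ℝ)|⌉₊), fun j hj k hk => ?_⟩
    have hj1 : N1 ≤ j := le_trans (le_max_left _ _) hj
    have hk1 : N1 ≤ k := le_trans (le_max_left _ _) hk
    have hjs : |s| ≤ (j:ℝ) + 1 :=
      hceil s j (le_trans (le_trans (le_max_left _ _) (le_max_right N1 _)) hj)
    have hks : |s| ≤ (k:ℝ) + 1 :=
      hceil s k (le_trans (le_trans (le_max_left _ _) (le_max_right N1 _)) hk)
    have hjq : |(q:ℝ)| ≤ (j:ℝ) + 1 :=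
      hceil (q:ℝ) j (le_trans (le_trans (le_max_right _ _) (le_max_right N1 _)) hj)
    have hkq : |(q:ℝ)| ≤ (k:ℝ) + 1 :=
      hceil (q:ℝ) k (le_trans (le_trans (le_max_right _ _) (le_max_right N1 _)) hk)
    have e1 : dist (γn (φ j) (s + c0 (φ j))) (γn (φ j) ((q:ℝ) + c0 (φ j))) = |s - (q:ℝ)| :=
      hGdist s (q:ℝ) j hjs hjq
    have e2 : dist (γn (φ k) ((q:ℝ) + c0 (φ k))) (γn (φ k) (s + c0 (φ k))) = |(q:ℝ) - s| :=
      hGdist (q:ℝ) s k hkq hks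
    have f1 : dist (γn (φ j) ((q:ℝ) + c0 (φ j))) (g q) < ε / 8 := by
      have := hN1 j hj1
      rwa [hGF q j hjq] at this
    have f2 : dist (γn (φ k) ((q:ℝ) + c0 (φ k))) (g q) < ε / 8 := by
      have := hN1 k hk1
      rwa [hGF q k hkq] at this
    have tri : dist (γn (φ j) ((q:ℝ) + c0 (φ j))) (γn (φ k) ((q:ℝ) + c0 (φ k))) ≤
        dist (γn (φ j) ((q:ℝ) + c0 (φ j))) (g q) + dist (γn (φ k) ((q:ℝ) + c0 (φ k))) (g q) :=
      dist_triangle_right _ _ _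
    calc dist (γn (φ j) (s + c0 (φ j))) (γn (φ k) (s + c0 (φ k)))
        ≤ dist (γn (φ j) (s + c0 (φ j))) (γn (φ j) ((q:ℝ) + c0 (φ j)))
          + dist (γn (φ j) ((q:ℝ) + c0 (φ j))) (γn (φ k) ((q:ℝ) + c0 (φ k)))
          + dist (γn (φ k) ((q:ℝ) + c0 (φ k))) (γn (φ k) (s + c0 (φ k))) :=
          dist_triangle4 _ _ _ _
      _ < ε := by
          rw [e1, e2, abs_sub_comm s (q:ℝ)]
          linarith
  set γ : ℝ → X := fun s => limUnder atTop (fun k => γn (φ k) (s + c0 (φ k))) with hγdef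
  have hγt : ∀ s : ℝ, Tendsto (fun k => γn (φ k) (s + c0 (φ k))) atTop (𝓝 (γ s)) := fun s =>
    (hCauchy s).tendsto_limUnder
  have hgeo : IsGeodesicOn γ univ := by
    intro s _ t _
    have h1 : Tendsto (fun k => dist (γn (φ k) (s + c0 (φ k))) (γn (φ k) (t + c0 (φ k)))) atTop
        (𝓝 (dist (γ s) (γ t))) := (hγt s).dist (hγt t)
    have h2 : Tendsto (fun k => dist (γn (φ k) (s + c0 (φ k))) (γn (φ k) (t + c0 (φ k)))) atTop
        (𝓝 (|s - t|)) := by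
      apply tendsto_const_nhds.congr'
      filter_upwards [eventually_ge_atTop (max ⌈|s|⌉₊ ⌈|t|⌉₊)] with k hk
      exact (hGdist s t k (hceil s k (le_trans (le_max_left _ _) hk))
        (hceil t k (le_trans (le_max_right _ _) hk))).symm
    exact tendsto_nhds_unique h1 h2
  have hAx : IsClosed (γx '' Ici 0) := ray_image_closed hγx
  have hAy : IsClosed (γy '' Ici 0) := ray_image_closed hγy
  refine ⟨φ, hφmono, hφR, fun k => c0 (φ k), γ, hgeo, ?_, ?_⟩
  · intro T hT ε hε
    have hcov : Icc (-T) T ⊆ ⋃ y : ℝ, ball y (ε / 3) := fun s _ =>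
      mem_iUnion.mpr ⟨s, mem_ball_self (by linarith)⟩
    obtain ⟨net, hnet⟩ := isCompact_Icc.elim_finite_subcover (fun y : ℝ => ball y (ε / 3))
      (fun _ => isOpen_ball) hcov
    have hKex : ∀ y : ℝ, ∃ K : ℕ, ∀ k ≥ K, dist (γn (φ k) (y + c0 (φ k))) (γ y) < ε / 3 :=
      fun y => Metric.tendsto_atTop.mp (hγt y) (ε / 3) (by linarith)
    choose Kf hKf using hKex
    refine ⟨max (net.sup fun y => max (Kf y) ⌈|y|⌉₊) ⌈T⌉₊, fun k hk => ?_⟩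
    have hkT : T ≤ (k:ℝ) :=
      le_trans (Nat.le_ceil T) (Nat.cast_le.mpr (le_trans (le_max_right _ _) hk))
    constructor
    · intro r hr
      have h1 := hφcast k
      have h2 := hs4 k
      have h3 := hs5 k
      exact ⟨by linarith [hr.1], by linarith [hr.2]⟩
    · intro s hsmem
      have hsT : |s| ≤ T := abs_le.mpr ⟨hsmem.1, hsmem.2⟩
      obtain ⟨y, hynet, hsy⟩ := mem_iUnion₂.mp (hnet hsmem)
      have hyk : max (Kf y) ⌈|y|⌉₊ ≤ k :=
        le_trans (le_trans (Finset.le_sup (f := fun y => max (Kf y) ⌈|y|⌉₊) hynet) (le_max_left _ _)) hk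
      have hKk : Kf y ≤ k := le_trans (le_max_left _ _) hyk
      have hyabs : |y| ≤ (k:ℝ) + 1 := hceil y k (le_trans (le_max_right _ _) hyk)
      have hsabs : |s| ≤ (k:ℝ) + 1 := by linarith
      have hsyd : |s - y| < ε / 3 := by rwa [mem_ball, Real.dist_eq] at hsy
      have e1 : dist (γn (φ k) (s + c0 (φ k))) (γn (φ k) (y + c0 (φ k))) = |s - y| :=
        hGdist s y k hsabs hyabs
      have e2 : dist (γ y) (γ s) = |y - s| := hgeo y (mem_univ y) s (mem_univ s)
      have e3 := hKf y k hKk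
      calc dist (γn (φ k) (s + c0 (φ k))) (γ s)
          ≤ dist (γn (φ k) (s + c0 (φ k))) (γn (φ k) (y + c0 (φ k)))
            + dist (γn (φ k) (y + c0 (φ k))) (γ y) + dist (γ y) (γ s) :=
            dist_triangle4 _ _ _ _
        _ ≤ ε := by
            rw [e1, e2, abs_sub_comm y s]
            linarith
  · rintro x ⟨s, -, rfl⟩
    have hev : ∀ᶠ k in atTop,
        infDist (γn (φ k) (s + c0 (φ k))) (γx '' Ici 0 ∪ γy '' Ici 0) ≤ N 3 0 := by
      filter_upwards [eventually_ge_atTop ⌈|s|⌉₊] with k hk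
      have hsk := hceil s k hk
      obtain ⟨y, hy, hdy⟩ := hs6 k _ ⟨(hdom s k hsk).1, (hdom s k hsk).2⟩
      exact le_trans (infDist_le_dist_of_mem hy) hdy
    have h1 : Tendsto (fun k => infDist (γn (φ k) (s + c0 (φ k))) (γx '' Ici 0 ∪ γy '' Ici 0))
        atTop (𝓝 (infDist (γ s) (γx '' Ici 0 ∪ γy '' Ici 0))) :=
      ((continuous_infDist_pt _).tendsto _).comp (hγt s)
    have h2 : infDist (γ s) (γx '' Ici 0 ∪ γy '' Ici 0) ≤ N 3 0 := le_of_tendsto h1 hev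
    obtain ⟨y, hy, hyd⟩ := (hAx.union hAy).exists_infDist_eq_dist
      ⟨γx 0, Or.inl ⟨0, mem_Ici.mpr le_rfl, rfl⟩⟩ (γ s)
    exact ⟨y, hy, by rw [← hyd]; linarith⟩
end

section
/- Let X be a geodesic metric space, γ : ℝ → X a biinfinite geodesic with γ(0) a closest point on γ to a point e ∈ X, and γ₊ : [0,∞) → X a geodesic ray with γ₊(0) = e. Suppose the Hausdorff distance between γ([0,∞)) and γ₊ is at most K. Then for every t ≥ 6K, letting t' ≥ 0 be such that γ(t') is a closest point on γ to γ₊(t), the concatenation φ = [e, γ(0)] ∪ γ([0,t']) ∪ [γ(t'), γ₊(t)] (where the bracketed segments are geodesics) is a (5,0)-quasigeodesic. -/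
open Set Metric Filter

/-- the concatenation `[e,γ(0)] ∪ γ([0,t']) ∪ [γ(t'),γ₊(t)]` through
closest points is a (5,0)-quasigeodesic. -/
theorem stmt6 {X : Type*} [MetricSpace X] (hX : GeodesicSpace X) (e : X)
    (γ : ℝ → X) (hγ : IsGeodesicOn γ univ)
    (hcl : ∀ s : ℝ, dist e (γ 0) ≤ dist e (γ s))
    (γp : ℝ → X) (hγp : IsGeodesicOn γp (Ici 0)) (hγp0 : γp 0 = e)
    (K : ℝ) (hK : 0 < K)
    (hHaus : Metric.hausdorffDist (γ '' Ici 0) (γp '' Ici 0) ≤ K)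
    (hHausFin : EMetric.hausdorffEdist (γ '' Ici 0) (γp '' Ici 0) ≠ ⊤)
    (t : ℝ) (ht : 6 * K ≤ t)
    (t' : ℝ) (ht' : 0 ≤ t') (hcl' : ∀ s : ℝ, dist (γp t) (γ t') ≤ dist (γp t) (γ s))
    (c₁ c₃ : ℝ → X) (L₁ L₃ : ℝ)
    (hL₁ : L₁ = dist e (γ 0)) (hL₃ : L₃ = dist (γ t') (γp t))
    (hc₁ : IsGeodesicOn c₁ (Icc 0 L₁)) (hc₁a : c₁ 0 = e) (hc₁b : c₁ L₁ = γ 0)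
    (hc₃ : IsGeodesicOn c₃ (Icc 0 L₃)) (hc₃a : c₃ 0 = γ t') (hc₃b : c₃ L₃ = γp t)
    (φ : ℝ → X)
    (hφ₁ : ∀ s ∈ Icc 0 L₁, φ s = c₁ s)
    (hφ₂ : ∀ s ∈ Icc L₁ (L₁ + t'), φ s = γ (s - L₁))
    (hφ₃ : ∀ s ∈ Icc (L₁ + t') (L₁ + t' + L₃), φ s = c₃ (s - L₁ - t')) :
    IsQuasigeodesicOn 5 0 φ (Icc 0 (L₁ + t' + L₃)) := by
  have ht0 : 0 ≤ t := le_trans (by positivity) ht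
  have hL₁0 : 0 ≤ L₁ := hL₁ ▸ dist_nonneg
  have hL₃0 : 0 ≤ L₃ := hL₃ ▸ dist_nonneg
  have hdγ : ∀ r r' : ℝ, dist (γ r) (γ r') = |r - r'| :=
    fun r r' => hγ r trivial r' trivial
  -- L₁ ≤ K
  have hL₁K : L₁ ≤ K := by
    refine le_of_forall_pos_le_add (fun ε hε => ?_)
    have hlt : hausdorffDist (γp '' Ici 0) (γ '' Ici 0) < K + ε := by
      rw [hausdorffDist_comm]; linarith
    obtain ⟨y, hy, hdy⟩ := exists_dist_lt_of_hausdorffDist_lt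
      (s := γp '' Ici 0) (t := γ '' Ici 0)
      (⟨0, Set.self_mem_Ici, hγp0⟩ : e ∈ γp '' Ici 0) hlt
      (by rwa [EMetric.hausdorffEdist_comm])
    obtain ⟨u, -, rfl⟩ := hy
    exact le_of_lt (lt_of_le_of_lt (hL₁ ▸ hcl u) hdy)
  -- L₃ ≤ K
  have hL₃K : L₃ ≤ K := by
    refine le_of_forall_pos_le_add (fun ε hε => ?_)
    have hlt : hausdorffDist (γp '' Ici 0) (γ '' Ici 0) < K + ε := by
      rw [hausdorffDist_comm]; linarith
    obtain ⟨y, hy, hdy⟩ := exists_dist_lt_of_hausdorffDist_lt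
      (s := γp '' Ici 0) (t := γ '' Ici 0)
      (⟨t, Set.mem_Ici.mpr ht0, rfl⟩ : γp t ∈ γp '' Ici 0) hlt
      (by rwa [EMetric.hausdorffEdist_comm])
    obtain ⟨u, -, rfl⟩ := hy
    have : L₃ ≤ dist (γp t) (γ u) := by rw [hL₃, dist_comm (γ t') (γp t)]; exact hcl' u
    exact le_of_lt (lt_of_le_of_lt this hdy)
  -- dist e (γp t) = t
  have hdt : dist e (γp t) = t := by
    have h := hγp 0 Set.self_mem_Ici t (Set.mem_Ici.mpr ht0)
    rw [hγp0, zero_sub, abs_neg, abs_of_nonneg ht0] at h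
    exact h
  -- t' ≤ L₁ + t + L₃
  have ht'ub : t' ≤ L₁ + t + L₃ := by
    have h1 : dist (γ 0) (γ t') = t' := by
      rw [hdγ 0 t', zero_sub, abs_neg, abs_of_nonneg ht']
    have h2 := dist_triangle4 (γ 0) e (γp t) (γ t')
    rw [h1, dist_comm (γ 0) e, ← hL₁, hdt, dist_comm (γp t) (γ t'), ← hL₃] at h2
    linarith
  -- distances along c₁
  have hec₁ : ∀ x ∈ Icc (0:ℝ) L₁, dist e (c₁ x) = x := by
    intro x hx
    have h := hc₁ 0 ⟨le_refl (0:ℝ), hL₁0⟩ x hx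
    rw [hc₁a, zero_sub, abs_neg, abs_of_nonneg hx.1] at h
    exact h
  have hc₁γ0 : ∀ x ∈ Icc (0:ℝ) L₁, dist (c₁ x) (γ 0) = L₁ - x := by
    intro x hx
    have h := hc₁ x hx L₁ ⟨hL₁0, le_refl _⟩
    rw [hc₁b, abs_of_nonpos (by linarith [hx.2])] at h
    rw [h]; ring
  -- distances along c₃
  have hγc₃ : ∀ x ∈ Icc (0:ℝ) L₃, dist (γ t') (c₃ x) = x := by
    intro x hx
    have h := hc₃ 0 ⟨le_refl (0:ℝ), hL₃0⟩ x hx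
    rw [hc₃a, zero_sub, abs_neg, abs_of_nonneg hx.1] at h
    exact h
  have hc₃γp : ∀ x ∈ Icc (0:ℝ) L₃, dist (c₃ x) (γp t) = L₃ - x := by
    intro x hx
    have h := hc₃ x hx L₃ ⟨hL₃0, le_refl _⟩
    rw [hc₃b, abs_of_nonpos (by linarith [hx.2])] at h
    rw [h]; ring
  -- main estimate for ordered pairs
  have key : ∀ s u : ℝ, s ∈ Icc 0 (L₁ + t' + L₃) → u ∈ Icc 0 (L₁ + t' + L₃) → s ≤ u →
      (1/5 : ℝ) * (u - s) ≤ dist (φ s) (φ u) ∧ dist (φ s) (φ u) ≤ u - s := by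
    intro s u hs hu hsu
    rcases le_total u L₁ with hu1 | hu1
    · -- both on first segment
      have hsI : s ∈ Icc (0:ℝ) L₁ := ⟨hs.1, hsu.trans hu1⟩
      have huI : u ∈ Icc (0:ℝ) L₁ := ⟨hs.1.trans hsu, hu1⟩
      rw [hφ₁ s hsI, hφ₁ u huI, hc₁ s hsI u huI, abs_of_nonpos (by linarith)]
      constructor <;> linarith
    · rcases le_total u (L₁ + t') with hu2 | hu2
      · -- u on middle segment
        have huI : u ∈ Icc L₁ (L₁ + t') := ⟨hu1, hu2⟩
        rcases le_total s L₁ with hs1 | hs1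
        · -- case 12
          have hsI : s ∈ Icc (0:ℝ) L₁ := ⟨hs.1, hs1⟩
          rw [hφ₁ s hsI, hφ₂ u huI]
          have hr : dist (γ 0) (γ (u - L₁)) = u - L₁ := by
            rw [hdγ, zero_sub, abs_neg, abs_of_nonneg (by linarith)]
          have hup := dist_triangle (c₁ s) (γ 0) (γ (u - L₁))
          rw [hc₁γ0 s hsI, hr] at hup
          have hlow1 : L₁ - s ≤ dist (c₁ s) (γ (u - L₁)) := by
            have h3 : L₁ ≤ dist e (γ (u - L₁)) := hL₁ ▸ hcl _
            have h4 := dist_triangle e (c₁ s) (γ (u - L₁))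
            rw [hec₁ s hsI] at h4; linarith
          have hlow2 : (u - L₁) - (L₁ - s) ≤ dist (c₁ s) (γ (u - L₁)) := by
            have h4 := dist_triangle (γ 0) (c₁ s) (γ (u - L₁))
            rw [dist_comm (γ 0) (c₁ s), hc₁γ0 s hsI, hr] at h4; linarith
          constructor <;> linarith
        · -- case 22
          have hsI : s ∈ Icc L₁ (L₁ + t') := ⟨hs1, hsu.trans hu2⟩
          rw [hφ₂ s hsI, hφ₂ u huI, hdγ, abs_of_nonpos (by linarith)]
          constructor <;> linarith
      · -- u on last segment
        have huI : u ∈ Icc (L₁ + t') (L₁ + t' + L₃) := ⟨hu2, hu.2⟩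
        have hbI : u - L₁ - t' ∈ Icc (0:ℝ) L₃ := ⟨by linarith, by linarith [hu.2]⟩
        rcases le_total s L₁ with hs1 | hs1
        · -- case 13
          have hsI : s ∈ Icc (0:ℝ) L₁ := ⟨hs.1, hs1⟩
          rw [hφ₁ s hsI, hφ₃ u huI]
          have hr : dist (γ 0) (γ t') = t' := by
            rw [hdγ, zero_sub, abs_neg, abs_of_nonneg ht']
          have hup := dist_triangle4 (c₁ s) (γ 0) (γ t') (c₃ (u - L₁ - t'))
          rw [hc₁γ0 s hsI, hr, hγc₃ _ hbI] at hup
          have hlow := dist_triangle4 e (c₁ s) (c₃ (u - L₁ - t')) (γp t)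
          rw [hdt, hec₁ s hsI, hc₃γp _ hbI] at hlow
          constructor <;> linarith
        · rcases le_total s (L₁ + t') with hs2 | hs2
          · -- case 23
            have hsI : s ∈ Icc L₁ (L₁ + t') := ⟨hs1, hs2⟩
            rw [hφ₂ s hsI, hφ₃ u huI]
            have hr : dist (γ (s - L₁)) (γ t') = t' - (s - L₁) := by
              rw [hdγ, abs_of_nonpos (by linarith)]; ring
            have hup := dist_triangle (γ (s - L₁)) (γ t') (c₃ (u - L₁ - t'))
            rw [hr, hγc₃ _ hbI] at hup
            have hlow1 : u - L₁ - t' ≤ dist (γ (s - L₁)) (c₃ (u - L₁ - t')) := by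
              have h3 : L₃ ≤ dist (γp t) (γ (s - L₁)) := by
                rw [hL₃, dist_comm (γ t') (γp t)]; exact hcl' _
              have h4 := dist_triangle (γp t) (c₃ (u - L₁ - t')) (γ (s - L₁))
              rw [dist_comm (γp t) (c₃ (u - L₁ - t')), hc₃γp _ hbI,
                dist_comm (c₃ (u - L₁ - t')) (γ (s - L₁))] at h4
              linarith
            have hlow2 : (t' - (s - L₁)) - (u - L₁ - t') ≤
                dist (γ (s - L₁)) (c₃ (u - L₁ - t')) := by
              have h4 := dist_triangle (γ (s - L₁)) (c₃ (u - L₁ - t')) (γ t')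
              rw [dist_comm (c₃ (u - L₁ - t')) (γ t'), hγc₃ _ hbI] at h4
              linarith
            constructor <;> linarith
          · -- case 33
            have hsI : s ∈ Icc (L₁ + t') (L₁ + t' + L₃) := ⟨hs2, hs.2⟩
            have haI : s - L₁ - t' ∈ Icc (0:ℝ) L₃ := ⟨by linarith, by linarith [hs.2]⟩
            rw [hφ₃ s hsI, hφ₃ u huI, hc₃ _ haI _ hbI, abs_of_nonpos (by linarith)]
            constructor <;> linarith
  intro s hs u hu
  rcases le_total s u with h | h
  · obtain ⟨h1, h2⟩ := key s u hs hu h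
    rw [abs_of_nonpos (by linarith)]
    constructor <;> [linarith; nlinarith [dist_nonneg (α := X) (x := φ s) (y := φ u)]]
  · obtain ⟨h1, h2⟩ := key u s hu hs h
    rw [abs_of_nonneg (by linarith), dist_comm (φ s) (φ u)]
    constructor <;> [linarith; nlinarith [dist_nonneg (α := X) (x := φ u) (y := φ s)]]
end

section
/- For every Morse gauge N there exists K₂ > 0 depending only on N such that: in a proper geodesic metric space X with basepoint e, if λ₋ ≠ λ₊ are distinct points of the N-Morse stratum of the Morse boundary ∂X_e^{(N)}, and γ, γ' : ℝ → X are biinfinite geodesics both bi-asymptotic to (λ₋, λ₊) (with γ(0), γ'(0) closest points to e on γ, γ' respectively), then the Hausdorff distance between γ and γ' is less than K₂. -/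
open Set Metric Filter

lemma key_s8 {X : Type*} [MetricSpace X] (hX : GeodesicSpace X)
    {N : ℝ → ℝ → ℝ} {e : X} {β : ℝ → X}
    (hβ : IsGeodesicOn β (Ici 0)) (hβM : IsMorseOn N β (Ici 0)) (hβ0 : β 0 = e)
    {c : ℝ → X} (hc : IsGeodesicOn c (Ici 0))
    (hmin : ∀ t, 0 ≤ t → dist e (c 0) ≤ dist e (c t))
    {H : ℝ} (hH : ∀ t, 0 ≤ t → Metric.infDist (c t) (β '' Ici 0) ≤ H)
    (τ σ : ℝ) (hτ : 0 ≤ τ) (hσ : 0 ≤ σ) :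
    (∃ y ∈ β '' Ici 0, dist (c τ) y ≤ N 5 1) ∧
    (∃ w, dist (β σ) w ≤ 2 * N 5 1 ∧
      ((∃ t, 0 ≤ t ∧ w = c t) ∨
        dist e w + dist w (c 0) = dist e (c 0))) := by
  classical
  set S : Set X := β '' Ici 0 with hSdef
  have hSne : S.Nonempty := ⟨β 0, 0, mem_Ici.2 le_rfl, rfl⟩
  obtain ⟨seg, hseg, hseg0, hsegd⟩ := hX e (c 0)
  set d₀ : ℝ := dist e (c 0) with hd₀def
  have hd₀0 : 0 ≤ d₀ := dist_nonneg
  have hH0 : 0 ≤ H := le_trans Metric.infDist_nonneg (hH 0 le_rfl)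
  -- continuity of c on Ici 0
  have hccont : ContinuousOn c (Ici 0) := by
    have hlip : LipschitzOnWith 1 c (Ici 0) := by
      apply LipschitzOnWith.of_dist_le_mul
      intro x hx y hy
      rw [hc x hx y hy, NNReal.coe_one, one_mul, Real.dist_eq]
    exact hlip.continuousOn
  set W : ℝ := 2*d₀ + 25*H + 25 + τ + σ with hWdef
  have hW0 : (0:ℝ) ≤ W := by positivity
  obtain ⟨T, hTmem, hTmin⟩ :=
    (isCompact_Icc : IsCompact (Icc (0:ℝ) W)).exists_isMinOn ⟨0, le_rfl, hW0⟩
      (((Metric.continuous_infDist_pt S).comp_continuousOn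
          (hccont.mono Icc_subset_Ici_self)).sub
        ((continuous_id.div_const 5).continuousOn))
  have hT0 : 0 ≤ T := hTmem.1
  have hTW : T ≤ W := hTmem.2
  have hmin' : ∀ t ∈ Icc (0:ℝ) W,
      Metric.infDist (c T) S - T/5 ≤ Metric.infDist (c t) S - t/5 := fun t ht => hTmin ht
  have hTlarge : W - 5*H ≤ T := by
    have h1 := hmin' W ⟨hW0, le_rfl⟩
    have h2 := hH W hW0
    have h3 : (0:ℝ) ≤ Metric.infDist (c T) S := Metric.infDist_nonneg
    linarith
  have hTτ : τ ≤ T := by simp only [hWdef] at hTlarge; linarith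
  have hT9 : 9*H + 9 ≤ T := by simp only [hWdef] at hTlarge; linarith
  have hTd₀ : d₀ ≤ T := by simp only [hWdef] at hTlarge; linarith
  have hTpos : 0 < T := by simp only [hWdef] at hTlarge; linarith
  have hTσ : d₀ + σ ≤ T := by simp only [hWdef] at hTlarge; linarith
  -- approximate nearest point on β from c T
  have hfT : Metric.infDist (c T) S < Metric.infDist (c T) S + 1 := by linarith
  obtain ⟨p₂, hp₂S, hp₂⟩ := (Metric.infDist_lt_iff hSne).1 hfT
  obtain ⟨jmp, hjmp, hjmp0, hjmpd⟩ := hX (c T) p₂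
  set h' : ℝ := dist (c T) p₂ with hh'def
  have hh'1 : Metric.infDist (c T) S ≤ h' := Metric.infDist_le_dist_of_mem hp₂S
  have hh'2 : h' ≤ Metric.infDist (c T) S + 1 := le_of_lt hp₂
  have hh'H : h' ≤ H + 1 := le_trans hh'2 (by linarith [hH T hT0])
  have hh'0 : 0 ≤ h' := dist_nonneg
  set L : ℝ := d₀ + T + h' with hLdef
  set q : ℝ → X := fun l => if l < d₀ then seg l else if l < d₀ + T then c (l - d₀)
    else jmp (l - d₀ - T) with hqdef
  -- basic piece facts
  have hsege : ∀ a, 0 ≤ a → a ≤ d₀ → dist e (seg a) = a := by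
    intro a h1 h2
    have := hseg 0 ⟨le_rfl, hd₀0⟩ a ⟨h1, h2⟩
    rw [hseg0] at this
    rw [this, abs_of_nonpos (by linarith)]; ring
  have hsegc : ∀ a, 0 ≤ a → a ≤ d₀ → dist (seg a) (c 0) = d₀ - a := by
    intro a h1 h2
    have := hseg a ⟨h1, h2⟩ d₀ ⟨hd₀0, le_rfl⟩
    rw [hsegd] at this
    rw [this, abs_of_nonpos (by linarith)]; ring
  have hjmp1 : ∀ z, 0 ≤ z → z ≤ h' → dist (c T) (jmp z) = z := by
    intro z h1 h2
    have := hjmp 0 ⟨le_rfl, hh'0⟩ z ⟨h1, h2⟩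
    rw [hjmp0] at this
    rw [this, abs_of_nonpos (by linarith)]; ring
  have hjmp2 : ∀ z, 0 ≤ z → z ≤ h' → dist (jmp z) p₂ = h' - z := by
    intro z h1 h2
    have := hjmp z ⟨h1, h2⟩ h' ⟨hh'0, le_rfl⟩
    rw [hjmpd] at this
    rw [this, abs_of_nonpos (by linarith)]; ring
  have hcdist : ∀ s, 0 ≤ s → ∀ t, 0 ≤ t → s ≤ t → dist (c s) (c t) = t - s := by
    intro s h1 t h2 h3
    rw [hc s h1 t h2, abs_of_nonpos (by linarith)]; ring
  -- cross-piece estimates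
  have EAB : ∀ a, 0 ≤ a → a ≤ d₀ → ∀ t, 0 ≤ t → t ≤ T →
      (d₀ - a ≤ dist (seg a) (c t) ∧ t - (d₀ - a) ≤ dist (seg a) (c t) ∧
        dist (seg a) (c t) ≤ (d₀ - a) + t) := by
    intro a ha1 ha2 t ht1 ht2
    have h1 : dist e (c t) ≤ dist e (seg a) + dist (seg a) (c t) := dist_triangle _ _ _
    have h2 := hmin t ht1
    have h3 : dist (c 0) (c t) = t := by
      have := hcdist 0 le_rfl t ht1 ht1; simpa using this
    have h4 : dist (c 0) (c t) ≤ dist (c 0) (seg a) + dist (seg a) (c t) := dist_triangle _ _ _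
    have h5 : dist (seg a) (c 0) = d₀ - a := hsegc a ha1 ha2
    have h6 : dist (seg a) (c t) ≤ dist (seg a) (c 0) + dist (c 0) (c t) := dist_triangle _ _ _
    have h7 : dist e (seg a) = a := hsege a ha1 ha2
    have h8 : dist (c 0) (seg a) = d₀ - a := by rw [dist_comm]; exact h5
    exact ⟨by linarith, by linarith, by linarith⟩
  have EAC : ∀ a, 0 ≤ a → a ≤ d₀ → ∀ z, 0 ≤ z → z ≤ h' →
      (((d₀ - a) + T)/3 - z ≤ dist (seg a) (jmp z) ∧
        dist (seg a) (jmp z) ≤ (d₀ - a) + T + z) := by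
    intro a ha1 ha2 z hz1 hz2
    have hE := EAB a ha1 ha2 T hT0 le_rfl
    have hj := hjmp1 z hz1 hz2
    have tri1 : dist (seg a) (c T) ≤ dist (seg a) (jmp z) + dist (jmp z) (c T) :=
      dist_triangle _ _ _
    have tri2 : dist (seg a) (jmp z) ≤ dist (seg a) (c T) + dist (c T) (jmp z) :=
      dist_triangle _ _ _
    have hjc : dist (jmp z) (c T) = z := by rw [dist_comm]; exact hj
    have maxb : ((d₀ - a) + T)/3 ≤ dist (seg a) (c T) := by
      rcases le_or_gt (2*(d₀ - a)) T with h | h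
      · linarith [hE.2.1]
      · linarith [hE.1]
    exact ⟨by linarith, by linarith [hE.2.2]⟩
  have hfT1 : ∀ t, 0 ≤ t → t ≤ T →
      Metric.infDist (c T) S - (T - t)/5 ≤ Metric.infDist (c t) S := by
    intro t h1 h2
    have := hmin' t ⟨h1, le_trans h2 hTW⟩
    linarith
  have EBC : ∀ t, 0 ≤ t → t ≤ T → ∀ z, 0 ≤ z → z ≤ h' →
      ((T - t) - z ≤ dist (c t) (jmp z) ∧ z - (T - t)/5 - 1 ≤ dist (c t) (jmp z) ∧
        dist (c t) (jmp z) ≤ (T - t) + z) := by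
    intro t ht1 ht2 z hz1 hz2
    have h1 : dist (c t) (c T) = T - t := hcdist t ht1 T hT0 ht2
    have hj := hjmp1 z hz1 hz2
    have tri1 : dist (c t) (c T) ≤ dist (c t) (jmp z) + dist (jmp z) (c T) := dist_triangle _ _ _
    have hjc : dist (jmp z) (c T) = z := by rw [dist_comm]; exact hj
    have h3 : Metric.infDist (c t) S ≤ dist (c t) p₂ := Metric.infDist_le_dist_of_mem hp₂S
    have h4 : dist (c t) p₂ ≤ dist (c t) (jmp z) + dist (jmp z) p₂ := dist_triangle _ _ _
    have h5 := hfT1 t ht1 ht2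
    have h6 := hjmp2 z hz1 hz2
    have tri2 : dist (c t) (jmp z) ≤ dist (c t) (c T) + dist (c T) (jmp z) := dist_triangle _ _ _
    exact ⟨by linarith, by linarith, by linarith⟩
  -- piece description
  have qdesc : ∀ l, 0 ≤ l → l ≤ L →
      (0 ≤ l ∧ l < d₀ ∧ q l = seg l) ∨ (d₀ ≤ l ∧ l < d₀ + T ∧ q l = c (l - d₀)) ∨
        (d₀ + T ≤ l ∧ l ≤ L ∧ q l = jmp (l - d₀ - T)) := by
    intro l h1 h2
    by_cases hb1 : l < d₀
    · exact Or.inl ⟨h1, hb1, by simp only [hqdef]; rw [if_pos hb1]⟩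
    · by_cases hb2 : l < d₀ + T
      · exact Or.inr (Or.inl ⟨not_lt.1 hb1, hb2, by
          simp only [hqdef]; rw [if_neg hb1, if_pos hb2]⟩)
      · exact Or.inr (Or.inr ⟨not_lt.1 hb2, h2, by
          simp only [hqdef]; rw [if_neg hb1, if_neg hb2]⟩)
  -- main pairwise bounds
  have main : ∀ l₁, 0 ≤ l₁ → l₁ ≤ L → ∀ l₂, 0 ≤ l₂ → l₂ ≤ L → l₁ ≤ l₂ →
      (l₂ - l₁)/5 - 1 ≤ dist (q l₁) (q l₂) ∧ dist (q l₁) (q l₂) ≤ l₂ - l₁ := by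
    intro l₁ ha1 ha2 l₂ hb1 hb2 hab
    rcases qdesc l₁ ha1 ha2 with ⟨h1a, h1b, h1q⟩ | ⟨h1a, h1b, h1q⟩ | ⟨h1a, h1b, h1q⟩ <;>
      rcases qdesc l₂ hb1 hb2 with ⟨h2a, h2b, h2q⟩ | ⟨h2a, h2b, h2q⟩ | ⟨h2a, h2b, h2q⟩
    · -- seg seg
      rw [h1q, h2q]
      have hd := hseg l₁ ⟨h1a, le_of_lt h1b⟩ l₂ ⟨h2a, le_of_lt h2b⟩
      rw [hd, abs_of_nonpos (by linarith)]
      constructor <;> linarith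
    · -- seg c
      rw [h1q, h2q]
      have hE := EAB l₁ h1a (le_of_lt h1b) (l₂ - d₀) (by linarith) (by linarith)
      constructor
      · rcases le_or_gt (2*(d₀ - l₁)) (l₂ - d₀) with h | h
        · linarith [hE.2.1]
        · linarith [hE.1]
      · linarith [hE.2.2]
    · -- seg jmp
      rw [h1q, h2q]
      have hE := EAC l₁ h1a (le_of_lt h1b) (l₂ - d₀ - T) (by linarith) (by
        simp only [hLdef] at h2b; linarith)
      constructor
      · linarith [hE.1, hh'H]
      · linarith [hE.2]
    · -- c seg : impossible
      exfalso; linarith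
    · -- c c
      rw [h1q, h2q]
      have hd := hcdist (l₁ - d₀) (by linarith) (l₂ - d₀) (by linarith) (by linarith)
      rw [hd]
      constructor <;> linarith
    · -- c jmp
      rw [h1q, h2q]
      have hE := EBC (l₁ - d₀) (by linarith) (by linarith) (l₂ - d₀ - T) (by linarith) (by
        simp only [hLdef] at hb2; linarith)
      constructor
      · rcases le_or_gt (T - (l₁ - d₀)) (2*(l₂ - d₀ - T)) with h | h
        · linarith [hE.2.1]
        · linarith [hE.1]
      · linarith [hE.2.2]
    · -- jmp seg : impossible
      exfalso; linarith
    · -- jmp c : impossible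
      exfalso; linarith
    · -- jmp jmp
      rw [h1q, h2q]
      have hd := hjmp (l₁ - d₀ - T) ⟨by linarith, by simp only [hLdef] at ha2; linarith⟩
        (l₂ - d₀ - T) ⟨by linarith, by simp only [hLdef] at hb2; linarith⟩
      rw [hd, abs_of_nonpos (by linarith)]
      constructor <;> linarith
  have hL0 : (0:ℝ) ≤ L := by simp only [hLdef]; linarith
  have hqg : IsQuasigeodesicOn 5 1 q (Icc 0 L) := by
    intro s hs t ht
    rcases le_total s t with hst | hst
    · have hm := main s hs.1 hs.2 t ht.1 ht.2 hst
      rw [abs_of_nonpos (by linarith)]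
      constructor
      · linarith [hm.1]
      · linarith [hm.2]
    · have hm := main t ht.1 ht.2 s hs.1 hs.2 hst
      rw [abs_of_nonneg (by linarith), dist_comm (q s) (q t)]
      constructor
      · linarith [hm.1]
      · linarith [hm.2]
  have hq0 : q 0 = e := by
    by_cases h0 : (0:ℝ) < d₀
    · simp only [hqdef]; rw [if_pos h0]; exact hseg0
    · have hd0 : d₀ = 0 := le_antisymm (not_lt.1 h0) hd₀0
      simp only [hqdef]
      rw [if_neg h0, if_pos (by rw [hd0]; simpa using hTpos)]
      have : (0:ℝ) - d₀ = 0 := by rw [hd0]; ring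
      rw [this]
      have : dist e (c 0) = 0 := by rw [← hd₀def, hd0]
      exact (dist_eq_zero.1 this).symm
  have hq0mem : q 0 ∈ S := by
    rw [hq0, ← hβ0]; exact ⟨0, mem_Ici.2 le_rfl, rfl⟩
  have hqLmem : q L ∈ S := by
    have hv : q L = jmp (L - d₀ - T) := by
      simp only [hqdef]
      rw [if_neg (by simp only [hLdef]; push_neg; linarith),
        if_neg (by simp only [hLdef]; push_neg; linarith)]
    rw [hv]
    have : L - d₀ - T = h' := by simp only [hLdef]; ring
    rw [this, hjmpd]
    exact hp₂S
  have hsub := hβM 5 1 (by norm_num) (by norm_num) q 0 L hL0 hqg hq0mem hqLmem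
  have hqval : ∀ u, 0 ≤ u → u ≤ T → q (d₀ + u) = c u := by
    intro u h1 h2
    by_cases hu : d₀ + u < d₀ + T
    · simp only [hqdef]
      rw [if_neg (by push_neg; linarith), if_pos hu]
      congr 1; ring
    · have huT : u = T := le_antisymm h2 (by linarith [not_lt.1 hu])
      simp only [hqdef]
      rw [if_neg (by push_neg; linarith), if_neg hu]
      have h3 : d₀ + u - d₀ - T = 0 := by rw [huT]; ring
      rw [h3, hjmp0, huT]
  constructor
  · -- first conclusion
    have hmem : d₀ + τ ∈ Icc 0 L := ⟨by linarith, by simp only [hLdef]; linarith⟩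
    have hin := hsub ⟨d₀ + τ, hmem, rfl⟩
    rw [hqval τ hτ hTτ] at hin
    exact hin
  · -- second conclusion
    have hβd : ∀ u, 0 ≤ u → dist e (β u) = u := by
      intro u hu
      rw [← hβ0]
      have := hβ 0 (mem_Ici.2 le_rfl) u (mem_Ici.2 hu)
      rw [this, abs_of_nonpos (by linarith)]; ring
    have key2 : ∀ w, w ∈ q '' Icc 0 L → dist e w = σ →
        dist (β σ) w ≤ 2 * N 5 1 := by
      intro w hw hew
      obtain ⟨y, hyS, hyd⟩ := hsub hw
      obtain ⟨s₂, hs₂0, hs₂⟩ := hyS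
      have hey : dist e y = s₂ := by rw [← hs₂]; exact hβd s₂ hs₂0
      have habs : |dist w e - dist y e| ≤ dist w y := abs_dist_sub_le w y e
      rw [dist_comm w e, dist_comm y e, hew, hey] at habs
      have hbb : dist (β σ) (β s₂) = |σ - s₂| := hβ σ hσ s₂ hs₂0
      have h1 : dist (β σ) w ≤ dist (β σ) (β s₂) + dist (β s₂) w := dist_triangle _ _ _
      rw [hbb, hs₂] at h1
      calc dist (β σ) w ≤ |σ - s₂| + dist y w := h1
        _ ≤ N 5 1 + N 5 1 :=
            add_le_add (le_trans habs hyd) (by rw [dist_comm]; exact hyd)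
        _ = 2 * N 5 1 := by ring
    rcases le_or_gt σ d₀ with hσd | hσd
    · -- on the initial segment (or its endpoint)
      rcases qdesc σ hσ (by simp only [hLdef]; linarith) with ⟨_, hlt, hqσ⟩ |
        ⟨hge, _, hqσ⟩ | ⟨hge, _, _⟩
      · refine ⟨q σ, key2 (q σ) ⟨σ, ⟨hσ, by simp only [hLdef]; linarith⟩, rfl⟩ (by
          rw [hqσ]; exact hsege σ hσ (le_of_lt hlt)), Or.inr ?_⟩
        rw [hqσ, hsege σ hσ (le_of_lt hlt), hsegc σ hσ (le_of_lt hlt)]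
        ring
      · have hσd₀ : σ = d₀ := le_antisymm hσd hge
        refine ⟨q σ, key2 (q σ) ⟨σ, ⟨hσ, by simp only [hLdef]; linarith⟩, rfl⟩ ?_,
          Or.inl ⟨σ - d₀, by linarith, by rw [hqσ]⟩⟩
        rw [hqσ]
        have : σ - d₀ = 0 := by rw [hσd₀]; ring
        rw [this, ← hd₀def, hσd₀]
      · exfalso; linarith
    · -- via intermediate value theorem on [0, T]
      have hgcont : ContinuousOn (fun u => dist e (c u)) (Icc 0 T) :=
        (continuous_const.dist continuous_id).comp_continuousOn
          (hccont.mono Icc_subset_Ici_self)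
      have hgT : σ ≤ dist e (c T) := by
        have h1 : dist (c 0) (c T) = T := by simpa using hcdist 0 le_rfl T hT0 hT0
        have h2 : dist (c 0) (c T) ≤ dist (c 0) e + dist e (c T) := dist_triangle _ _ _
        have h3 : dist (c 0) e = d₀ := by rw [dist_comm]
        linarith
      have hmem : σ ∈ Icc (dist e (c 0)) (dist e (c T)) := ⟨le_of_lt hσd, hgT⟩
      obtain ⟨u, hu, hgu⟩ := intermediate_value_Icc hT0 hgcont hmem
      refine ⟨c u, key2 (c u) ⟨d₀ + u, ⟨by linarith [hu.1], by
        simp only [hLdef]; linarith [hu.2]⟩, hqval u hu.1 hu.2⟩ hgu, Or.inl ⟨u, hu.1, rfl⟩⟩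

lemma corner {X : Type*} [MetricSpace X] (e : X) {α β g : ℝ → X} {δ d₀ : ℝ} (hδ : 0 ≤ δ)
    (hg : IsGeodesicOn g univ) (hd₀ : d₀ = dist e (g 0))
    (hαd : ∀ s, 0 ≤ s → dist e (α s) = s)
    (K2α : ∀ s, 0 ≤ s → ∃ w, dist (α s) w ≤ 2*δ ∧
      ((∃ t, 0 ≤ t ∧ w = g (-t)) ∨ dist e w + dist w (g 0) = d₀))
    (K2β : ∀ s, 0 ≤ s → ∃ w, dist (β s) w ≤ 2*δ ∧
      ((∃ t, 0 ≤ t ∧ w = g t) ∨ dist e w + dist w (g 0) = d₀))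
    (s σ : ℝ) (hs : 0 ≤ s) (hσ : 0 ≤ σ) (hclose : dist (α s) (β σ) ≤ 2*δ) :
    s ≤ d₀ + 8*δ := by
  obtain ⟨w₂, hw₂d, hw₂⟩ := K2α s hs
  obtain ⟨w₃, hw₃d, hw₃⟩ := K2β σ hσ
  have h23 : dist w₂ w₃ ≤ 6*δ := by
    calc dist w₂ w₃ ≤ dist w₂ (α s) + dist (α s) (β σ) + dist (β σ) w₃ :=
          dist_triangle4 _ _ _ _
      _ ≤ 2*δ + (2*δ) + (2*δ) := by
          refine add_le_add (add_le_add ?_ hclose) hw₃d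
          rw [dist_comm]; exact hw₂d
      _ = 6*δ := by ring
  have hs' : s ≤ dist e w₂ + 2*δ := by
    have h1 : dist e (α s) ≤ dist e w₂ + dist w₂ (α s) := dist_triangle _ _ _
    rw [hαd s hs] at h1
    rw [dist_comm w₂ (α s)] at h1
    linarith
  rcases hw₂ with ⟨t₂, ht₂, rfl⟩ | hseg₂
  · rcases hw₃ with ⟨t₃, ht₃, rfl⟩ | hseg₃
    · have hd : dist (g (-t₂)) (g t₃) = t₂ + t₃ := by
        rw [hg _ (mem_univ _) _ (mem_univ _), abs_of_nonpos (by linarith)]; ring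
      have ht₂b : t₂ ≤ 6*δ := by rw [hd] at h23; linarith
      have h1 : dist e (g (-t₂)) ≤ dist e (g 0) + dist (g 0) (g (-t₂)) := dist_triangle _ _ _
      have h2 : dist (g 0) (g (-t₂)) = t₂ := by
        rw [hg _ (mem_univ _) _ (mem_univ _), abs_of_nonneg (by linarith)]; ring
      rw [h2, ← hd₀] at h1
      linarith
    · have h3 : dist e w₃ ≤ d₀ := by
        have := dist_nonneg (x := w₃) (y := g 0); linarith
      have h4 : dist e (g (-t₂)) ≤ dist e w₃ + dist w₃ (g (-t₂)) := dist_triangle _ _ _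
      rw [dist_comm w₃ (g (-t₂))] at h4
      linarith
  · have h2 : dist e w₂ ≤ d₀ := by
      have := dist_nonneg (x := w₂) (y := g 0); linarith
    linarith

lemma close_pt {X : Type*} [MetricSpace X] (e : X) {β : ℝ → X} {G' : Set X} {p' : X}
    {δ d₀ d₀' : ℝ} (hδ : 0 ≤ δ) (hp' : p' ∈ G')
    (hd₀'b : d₀' ≤ d₀ + 9*δ)
    (x : X) (hx : ∃ s, 0 ≤ s ∧ dist x (β s) ≤ δ ∧ d₀ - δ ≤ s)
    (hβd : ∀ s, 0 ≤ s → dist e (β s) = s)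
    (K2 : ∀ s, 0 ≤ s → ∃ w, dist (β s) w ≤ 2*δ ∧ (w ∈ G' ∨ dist e w + dist w p' = d₀')) :
    ∃ y ∈ G', dist x y ≤ 15*δ := by
  obtain ⟨s, hs0, hxs, hsd⟩ := hx
  obtain ⟨w, hwd, hw⟩ := K2 s hs0
  rcases hw with hmem | hseg
  · exact ⟨w, hmem, by linarith [dist_triangle x (β s) w]⟩
  · have h1 : s - 2*δ ≤ dist e w := by
      have h2 : dist e (β s) ≤ dist e w + dist w (β s) := dist_triangle _ _ _
      rw [hβd s hs0, dist_comm w (β s)] at h2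
      linarith
    have h2 : dist w p' ≤ 12*δ := by linarith
    refine ⟨p', hp', ?_⟩
    calc dist x p' ≤ dist x (β s) + dist (β s) w + dist w p' := dist_triangle4 _ _ _ _
      _ ≤ 15*δ := by linarith

/-- two biinfinite geodesics bi-asymptotic to the same pair of distinct
points of the N-Morse stratum of the Morse boundary (parameterized so that time 0 is a
closest point to the basepoint) are at Hausdorff distance less than K₂ = K₂(N). Boundary
points are represented by N-Morse rays from e; distinctness means the representing rays
are at infinite Hausdorff distance. -/
theorem stmt8 (N : ℝ → ℝ → ℝ) (hN : MorseGauge N) :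
    ∃ K₂ : ℝ, 0 < K₂ ∧
      ∀ (X : Type) [MetricSpace X] [ProperSpace X], GeodesicSpace X →
      ∀ (e : X) (α β : ℝ → X),
        IsGeodesicOn α (Ici 0) → IsGeodesicOn β (Ici 0) →
        IsMorseOn N α (Ici 0) → IsMorseOn N β (Ici 0) →
        α 0 = e → β 0 = e →
        EMetric.hausdorffEdist (α '' Ici 0) (β '' Ici 0) = ⊤ →
      ∀ (γ γ' : ℝ → X), IsGeodesicOn γ univ → IsGeodesicOn γ' univ →
        (∀ s : ℝ, dist e (γ 0) ≤ dist e (γ s)) →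
        (∀ s : ℝ, dist e (γ' 0) ≤ dist e (γ' s)) →
        EMetric.hausdorffEdist (γ '' Iic 0) (α '' Ici 0) ≠ ⊤ →
        EMetric.hausdorffEdist (γ '' Ici 0) (β '' Ici 0) ≠ ⊤ →
        EMetric.hausdorffEdist (γ' '' Iic 0) (α '' Ici 0) ≠ ⊤ →
        EMetric.hausdorffEdist (γ' '' Ici 0) (β '' Ici 0) ≠ ⊤ →
        Metric.hausdorffDist (γ '' univ) (γ' '' univ) < K₂ := by
  have hδ0 : 0 ≤ N 5 1 := hN 5 1 (by norm_num) (by norm_num)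
  refine ⟨15 * N 5 1 + 16, by linarith, ?_⟩
  intro X _ _ hX e α β hα hβ hαM hβM hα0 hβ0 hαβ γ γ' hγ hγ' hγm hγ'm hγα hγβ hγ'α hγ'β
  set δ := N 5 1 with hδdef
  set H : ℝ := max (max (hausdorffDist (γ '' Iic 0) (α '' Ici 0))
      (hausdorffDist (γ '' Ici 0) (β '' Ici 0)))
      (max (hausdorffDist (γ' '' Iic 0) (α '' Ici 0))
      (hausdorffDist (γ' '' Ici 0) (β '' Ici 0))) with hHdef
  have fwd_geo : ∀ g : ℝ → X, IsGeodesicOn g univ → IsGeodesicOn g (Ici 0) :=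
    fun g hg s _ t _ => hg s (mem_univ _) t (mem_univ _)
  have bwd_geo : ∀ g : ℝ → X, IsGeodesicOn g univ →
      IsGeodesicOn (fun t => g (-t)) (Ici 0) := by
    intro g hg s _ t _
    simp only
    rw [hg (-s) (mem_univ _) (-t) (mem_univ _)]
    have h : -s - -t = t - s := by ring
    rw [h, abs_sub_comm]
  have hbγβ : ∀ t:ℝ, 0 ≤ t → Metric.infDist (γ t) (β '' Ici 0) ≤ H := by
    intro t ht
    have hm : γ t ∈ γ '' Ici 0 := ⟨t, mem_Ici.2 ht, rfl⟩
    refine le_trans (Metric.infDist_le_hausdorffDist_of_mem hm hγβ) ?_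
    exact le_trans (le_max_right _ _) (le_max_left _ _)
  have hbγα : ∀ t:ℝ, 0 ≤ t → Metric.infDist (γ (-t)) (α '' Ici 0) ≤ H := by
    intro t ht
    have hm : γ (-t) ∈ γ '' Iic 0 := ⟨-t, mem_Iic.2 (neg_nonpos.2 ht), rfl⟩
    refine le_trans (Metric.infDist_le_hausdorffDist_of_mem hm hγα) ?_
    exact le_trans (le_max_left _ _) (le_max_left _ _)
  have hbγ'β : ∀ t:ℝ, 0 ≤ t → Metric.infDist (γ' t) (β '' Ici 0) ≤ H := by
    intro t ht
    have hm : γ' t ∈ γ' '' Ici 0 := ⟨t, mem_Ici.2 ht, rfl⟩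
    refine le_trans (Metric.infDist_le_hausdorffDist_of_mem hm hγ'β) ?_
    exact le_trans (le_max_right _ _) (le_max_right _ _)
  have hbγ'α : ∀ t:ℝ, 0 ≤ t → Metric.infDist (γ' (-t)) (α '' Ici 0) ≤ H := by
    intro t ht
    have hm : γ' (-t) ∈ γ' '' Iic 0 := ⟨-t, mem_Iic.2 (neg_nonpos.2 ht), rfl⟩
    refine le_trans (Metric.infDist_le_hausdorffDist_of_mem hm hγ'α) ?_
    exact le_trans (le_max_left _ _) (le_max_right _ _)
  -- the four instances of the key lemma
  have KB := fun (τ σ : ℝ) (hτ : 0 ≤ τ) (hσ : 0 ≤ σ) =>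
    key_s8 hX hβ hβM hβ0 (fwd_geo γ hγ) (fun t _ => hγm t) hbγβ τ σ hτ hσ
  have KA := fun (τ σ : ℝ) (hτ : 0 ≤ τ) (hσ : 0 ≤ σ) =>
    key_s8 hX hα hαM hα0 (bwd_geo γ hγ)
      (fun t _ => by rw [neg_zero]; exact hγm (-t)) hbγα τ σ hτ hσ
  have KB' := fun (τ σ : ℝ) (hτ : 0 ≤ τ) (hσ : 0 ≤ σ) =>
    key_s8 hX hβ hβM hβ0 (fwd_geo γ' hγ') (fun t _ => hγ'm t) hbγ'β τ σ hτ hσ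
  have KA' := fun (τ σ : ℝ) (hτ : 0 ≤ τ) (hσ : 0 ≤ σ) =>
    key_s8 hX hα hαM hα0 (bwd_geo γ' hγ')
      (fun t _ => by rw [neg_zero]; exact hγ'm (-t)) hbγ'α τ σ hτ hσ
  -- massaged forms
  have KB1 : ∀ τ, 0 ≤ τ → ∃ y ∈ β '' Ici 0, dist (γ τ) y ≤ δ :=
    fun τ hτ => (KB τ 0 hτ le_rfl).1
  have KA1 : ∀ τ, 0 ≤ τ → ∃ y ∈ α '' Ici 0, dist (γ (-τ)) y ≤ δ :=
    fun τ hτ => (KA τ 0 hτ le_rfl).1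
  have KB1' : ∀ τ, 0 ≤ τ → ∃ y ∈ β '' Ici 0, dist (γ' τ) y ≤ δ :=
    fun τ hτ => (KB' τ 0 hτ le_rfl).1
  have KA1' : ∀ τ, 0 ≤ τ → ∃ y ∈ α '' Ici 0, dist (γ' (-τ)) y ≤ δ :=
    fun τ hτ => (KA' τ 0 hτ le_rfl).1
  have KB2 : ∀ s, 0 ≤ s → ∃ w, dist (β s) w ≤ 2*δ ∧
      ((∃ t, 0 ≤ t ∧ w = γ t) ∨ dist e w + dist w (γ 0) = dist e (γ 0)) := by
    intro s hs
    obtain ⟨w, h1, h2⟩ := (KB 0 s le_rfl hs).2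
    exact ⟨w, h1, h2⟩
  have KA2 : ∀ s, 0 ≤ s → ∃ w, dist (α s) w ≤ 2*δ ∧
      ((∃ t, 0 ≤ t ∧ w = γ (-t)) ∨ dist e w + dist w (γ 0) = dist e (γ 0)) := by
    intro s hs
    obtain ⟨w, h1, h2⟩ := (KA 0 s le_rfl hs).2
    rw [neg_zero] at h2
    exact ⟨w, h1, h2⟩
  have KB2' : ∀ s, 0 ≤ s → ∃ w, dist (β s) w ≤ 2*δ ∧
      ((∃ t, 0 ≤ t ∧ w = γ' t) ∨ dist e w + dist w (γ' 0) = dist e (γ' 0)) := by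
    intro s hs
    obtain ⟨w, h1, h2⟩ := (KB' 0 s le_rfl hs).2
    exact ⟨w, h1, h2⟩
  have KA2' : ∀ s, 0 ≤ s → ∃ w, dist (α s) w ≤ 2*δ ∧
      ((∃ t, 0 ≤ t ∧ w = γ' (-t)) ∨ dist e w + dist w (γ' 0) = dist e (γ' 0)) := by
    intro s hs
    obtain ⟨w, h1, h2⟩ := (KA' 0 s le_rfl hs).2
    rw [neg_zero] at h2
    exact ⟨w, h1, h2⟩
  have hαd : ∀ s, 0 ≤ s → dist e (α s) = s := by
    intro s hs
    rw [← hα0, hα 0 (mem_Ici.2 le_rfl) s (mem_Ici.2 hs), abs_of_nonpos (by linarith)]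
    ring
  have hβd : ∀ s, 0 ≤ s → dist e (β s) = s := by
    intro s hs
    rw [← hβ0, hβ 0 (mem_Ici.2 le_rfl) s (mem_Ici.2 hs), abs_of_nonpos (by linarith)]
    ring
  have cornγ : ∀ s σ'', 0 ≤ s → 0 ≤ σ'' → dist (α s) (β σ'') ≤ 2*δ →
      s ≤ dist e (γ 0) + 8*δ :=
    fun s σ'' hs hσ h => corner e hδ0 hγ rfl hαd KA2 KB2 s σ'' hs hσ h
  have cornγ' : ∀ s σ'', 0 ≤ s → 0 ≤ σ'' → dist (α s) (β σ'') ≤ 2*δ →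
      s ≤ dist e (γ' 0) + 8*δ :=
    fun s σ'' hs hσ h => corner e hδ0 hγ' rfl hαd KA2' KB2' s σ'' hs hσ h
  -- comparison of corner depths
  have hdd : ∀ (g : ℝ → X) (D : ℝ),
      (∀ τ, 0 ≤ τ → ∃ y ∈ α '' Ici 0, dist (g (-τ)) y ≤ δ) →
      (∀ τ, 0 ≤ τ → ∃ y ∈ β '' Ici 0, dist (g τ) y ≤ δ) →
      (∀ s σ'', 0 ≤ s → 0 ≤ σ'' → dist (α s) (β σ'') ≤ 2*δ → s ≤ D + 8*δ) →
      dist e (g 0) ≤ D + 9*δ := by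
    intro g D hgα hgβ hcorn
    obtain ⟨yα, hyαS, hyα⟩ := hgα 0 le_rfl
    rw [neg_zero] at hyα
    obtain ⟨sα, hsα0, rfl⟩ := hyαS
    obtain ⟨yβ, hyβS, hyβ⟩ := hgβ 0 le_rfl
    obtain ⟨sβ, hsβ0, rfl⟩ := hyβS
    have hclose : dist (α sα) (β sβ) ≤ 2*δ := by
      calc dist (α sα) (β sβ) ≤ dist (α sα) (g 0) + dist (g 0) (β sβ) := dist_triangle _ _ _
        _ ≤ δ + δ := add_le_add (by rw [dist_comm]; exact hyα) hyβ
        _ = 2*δ := by ring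
    have h1 := hcorn sα sβ hsα0 hsβ0 hclose
    have h2 : dist e (g 0) ≤ sα + δ := by
      have h3 : dist e (g 0) ≤ dist e (α sα) + dist (α sα) (g 0) := dist_triangle _ _ _
      rw [hαd sα hsα0] at h3
      have h4 : dist (α sα) (g 0) = dist (g 0) (α sα) := dist_comm _ _
      linarith
    linarith
  have hd' : dist e (γ' 0) ≤ dist e (γ 0) + 9*δ := hdd γ' (dist e (γ 0)) KA1' KB1' cornγ
  have hd : dist e (γ 0) ≤ dist e (γ' 0) + 9*δ := hdd γ (dist e (γ' 0)) KA1 KB1 cornγ'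
  -- the two Hausdorff sides
  have side : ∀ (g g' : ℝ → X), IsGeodesicOn g univ →
      (∀ s : ℝ, dist e (g 0) ≤ dist e (g s)) →
      (∀ τ, 0 ≤ τ → ∃ y ∈ α '' Ici 0, dist (g (-τ)) y ≤ δ) →
      (∀ τ, 0 ≤ τ → ∃ y ∈ β '' Ici 0, dist (g τ) y ≤ δ) →
      (∀ s, 0 ≤ s → ∃ w, dist (α s) w ≤ 2*δ ∧
        ((∃ t, 0 ≤ t ∧ w = g' (-t)) ∨ dist e w + dist w (g' 0) = dist e (g' 0))) →
      (∀ s, 0 ≤ s → ∃ w, dist (β s) w ≤ 2*δ ∧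
        ((∃ t, 0 ≤ t ∧ w = g' t) ∨ dist e w + dist w (g' 0) = dist e (g' 0))) →
      dist e (g' 0) ≤ dist e (g 0) + 9*δ →
      ∀ x ∈ g '' univ, ∃ y ∈ g' '' univ, dist x y ≤ 15*δ := by
    rintro g g' hg hgm hgα hgβ hKA2' hKB2' hdb x ⟨τ, -, rfl⟩
    rcases le_total 0 τ with h | h
    · obtain ⟨y, hyS, hyd⟩ := hgβ τ h
      obtain ⟨s, hs0, rfl⟩ := hyS
      refine close_pt e hδ0 (⟨0, mem_univ 0, rfl⟩ : g' 0 ∈ g' '' univ) hdb (g τ)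
        ⟨s, mem_Ici.1 hs0, hyd, ?_⟩ hβd ?_
      · have h1 : dist e (g τ) ≤ dist e (β s) + dist (β s) (g τ) := dist_triangle _ _ _
        rw [hβd s (mem_Ici.1 hs0), dist_comm (β s) (g τ)] at h1
        have h2 := hgm τ
        linarith
      · intro s' hs'
        obtain ⟨w, h1, h2⟩ := hKB2' s' hs'
        exact ⟨w, h1, h2.imp (fun ⟨t, _, ht⟩ => ⟨t, mem_univ t, ht.symm⟩) id⟩
    · obtain ⟨y, hyS, hyd⟩ := hgα (-τ) (by linarith)
      rw [neg_neg] at hyd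
      obtain ⟨s, hs0, rfl⟩ := hyS
      refine close_pt e hδ0 (⟨0, mem_univ 0, rfl⟩ : g' 0 ∈ g' '' univ) hdb (g τ)
        ⟨s, mem_Ici.1 hs0, hyd, ?_⟩ hαd ?_
      · have h1 : dist e (g τ) ≤ dist e (α s) + dist (α s) (g τ) := dist_triangle _ _ _
        rw [hαd s (mem_Ici.1 hs0), dist_comm (α s) (g τ)] at h1
        have h2 := hgm τ
        linarith
      · intro s' hs'
        obtain ⟨w, h1, h2⟩ := hKA2' s' hs'
        exact ⟨w, h1, h2.imp (fun ⟨t, _, ht⟩ => ⟨-t, mem_univ (-t), ht.symm⟩) id⟩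
  have side1 := side γ γ' hγ hγm KA1 KB1 KA2' KB2' hd'
  have side2 := side γ' γ hγ' hγ'm KA1' KB1' KA2 KB2 hd
  have hfin := hausdorffDist_le_of_mem_dist (by linarith : (0:ℝ) ≤ 15*δ) side1 side2
  calc hausdorffDist (γ '' univ) (γ' '' univ) ≤ 15*δ := hfin
    _ < 15*δ + 16 := by linarith
end

section
/- Let X be a proper geodesic metric space with basepoint e, and let K ⊆ ∂_M X_e be a nonempty compact subset of the Morse boundary (with the direct limit topology). Then there exists a single Morse gauge N such that K ⊆ ∂_M^N X_e, i.e., every point of K is represented by an N-Morse geodesic ray based at e. -/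
open Set Metric Filter

/-- A Morse geodesic ray from `e`. -/
def MorseRay {X : Type*} [MetricSpace X] (e : X) (γ : ℝ → X) : Prop :=
  IsGeodesicOn γ (Ici 0) ∧ γ 0 = e ∧ ∃ N : ℝ → ℝ → ℝ, IsMorseOn N γ (Ici 0)

/-- Asymptotic equivalence of Morse rays from `e` (finite Hausdorff distance). -/
def asympSetoid {X : Type*} [MetricSpace X] (e : X) :
    Setoid {γ : ℝ → X // MorseRay e γ} where
  r a b := Metric.hausdorffEDist (a.1 '' Ici 0) (b.1 '' Ici 0) ≠ ⊤
  iseqv := by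
    refine ⟨?_, ?_, ?_⟩
    · intro a
      rw [Metric.hausdorffEDist_self]
      exact ENNReal.zero_ne_top
    · intro a b h
      rwa [Metric.hausdorffEDist_comm]
    · intro a b c hab hbc htop
      have h := Metric.hausdorffEDist_triangle (s := a.1 '' Ici 0)
        (t := b.1 '' Ici 0) (u := c.1 '' Ici 0)
      rw [htop] at h
      exact absurd (lt_of_le_of_lt h (ENNReal.add_lt_top.mpr ⟨hab.lt_top, hbc.lt_top⟩))
        (lt_irrefl ⊤)

/-- The Morse boundary: Morse rays from `e` up to asymptotic equivalence. -/
def MorseBoundary {X : Type*} [MetricSpace X] (e : X) := Quotient (asympSetoid e)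

/-- The N-Morse stratum: geodesic rays from `e` which are N-Morse, topologized by
(induced) pointwise convergence, which on geodesic rays agrees with the compact-open
topology (uniform convergence on compact sets). -/
def stratumRays (X : Type*) [MetricSpace X] (e : X) (N : ℝ → ℝ → ℝ) :=
  {γ : ℝ → X // IsGeodesicOn γ (Ici 0) ∧ γ 0 = e ∧ IsMorseOn N γ (Ici 0)}

instance {X : Type*} [MetricSpace X] (e : X) (N : ℝ → ℝ → ℝ) :
    TopologicalSpace (stratumRays X e N) :=
  TopologicalSpace.induced (fun γ => (γ.1 : ℝ → X)) Pi.topologicalSpace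

/-- The natural map from the N-stratum of rays to the Morse boundary. -/
def strMap {X : Type*} [MetricSpace X] (e : X) (N : ℝ → ℝ → ℝ)
    (γ : stratumRays X e N) : MorseBoundary e :=
  Quotient.mk (asympSetoid e) ⟨γ.1, γ.2.1, γ.2.2.1, N, γ.2.2.2⟩

/-- The direct limit topology on the Morse boundary: a set is open iff its preimage in
every stratum is open. -/
instance {X : Type*} [MetricSpace X] (e : X) : TopologicalSpace (MorseBoundary e) :=
  ⨆ N : ℝ → ℝ → ℝ, TopologicalSpace.coinduced (strMap e N) inferInstance

open Topology

section Aux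

variable {X : Type*} [MetricSpace X]

/-- The Morse bound predicate at fixed quasigeodesic parameters. -/
def MorseBdd (γ : ℝ → X) (k c B : ℝ) : Prop :=
  ∀ (q : ℝ → X) (a b : ℝ), a ≤ b → IsQuasigeodesicOn k c q (Icc a b) →
    q a ∈ γ '' Ici 0 → q b ∈ γ '' Ici 0 → q '' Icc a b ⊆ nbhd (γ '' Ici 0) B

lemma MorseBdd.mono {γ : ℝ → X} {k c B B' : ℝ} (h : MorseBdd γ k c B) (hBB : B ≤ B') :
    MorseBdd γ k c B' := by
  intro q a b hab hq ha hb u hu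
  obtain ⟨y, hy, hd⟩ := h q a b hab hq ha hb hu
  exact ⟨y, hy, hd.trans hBB⟩

lemma isMorseOn_bdd {N : ℝ → ℝ → ℝ} {γ : ℝ → X} (h : IsMorseOn N γ (Ici 0))
    {k c : ℝ} (hk : 1 ≤ k) (hc : 0 ≤ c) : MorseBdd γ k c (N k c) :=
  fun q a b hab hq ha hb => h k c hk hc q a b hab hq ha hb

lemma quasigeodesic_mono {k c k' c' : ℝ} {q : ℝ → X} {I : Set ℝ}
    (hk : 0 < k) (hkk : k ≤ k') (hcc : c ≤ c') (h : IsQuasigeodesicOn k c q I) :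
    IsQuasigeodesicOn k' c' q I := by
  intro s hs t ht
  obtain ⟨h1, h2⟩ := h s hs t ht
  have hdiv : 1 / k' * |s - t| ≤ 1 / k * |s - t| :=
    mul_le_mul_of_nonneg_right (one_div_le_one_div_of_le hk hkk) (abs_nonneg _)
  have hmul : k * |s - t| ≤ k' * |s - t| :=
    mul_le_mul_of_nonneg_right hkk (abs_nonneg _)
  constructor <;> linarith

lemma geo_dist {γ : ℝ → X} (hγ : IsGeodesicOn γ (Ici 0)) {s t : ℝ}
    (hs : 0 ≤ s) (ht : 0 ≤ t) : dist (γ s) (γ t) = |s - t| :=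
  hγ s (Set.mem_Ici.mpr hs) t (Set.mem_Ici.mpr ht)

lemma geo_dist' {γ : ℝ → X} {L : ℝ} (hγ : IsGeodesicOn γ (Icc 0 L)) {s t : ℝ}
    (hs : s ∈ Icc 0 L) (ht : t ∈ Icc 0 L) : dist (γ s) (γ t) = |s - t| :=
  hγ s hs t ht

lemma geodesic_ray_dist0 {e : X} {γ : ℝ → X} (hγ : IsGeodesicOn γ (Ici 0)) (h0 : γ 0 = e)
    {s : ℝ} (hs : 0 ≤ s) : dist e (γ s) = s := by
  rw [← h0, dist_comm, geo_dist hγ hs le_rfl, sub_zero, abs_of_nonneg hs]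

lemma morse_gauge_nonneg {N : ℝ → ℝ → ℝ} {σ : ℝ → X}
    (hM : IsMorseOn N σ (Ici 0)) {k c : ℝ} (hk : 1 ≤ k) (hc : 0 ≤ c) : 0 ≤ N k c := by
  have hq : IsQuasigeodesicOn k c (fun _ => σ 0) (Icc (0:ℝ) 0) := by
    intro s hs t ht
    simp only [mem_Icc] at hs ht
    have hs0 : s = 0 := le_antisymm hs.2 hs.1
    have ht0 : t = 0 := le_antisymm ht.2 ht.1
    subst hs0; subst ht0
    simp only [dist_self, sub_self, abs_zero, mul_zero]
    constructor <;> linarith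
  have hmem : (fun _ : ℝ => σ 0) 0 ∈ σ '' Ici 0 := ⟨0, Set.self_mem_Ici, rfl⟩
  have h := hM k c hk hc (fun _ => σ 0) 0 0 le_rfl hq hmem hmem
    (mem_image_of_mem _ (by simp : (0:ℝ) ∈ Icc (0:ℝ) 0))
  obtain ⟨y, _, hd⟩ := h
  exact le_trans dist_nonneg hd

lemma exists_closest_point {e : X} {γ : ℝ → X} (hγ : IsGeodesicOn γ (Ici 0)) (h0 : γ 0 = e)
    (p : X) : ∃ s, 0 ≤ s ∧ ∀ u, 0 ≤ u → dist p (γ s) ≤ dist p (γ u) := by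
  set T := dist e p with hT
  have hT0 : 0 ≤ T := dist_nonneg
  have hlip : LipschitzOnWith 1 γ (Icc 0 (2*T+1)) := by
    intro x hx y hy
    rw [edist_dist, geo_dist hγ hx.1 hy.1, ENNReal.coe_one, one_mul, edist_dist, Real.dist_eq]
  have hcont : ContinuousOn (fun s => dist p (γ s)) (Icc 0 (2*T+1)) :=
    (continuous_const.dist continuous_id).comp_continuousOn hlip.continuousOn
  obtain ⟨s, hsmem, hsmin⟩ := isCompact_Icc.exists_isMinOn
    ⟨0, by constructor <;> linarith⟩ hcont
  refine ⟨s, hsmem.1, ?_⟩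
  intro u hu
  by_cases hcase : u ≤ 2*T+1
  · exact hsmin ⟨hu, hcase⟩
  · have h1 : dist p (γ s) ≤ dist p (γ 0) := hsmin ⟨le_rfl, by linarith⟩
    have h2 : dist p (γ 0) = T := by rw [h0, dist_comm]
    have h3 : dist e (γ u) = u := geodesic_ray_dist0 hγ h0 hu
    have h4 : dist e (γ u) ≤ dist e p + dist p (γ u) := dist_triangle e p (γ u)
    linarith

/-- Key geometric lemma: if `β` is an `M`-Morse geodesic ray from `e` and `γ` is any
geodesic ray from `e` at finite Hausdorff distance from `β`, then the two rays are
uniformly `2 * M 3 0`-close. -/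
lemma ray_close_of_asymp (hX : GeodesicSpace X) {e : X} {γ β : ℝ → X} {M : ℝ → ℝ → ℝ}
    (hγ : IsGeodesicOn γ (Ici 0)) (hγ0 : γ 0 = e)
    (hβ : IsGeodesicOn β (Ici 0)) (hβ0 : β 0 = e) (hβM : IsMorseOn M β (Ici 0))
    (hH : Metric.hausdorffEDist (γ '' Ici 0) (β '' Ici 0) ≠ ⊤) :
    ∀ t, 0 ≤ t → dist (γ t) (β t) ≤ 2 * M 3 0 := by
  intro t ht
  have key : ∃ u, 0 ≤ u ∧ dist (γ t) (β u) ≤ M 3 0 := by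
    set D := (Metric.hausdorffEDist (γ '' Ici 0) (β '' Ici 0)).toReal with hD
    have hD0 : 0 ≤ D := ENNReal.toReal_nonneg
    set T := t + D + 2 with hTdef
    have hT0 : (0:ℝ) ≤ T := by linarith
    set p := β T with hp
    -- a point of `γ` at distance < D + 1 from p
    have hinf : Metric.infEDist p (γ '' Ici 0) < ENNReal.ofReal (D+1) := by
      have h1 : Metric.infEDist p (γ '' Ici 0) ≤
          Metric.hausdorffEDist (β '' Ici 0) (γ '' Ici 0) :=
        Metric.infEDist_le_hausdorffEDist_of_mem ⟨T, Set.mem_Ici.mpr hT0, rfl⟩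
      rw [Metric.hausdorffEDist_comm] at h1
      have h2 : Metric.hausdorffEDist (γ '' Ici 0) (β '' Ici 0) = ENNReal.ofReal D :=
        (ENNReal.ofReal_toReal hH).symm
      rw [h2] at h1
      exact lt_of_le_of_lt h1 ((ENNReal.ofReal_lt_ofReal_iff (by linarith)).mpr (by linarith))
    obtain ⟨y₁, hy₁, hdy₁⟩ := Metric.infEDist_lt_iff.mp hinf
    obtain ⟨s₁, hs₁0, rfl⟩ := hy₁
    rw [edist_lt_ofReal] at hdy₁
    -- closest point of γ to p
    obtain ⟨s, hs0, hsmin⟩ := exists_closest_point hγ hγ0 p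
    have hL0 : 0 ≤ dist p (γ s) := dist_nonneg
    set L := dist p (γ s) with hL
    have hLD : L < D + 1 := lt_of_le_of_lt (hsmin s₁ hs₁0) hdy₁
    have hdep : dist e p = T := geodesic_ray_dist0 hβ hβ0 hT0
    have hsd : dist e (γ s) = s := geodesic_ray_dist0 hγ hγ0 hs0
    have hslb : T - L ≤ s := by
      have htri : dist e p ≤ dist e (γ s) + dist (γ s) p := dist_triangle e (γ s) p
      rw [dist_comm (γ s) p] at htri
      linarith
    have hts : t < s := by linarith
    -- the bridge geodesic
    obtain ⟨σ, hσ, hσ0, hσend⟩ := hX (γ s) p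
    set Lb := dist (γ s) p with hLb
    have hLbL : Lb = L := dist_comm (γ s) p
    have hLb0 : 0 ≤ Lb := dist_nonneg
    -- distance from bridge points to p
    have hσp : ∀ w, w ∈ Icc 0 Lb → dist (σ w) p = Lb - w := by
      intro w hw
      rw [← hσend, geo_dist' hσ hw (Set.mem_Icc.mpr ⟨hLb0, le_rfl⟩),
        abs_of_nonpos (by linarith [hw.2])]
      ring
    -- cross estimates
    have hcross : ∀ x, 0 ≤ x → x ≤ s → ∀ w, w ∈ Icc 0 Lb →
        w ≤ dist (γ x) (σ w) ∧ s - x - w ≤ dist (γ x) (σ w) ∧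
          dist (γ x) (σ w) ≤ s - x + w := by
      intro x hx0 hxs w hw
      have h1 : dist p (γ x) ≤ dist p (σ w) + dist (σ w) (γ x) := dist_triangle _ _ _
      have h2 : dist p (σ w) = Lb - w := by rw [dist_comm]; exact hσp w hw
      have h3 : L ≤ dist p (γ x) := hsmin x hx0
      have h4 : dist (γ x) (γ s) = s - x := by
        rw [geo_dist hγ hx0 hs0, abs_of_nonpos (by linarith)]; ring
      have h5 : dist (σ w) (σ 0) = w := by
        rw [geo_dist' hσ hw (Set.mem_Icc.mpr ⟨le_rfl, hLb0⟩), sub_zero, abs_of_nonneg hw.1]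
      have h6 : dist (γ x) (γ s) ≤ dist (γ x) (σ w) + dist (σ w) (γ s) := dist_triangle _ _ _
      have h7 : dist (σ w) (γ s) = w := by rw [← hσ0]; exact h5
      have h8 : dist (γ x) (σ w) ≤ dist (γ x) (γ s) + dist (γ s) (σ w) := dist_triangle _ _ _
      have h9 : dist (γ s) (σ w) = w := by rw [dist_comm, ← hσ0]; exact h5
      refine ⟨?_, by linarith, by linarith⟩
      have := dist_comm (σ w) (γ x)
      linarith
    -- the quasigeodesic
    set q : ℝ → X := fun u => if u ≤ s then γ u else σ (u - s) with hq
    have hqval : ∀ u, u ≤ s → q u = γ u := by intro u hu; simp only [hq, if_pos hu]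
    have hqval' : ∀ u, s < u → q u = σ (u - s) := by
      intro u hu; simp only [hq, if_neg (not_le.mpr hu)]
    have haux : ∀ u v, u ∈ Icc 0 (s + Lb) → v ∈ Icc 0 (s + Lb) → u ≤ v →
        (1/3) * (v - u) ≤ dist (q u) (q v) ∧ dist (q u) (q v) ≤ 3 * (v - u) := by
      intro u v hu hv huv
      by_cases hvs : v ≤ s
      · rw [hqval u (le_trans huv hvs), hqval v hvs,
          hγ u hu.1 v (le_trans hu.1 huv), abs_of_nonpos (by linarith)]
        constructor <;> linarith
      · push_neg at hvs
        rw [hqval' v hvs]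
        have hwmem : v - s ∈ Icc 0 Lb := ⟨by linarith, by linarith [hv.2]⟩
        by_cases hus : u ≤ s
        · rw [hqval u hus]
          obtain ⟨e1, e2, e3⟩ := hcross u hu.1 hus (v - s) hwmem
          constructor
          · by_cases hcc : s - u ≤ 2 * (v - s)
            · linarith
            · linarith
          · linarith
        · push_neg at hus
          rw [hqval' u hus]
          have humem : u - s ∈ Icc 0 Lb := ⟨by linarith, by linarith [hu.2, huv]⟩
          rw [geo_dist' hσ humem hwmem, abs_of_nonpos (by linarith)]
          constructor <;> linarith
    have hqg : IsQuasigeodesicOn 3 0 q (Icc 0 (s + Lb)) := by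
      intro u hu v hv
      rcases le_total u v with huv | hvu
      · obtain ⟨l, r⟩ := haux u v hu hv huv
        rw [abs_of_nonpos (by linarith)]
        constructor <;> linarith
      · obtain ⟨l, r⟩ := haux v u hv hu hvu
        rw [dist_comm, abs_of_nonneg (by linarith)]
        constructor <;> linarith
    have hq0mem : q 0 ∈ β '' Ici 0 := by
      rw [hqval 0 (by linarith), hγ0, ← hβ0]
      exact ⟨0, Set.self_mem_Ici, rfl⟩
    have hqendval : q (s + Lb) = p := by
      by_cases hc : s + Lb ≤ s
      · have hLb00 : Lb = 0 := le_antisymm (by linarith) hLb0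
        rw [hqval _ hc]
        have : γ (s + Lb) = γ s := by rw [hLb00, add_zero]
        rw [this, ← hσ0, ← hLb00, hσend]
      · push_neg at hc
        rw [hqval' _ hc]
        have : s + Lb - s = Lb := by ring
        rw [this, hσend]
    have hqendmem : q (s + Lb) ∈ β '' Ici 0 := by
      rw [hqendval]; exact ⟨T, Set.mem_Ici.mpr hT0, rfl⟩
    have himg := hβM 3 0 (by norm_num) le_rfl q 0 (s + Lb) (by linarith) hqg hq0mem hqendmem
    have htmem : q t ∈ q '' Icc 0 (s + Lb) :=
      mem_image_of_mem _ ⟨ht, by linarith⟩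
    obtain ⟨y, ⟨u, hu0, rfl⟩, hdy⟩ := himg htmem
    rw [hqval t (le_of_lt hts)] at hdy
    exact ⟨u, hu0, hdy⟩
  obtain ⟨u, hu0, hdu⟩ := key
  have h1 : |dist (β u) e - dist (γ t) e| ≤ dist (β u) (γ t) := abs_dist_sub_le _ _ _
  have h2 : dist (β u) e = u := by rw [dist_comm]; exact geodesic_ray_dist0 hβ hβ0 hu0
  have h3 : dist (γ t) e = t := by rw [dist_comm]; exact geodesic_ray_dist0 hγ hγ0 ht
  rw [h2, h3, dist_comm (β u) (γ t)] at h1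
  have h4 : dist (β u) (β t) = |u - t| := hβ u hu0 t ht
  have h5 : dist (γ t) (β t) ≤ dist (γ t) (β u) + dist (β u) (β t) := dist_triangle _ _ _
  have h6 : |u - t| ≤ M 3 0 := le_trans h1 hdu
  linarith

/-- Transfer lemma: a geodesic ray uniformly `δ`-close to an `M`-Morse geodesic ray is
itself Morse, for a gauge depending only on `M` and `δ`. -/
lemma morse_transfer {ρ σ : ℝ → X} {M : ℝ → ℝ → ℝ} {δ : ℝ}
    (hσM : IsMorseOn M σ (Ici 0))
    (hδ0 : 0 ≤ δ) (hd : ∀ u, 0 ≤ u → dist (ρ u) (σ u) ≤ δ) :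
    IsMorseOn (fun k c => M k (c + 2*δ) + δ) ρ (Ici 0) := by
  intro k c hk hc q a b hab hq ha hb
  obtain ⟨ta, hta0, hqa⟩ := ha
  obtain ⟨tb, htb0, hqb⟩ := hb
  classical
  set q' : ℝ → X := fun u => if u = a then σ ta else if u = b then σ tb else q u with hq'def
  have hM0 : 0 ≤ M k (c + 2*δ) := morse_gauge_nonneg hσM hk (by linarith)
  have hq'close : ∀ u, dist (q' u) (q u) ≤ δ := by
    intro u
    by_cases h1 : u = a
    · subst h1
      simp only [hq'def, if_pos rfl]
      rw [← hqa, dist_comm]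
      exact hd ta hta0
    · by_cases h2 : u = b
      · subst h2
        simp only [hq'def, if_neg h1, if_pos rfl]
        rw [← hqb, dist_comm]
        exact hd tb htb0
      · simp only [hq'def, if_neg h1, if_neg h2, dist_self]
        exact hδ0
  have hq'qg : IsQuasigeodesicOn k (c + 2*δ) q' (Icc a b) := by
    intro s hs t ht
    obtain ⟨l, r⟩ := hq s hs t ht
    have h1 := hq'close s
    have h2 := hq'close t
    have tri1 : dist (q' s) (q' t) ≤ dist (q' s) (q s) + dist (q s) (q t) + dist (q t) (q' t) :=
      dist_triangle4 _ _ _ _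
    have tri2 : dist (q s) (q t) ≤ dist (q s) (q' s) + dist (q' s) (q' t) + dist (q' t) (q t) :=
      dist_triangle4 _ _ _ _
    rw [dist_comm (q s) (q' s)] at tri2
    rw [dist_comm (q t) (q' t)] at tri1
    constructor <;> linarith
  have hq'a : q' a ∈ σ '' Ici 0 := by
    simp only [hq'def, if_pos rfl]
    exact ⟨ta, hta0, rfl⟩
  have hq'b : q' b ∈ σ '' Ici 0 := by
    by_cases hba : b = a
    · simp only [hq'def, if_pos hba]
      exact ⟨ta, hta0, rfl⟩
    · simp only [hq'def, if_neg hba, if_pos rfl]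
      exact ⟨tb, htb0, rfl⟩
  have himg := hσM k (c + 2*δ) hk (by linarith) q' a b hab hq'qg hq'a hq'b
  rintro x ⟨u, hu, rfl⟩
  by_cases h1 : u = a
  · subst h1
    refine ⟨q u, ⟨ta, hta0, hqa⟩, ?_⟩
    rw [dist_self]
    show (0:ℝ) ≤ M k (c + 2*δ) + δ
    linarith
  · by_cases h2 : u = b
    · subst h2
      refine ⟨q u, ⟨tb, htb0, hqb⟩, ?_⟩
      rw [dist_self]
      show (0:ℝ) ≤ M k (c + 2*δ) + δ
      linarith
    · have hqq' : q u = q' u := by simp only [hq'def, if_neg h1, if_neg h2]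
      obtain ⟨y, ⟨w, hw0, rfl⟩, hdy⟩ := himg (mem_image_of_mem _ hu : q' u ∈ q' '' Icc a b)
      refine ⟨ρ w, ⟨w, hw0, rfl⟩, ?_⟩
      have htri : dist (q u) (ρ w) ≤ dist (q u) (σ w) + dist (σ w) (ρ w) := dist_triangle _ _ _
      rw [dist_comm (σ w) (ρ w)] at htri
      have hdw := hd w hw0
      rw [hqq'] at htri
      rw [hqq']
      show dist (q' u) (ρ w) ≤ M k (c + 2*δ) + δ
      linarith

end Aux

section Aux2

variable {X : Type*} [MetricSpace X]

/-- Fibers of `strMap` are closed in each stratum. -/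
lemma fiber_closed (hX : GeodesicSpace X) (e : X) (M : ℝ → ℝ → ℝ) (y : MorseBoundary e) :
    IsClosed {σ : stratumRays X e M | strMap e M σ = y} := by
  by_cases hne : ∃ σ₁ : stratumRays X e M, strMap e M σ₁ = y
  · obtain ⟨σ₁, hσ₁⟩ := hne
    have hset : {σ : stratumRays X e M | strMap e M σ = y} =
        (fun σ : stratumRays X e M => (σ.1 : ℝ → X)) ⁻¹'
          {f : ℝ → X | ∀ u, 0 ≤ u → dist (f u) (σ₁.1 u) ≤ 2 * M 3 0} := by
      ext σ
      simp only [mem_setOf_eq, mem_preimage]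
      constructor
      · intro hσy
        have heq : strMap e M σ = strMap e M σ₁ := by rw [hσy, hσ₁]
        have hrel : Metric.hausdorffEDist (σ.1 '' Ici 0) (σ₁.1 '' Ici 0) ≠ ⊤ :=
          Quotient.exact heq
        exact ray_close_of_asymp hX σ.2.1 σ.2.2.1 σ₁.2.1 σ₁.2.2.1 σ₁.2.2.2 hrel
      · intro hclose
        have hhaus : Metric.hausdorffEDist (σ.1 '' Ici 0) (σ₁.1 '' Ici 0) ≤
            ENNReal.ofReal (2 * M 3 0) := by
          apply Metric.hausdorffEDist_le_of_mem_edist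
          · rintro x ⟨u, hu, rfl⟩
            refine ⟨σ₁.1 u, ⟨u, hu, rfl⟩, ?_⟩
            rw [edist_dist]
            exact ENNReal.ofReal_le_ofReal (hclose u hu)
          · rintro x ⟨u, hu, rfl⟩
            refine ⟨σ.1 u, ⟨u, hu, rfl⟩, ?_⟩
            rw [edist_dist, dist_comm]
            exact ENNReal.ofReal_le_ofReal (hclose u hu)
        have hne_top : Metric.hausdorffEDist (σ.1 '' Ici 0) (σ₁.1 '' Ici 0) ≠ ⊤ :=
          ne_top_of_le_ne_top ENNReal.ofReal_ne_top hhaus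
        rw [← hσ₁]
        exact Quotient.sound hne_top
    rw [hset]
    apply IsClosed.preimage continuous_induced_dom
    have hrw : {f : ℝ → X | ∀ u, 0 ≤ u → dist (f u) (σ₁.1 u) ≤ 2 * M 3 0} =
        ⋂ (u : ℝ), ⋂ (_ : 0 ≤ u),
          (fun f : ℝ → X => f u) ⁻¹' Metric.closedBall (σ₁.1 u) (2 * M 3 0) := by
      ext f
      simp only [mem_setOf_eq, mem_iInter, mem_preimage, Metric.mem_closedBall]
    rw [hrw]
    exact isClosed_iInter fun u => isClosed_iInter fun _ =>
      Metric.isClosed_closedBall.preimage (continuous_apply u)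
  · have hempty : {σ : stratumRays X e M | strMap e M σ = y} = ∅ := by
      ext σ
      simp only [mem_setOf_eq, mem_empty_iff_false, iff_false]
      exact fun h => hne ⟨σ, h⟩
    rw [hempty]
    exact isClosed_empty

end Aux2

/-- a nonempty compact subset of the Morse boundary of a proper geodesic
space lies in a single stratum: all its points are represented by N-Morse rays from e
for one gauge N. -/
theorem stmt9 {X : Type*} [MetricSpace X] [ProperSpace X] (hX : GeodesicSpace X) (e : X)
    (K : Set (MorseBoundary e)) (hne : K.Nonempty) (hK : IsCompact K) :
    ∃ N : ℝ → ℝ → ℝ, K ⊆ Set.range (strMap e N) := by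
  by_contra hcon
  push_neg at hcon
  -- hcon : ∀ N, ¬ K ⊆ range (strMap e N)
  have hcon' : ∀ N : ℝ → ℝ → ℝ, ∃ x ∈ K, x ∉ Set.range (strMap e N) := by
    intro N
    exact Set.not_subset.mp (hcon N)
  -- choose representatives for every point of the boundary
  have hrep : ∀ x : MorseBoundary e, ∃ a : {γ : ℝ → X // MorseRay e γ},
      Quotient.mk (asympSetoid e) a = x := fun x => Quotient.exists_rep x
  choose rep hrepx using hrep
  -- membership in a stratum range from a Morse certificate on the chosen representative
  have hmem_range : ∀ (x : MorseBoundary e) (N : ℝ → ℝ → ℝ),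
      IsMorseOn N (rep x).1 (Ici 0) → x ∈ Set.range (strMap e N) := by
    intro x N hN
    refine ⟨⟨(rep x).1, (rep x).2.1, (rep x).2.2.1, hN⟩, ?_⟩
    show Quotient.mk (asympSetoid e) ⟨(rep x).1, _⟩ = x
    exact (congrArg (Quotient.mk (asympSetoid e)) (Subtype.ext rfl)).trans (hrepx x)
  by_cases hbdd : ∀ m n : ℕ, ∃ B : ℝ, ∀ x ∈ K, MorseBdd (rep x).1 ((m:ℝ)+1) (n:ℝ) B
  · -- a single gauge works: contradiction with hcon
    choose Bf hBf using hbdd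
    set Nh : ℝ → ℝ → ℝ := fun k c => Bf (Nat.ceil k - 1) (Nat.ceil c) with hNh
    obtain ⟨x, hxK, hxnot⟩ := hcon' Nh
    apply hxnot
    apply hmem_range
    intro k c hk hc q a b hab hq ha hb
    have hk0 : (0:ℝ) < k := by linarith
    have hceil1 : 1 ≤ Nat.ceil k := by
      rw [Nat.one_le_ceil_iff]
      exact hk0
    have hcast : ((Nat.ceil k - 1 : ℕ) : ℝ) + 1 = ((Nat.ceil k : ℕ) : ℝ) := by
      have := Nat.cast_sub (R := ℝ) hceil1
      rw [this]
      push_cast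
      ring
    have hq' : IsQuasigeodesicOn (((Nat.ceil k - 1 : ℕ) : ℝ) + 1) ((Nat.ceil c : ℕ) : ℝ)
        q (Icc a b) := by
      rw [hcast]
      exact quasigeodesic_mono hk0 (Nat.le_ceil k) (Nat.le_ceil c) hq
    exact hBf (Nat.ceil k - 1) (Nat.ceil c) x hxK q a b hab hq' ha hb
  · -- violation at fixed integer parameters, blowing up along K
    push_neg at hbdd
    obtain ⟨m, n, hmn⟩ := hbdd
    have hsel : ∀ j : ℕ, ∃ x ∈ K, ¬ MorseBdd (rep x).1 ((m:ℝ)+1) (n:ℝ) (j:ℝ) :=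
      fun j => hmn (j:ℝ)
    choose xs hxsK hxs using hsel
    -- per-gauge finiteness of the indices landing in a given stratum range
    have hfin : ∀ M : ℝ → ℝ → ℝ, ∀ j : ℕ, xs j ∈ Set.range (strMap e M) →
        (j : ℝ) < M ((m:ℝ)+1) ((n:ℝ) + 2*(2 * M 3 0)) + (2 * M 3 0) := by
      intro M j hj
      obtain ⟨σ, hσ⟩ := hj
      have heq : strMap e M σ = Quotient.mk (asympSetoid e) (rep (xs j)) := by
        rw [hrepx]
        exact hσ
      have hrel : Metric.hausdorffEDist (σ.1 '' Ici 0) ((rep (xs j)).1 '' Ici 0) ≠ ⊤ :=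
        Quotient.exact heq
      have hrel' : Metric.hausdorffEDist ((rep (xs j)).1 '' Ici 0) (σ.1 '' Ici 0) ≠ ⊤ := by
        rwa [Metric.hausdorffEDist_comm] at hrel
      have hclose : ∀ u, 0 ≤ u → dist ((rep (xs j)).1 u) (σ.1 u) ≤ 2 * M 3 0 :=
        ray_close_of_asymp hX (rep (xs j)).2.1 (rep (xs j)).2.2.1
          σ.2.1 σ.2.2.1 σ.2.2.2 hrel'
      have hδ0 : 0 ≤ 2 * M 3 0 := le_trans dist_nonneg (hclose 0 le_rfl)
      have hM' : IsMorseOn (fun k c => M k (c + 2*(2 * M 3 0)) + (2 * M 3 0))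
          (rep (xs j)).1 (Ici 0) :=
        morse_transfer σ.2.2.2 hδ0 hclose
      have hB : MorseBdd (rep (xs j)).1 ((m:ℝ)+1) (n:ℝ)
          (M ((m:ℝ)+1) ((n:ℝ) + 2*(2 * M 3 0)) + (2 * M 3 0)) :=
        isMorseOn_bdd hM' (by push_cast; linarith [Nat.cast_nonneg (α := ℝ) m])
          (Nat.cast_nonneg n)
      by_contra hlt
      push_neg at hlt
      exact hxs j (hB.mono hlt)
    -- the set A of selected points: every subset is closed
    set A := Set.range xs with hA
    have hsubclosed : ∀ S : Set (MorseBoundary e), S ⊆ A → IsClosed S := by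
      intro S hSA
      rw [← isOpen_compl_iff]
      show IsOpen[⨆ N : ℝ → ℝ → ℝ, TopologicalSpace.coinduced (strMap e N) inferInstance] Sᶜ
      refine isOpen_iSup_iff.mpr fun M => ?_
      rw [isOpen_coinduced]
      show IsOpen (strMap e M ⁻¹' Sᶜ)
      rw [Set.preimage_compl, isOpen_compl_iff]
      -- the preimage of S is a finite union of fibers
      have hpre : strMap e M ⁻¹' S =
          ⋃ j ∈ {j : ℕ | xs j ∈ S ∧ (j:ℝ) < M ((m:ℝ)+1) ((n:ℝ) + 2*(2 * M 3 0)) + (2 * M 3 0)},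
            {σ : stratumRays X e M | strMap e M σ = xs j} := by
        ext σ
        simp only [mem_preimage, mem_iUnion, mem_setOf_eq]
        constructor
        · intro hσS
          obtain ⟨j, hj⟩ := hSA hσS
          refine ⟨j, ⟨by rw [hj]; exact hσS, hfin M j ⟨σ, hj.symm⟩⟩, hj.symm⟩
        · rintro ⟨j, ⟨hjS, _⟩, hjσ⟩
          rwa [hjσ]
      rw [hpre]
      have hTfin : {j : ℕ | xs j ∈ S ∧
          (j:ℝ) < M ((m:ℝ)+1) ((n:ℝ) + 2*(2 * M 3 0)) + (2 * M 3 0)}.Finite := by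
        apply Set.Finite.subset (Set.finite_Iio
          (Nat.ceil (M ((m:ℝ)+1) ((n:ℝ) + 2*(2 * M 3 0)) + (2 * M 3 0)) + 1))
        intro j hj
        simp only [mem_Iio]
        have h1 : (j:ℝ) < M ((m:ℝ)+1) ((n:ℝ) + 2*(2 * M 3 0)) + (2 * M 3 0) := hj.2
        have h2 : (j:ℝ) ≤ (Nat.ceil (M ((m:ℝ)+1) ((n:ℝ) + 2*(2 * M 3 0)) + (2 * M 3 0)) : ℝ) :=
          le_trans (le_of_lt h1) (Nat.le_ceil _)
        have h3 : j ≤ Nat.ceil (M ((m:ℝ)+1) ((n:ℝ) + 2*(2 * M 3 0)) + (2 * M 3 0)) := by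
          exact_mod_cast h2
        omega
      exact hTfin.isClosed_biUnion fun j _ => fiber_closed hX e M (xs j)
    -- A is compact and discrete, hence finite
    have hAK : A ⊆ K := by
      rintro x ⟨j, rfl⟩
      exact hxsK j
    have hAclosed : IsClosed A := hsubclosed A subset_rfl
    have hAcomp : IsCompact A := hK.of_isClosed_subset hAclosed hAK
    have hAfin : A.Finite := by
      have hcover : A ⊆ ⋃ a : MorseBoundary e, (A \ {a})ᶜ := by
        intro x hx
        exact mem_iUnion.mpr ⟨x, fun h => h.2 rfl⟩
      obtain ⟨t, ht⟩ := hAcomp.elim_finite_subcover (fun a => (A \ {a})ᶜ)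
        (fun a => (hsubclosed (A \ {a}) diff_subset).isOpen_compl) hcover
      apply Set.Finite.subset t.finite_toSet
      intro x hx
      obtain ⟨a, hat, hxa⟩ := mem_iUnion₂.mp (ht hx)
      have : x = a := by
        by_contra hne'
        exact hxa ⟨hx, hne'⟩
      rwa [this]
    -- pigeonhole: some value is attained infinitely often
    have hinf : ∃ x : MorseBoundary e, {j : ℕ | xs j = x}.Infinite := by
      by_contra hfib
      push_neg at hfib
      have : (Set.univ : Set ℕ).Finite := by
        have huniv : (Set.univ : Set ℕ) = ⋃ x ∈ A, {j : ℕ | xs j = x} := by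
          ext j
          simp only [mem_univ, true_iff, mem_iUnion, mem_setOf_eq]
          exact ⟨xs j, ⟨j, rfl⟩, rfl⟩
        rw [huniv]
        exact hAfin.biUnion fun x _ => hfib x
      exact Set.infinite_univ this
    obtain ⟨x, hxinf⟩ := hinf
    obtain ⟨G, hG⟩ := (rep x).2.2.2
    have hBx : MorseBdd (rep x).1 ((m:ℝ)+1) (n:ℝ) (G ((m:ℝ)+1) (n:ℝ)) :=
      isMorseOn_bdd hG (by push_cast; linarith [Nat.cast_nonneg (α := ℝ) m])
        (Nat.cast_nonneg n)
    obtain ⟨j, hjfib, hjgt⟩ := hxinf.exists_gt (Nat.ceil (G ((m:ℝ)+1) (n:ℝ)))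
    have hle : G ((m:ℝ)+1) (n:ℝ) ≤ (j:ℝ) := by
      calc G ((m:ℝ)+1) (n:ℝ) ≤ (Nat.ceil (G ((m:ℝ)+1) (n:ℝ)) : ℝ) := Nat.le_ceil _
        _ ≤ (j:ℝ) := by exact_mod_cast le_of_lt hjgt
    apply hxs j
    rw [show xs j = x from hjfib]
    exact hBx.mono hle
end

section
/- Let X be a geodesic metric space, γ' an N'-Morse geodesic with endpoints x'', y'', and let x, y ∈ X with d(x, x'') ≤ D and d(y, y'') ≤ D. Then there exists a Morse gauge N'' depending only on N' and D such that any geodesic [x,y] from x to y is N''-Morse. -/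
open Set Metric Filter

lemma concat_qg_s10 {X : Type*} [MetricSpace X] (K C M0 : ℝ) (hK : 1 ≤ K) (hC : 0 ≤ C)
    (hM0 : 0 ≤ M0) (q : ℝ → X) (m1 m2 : ℝ) (hm : m1 ≤ m2)
    (hq : IsQuasigeodesicOn K C q (Icc m1 m2))
    (g1 g2 : ℝ → X) (d1 d2 : ℝ) (hd10 : 0 ≤ d1) (hd1 : d1 ≤ M0) (hd20 : 0 ≤ d2) (hd2 : d2 ≤ M0)
    (hg1 : IsGeodesicOn g1 (Icc 0 d1)) (hg2 : IsGeodesicOn g2 (Icc 0 d2))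
    (hj1 : g1 d1 = q m1) (hj2 : g2 0 = q m2) :
    ∃ Φ : ℝ → X,
      IsQuasigeodesicOn K (C + 4 * M0) Φ (Icc (m1 - d1) (m2 + d2)) ∧
      Φ (m1 - d1) = g1 0 ∧ Φ (m2 + d2) = g2 d2 ∧
      (∀ r ∈ Icc m1 m2, Φ r = q r) ∧
      (Φ '' Icc (m1 - d1) (m2 + d2) ⊆ (g1 '' Icc 0 d1 ∪ q '' Icc m1 m2) ∪ g2 '' Icc 0 d2) ∧
      (∀ s ∈ Icc (m1 - d1) (m2 + d2), ∀ t ∈ Icc (m1 - d1) (m2 + d2),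
        dist (Φ s) (Φ t) ≤ K * |s - t| + C) := by
  have hK0 : (0:ℝ) < K := by linarith
  set Φ : ℝ → X := fun r => if r < m1 then g1 (r - m1 + d1) else if r ≤ m2 then q r
    else g2 (r - m2) with hΦdef
  have hval1 : ∀ r, r < m1 → Φ r = g1 (r - m1 + d1) := by
    intro r h; simp only [hΦdef]; rw [if_pos h]
  have hval2 : ∀ r, ¬ r < m1 → r ≤ m2 → Φ r = q r := by
    intro r h1 h2; simp only [hΦdef]; rw [if_neg h1, if_pos h2]
  have hval3 : ∀ r, ¬ r < m1 → ¬ r ≤ m2 → Φ r = g2 (r - m2) := by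
    intro r h1 h2; simp only [hΦdef]; rw [if_neg h1, if_neg h2]
  have hmid : ∀ r ∈ Icc m1 m2, Φ r = q r := fun r hr => hval2 r (not_lt.2 hr.1) hr.2
  have key : ∀ r ∈ Icc (m1 - d1) (m2 + d2),
      ∃ cr ∈ Icc m1 m2, dist (Φ r) (q cr) = |r - cr| ∧ |r - cr| ≤ M0 := by
    intro r hr
    by_cases h1 : r < m1
    · refine ⟨m1, ⟨le_rfl, hm⟩, ?_, ?_⟩
      · rw [hval1 r h1, ← hj1,
          hg1 _ ⟨by linarith [hr.1], by linarith⟩ d1 ⟨hd10, le_rfl⟩]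
        congr 1; ring
      · rw [abs_of_nonpos (by linarith)]; linarith [hr.1]
    · by_cases h2 : r ≤ m2
      · exact ⟨r, ⟨not_lt.1 h1, h2⟩, by rw [hval2 r h1 h2]; simp, by simpa using hM0⟩
      · refine ⟨m2, ⟨hm, le_rfl⟩, ?_, ?_⟩
        · rw [hval3 r h1 h2, ← hj2,
            hg2 _ ⟨by linarith [not_le.1 h2], by linarith [hr.2]⟩ 0 ⟨le_rfl, hd20⟩]
          congr 1; ring
        · rw [abs_of_nonneg (by linarith [not_le.1 h2])]; linarith [hr.2]
  have upper : ∀ s ∈ Icc (m1 - d1) (m2 + d2), ∀ t ∈ Icc (m1 - d1) (m2 + d2), s ≤ t →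
      dist (Φ s) (Φ t) ≤ K * (t - s) + C := by
    intro s hs t ht hst
    by_cases hs1 : s < m1
    · have hds : dist (Φ s) (q m1) = m1 - s := by
        rw [hval1 s hs1, ← hj1,
          hg1 _ ⟨by linarith [hs.1], by linarith⟩ d1 ⟨hd10, le_rfl⟩]
        rw [show s - m1 + d1 - d1 = s - m1 by ring, abs_of_nonpos (by linarith)]; ring
      by_cases ht1 : t < m1
      · rw [hval1 s hs1, hval1 t ht1,
          hg1 _ ⟨by linarith [hs.1], by linarith⟩ _ ⟨by linarith [ht.1], by linarith⟩,
          show s - m1 + d1 - (t - m1 + d1) = s - t by ring, abs_of_nonpos (by linarith)]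
        nlinarith [mul_nonneg (sub_nonneg.2 hK) (sub_nonneg.2 hst)]
      · by_cases ht2 : t ≤ m2
        · have hmt := (hq m1 ⟨le_rfl, hm⟩ t ⟨not_lt.1 ht1, ht2⟩).2
          rw [abs_sub_comm, abs_of_nonneg (by linarith [not_lt.1 ht1])] at hmt
          have tri := dist_triangle (Φ s) (q m1) (Φ t)
          rw [hval2 t ht1 ht2]
          rw [hval2 t ht1 ht2] at tri
          nlinarith [mul_nonneg (sub_nonneg.2 hK) (sub_nonneg.2 hs1.le)]
        · have hmm := (hq m1 ⟨le_rfl, hm⟩ m2 ⟨hm, le_rfl⟩).2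
          rw [abs_sub_comm, abs_of_nonneg (by linarith)] at hmm
          have hdt : dist (q m2) (Φ t) = t - m2 := by
            rw [hval3 t ht1 ht2, ← hj2, dist_comm,
              hg2 _ ⟨by linarith [not_le.1 ht2], by linarith [ht.2]⟩ 0 ⟨le_rfl, hd20⟩,
              show t - m2 - 0 = t - m2 by ring, abs_of_nonneg (by linarith [not_le.1 ht2])]
          have tri := dist_triangle4 (Φ s) (q m1) (q m2) (Φ t)
          nlinarith [mul_nonneg (sub_nonneg.2 hK) (sub_nonneg.2 hs1.le),
            mul_nonneg (sub_nonneg.2 hK) (sub_nonneg.2 (not_le.1 ht2).le)]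
    · have hsm1 : m1 ≤ s := not_lt.1 hs1
      by_cases hs2 : s ≤ m2
      · by_cases ht2 : t ≤ m2
        · rw [hval2 s hs1 hs2, hval2 t (not_lt.2 (hsm1.trans hst)) ht2]
          have := (hq s ⟨hsm1, hs2⟩ t ⟨hsm1.trans hst, ht2⟩).2
          rw [abs_sub_comm, abs_of_nonneg (by linarith)] at this
          linarith
        · have hsmm := (hq s ⟨hsm1, hs2⟩ m2 ⟨hm, le_rfl⟩).2
          rw [abs_sub_comm, abs_of_nonneg (by linarith)] at hsmm
          have hdt : dist (q m2) (Φ t) = t - m2 := by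
            rw [hval3 t (not_lt.2 (hsm1.trans hst)) ht2, ← hj2, dist_comm,
              hg2 _ ⟨by linarith [not_le.1 ht2], by linarith [ht.2]⟩ 0 ⟨le_rfl, hd20⟩,
              show t - m2 - 0 = t - m2 by ring, abs_of_nonneg (by linarith [not_le.1 ht2])]
          have tri := dist_triangle (Φ s) (q m2) (Φ t)
          rw [hval2 s hs1 hs2] at tri ⊢
          nlinarith [mul_nonneg (sub_nonneg.2 hK) (sub_nonneg.2 (not_le.1 ht2).le)]
      · have ht2 : ¬ t ≤ m2 := fun h => hs2 (hst.trans h)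
        rw [hval3 s hs1 hs2, hval3 t (not_lt.2 (hsm1.trans hst)) ht2,
          hg2 _ ⟨by linarith [not_le.1 hs2], by linarith [hs.2]⟩ _
            ⟨by linarith [not_le.1 ht2], by linarith [ht.2]⟩,
          show s - m2 - (t - m2) = s - t by ring, abs_of_nonpos (by linarith)]
        nlinarith [mul_nonneg (sub_nonneg.2 hK) (sub_nonneg.2 hst)]
  have upperAbs : ∀ s ∈ Icc (m1 - d1) (m2 + d2), ∀ t ∈ Icc (m1 - d1) (m2 + d2),
      dist (Φ s) (Φ t) ≤ K * |s - t| + C := by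
    intro s hs t ht
    rcases le_total s t with h | h
    · rw [abs_sub_comm, abs_of_nonneg (by linarith)]
      exact upper s hs t ht h
    · rw [abs_of_nonneg (by linarith), dist_comm]
      exact upper t ht s hs h
  have hQG : IsQuasigeodesicOn K (C + 4 * M0) Φ (Icc (m1 - d1) (m2 + d2)) := by
    intro s hs t ht
    obtain ⟨cs, hcs, hds, hbs⟩ := key s hs
    obtain ⟨ct, hct, hdt, hbt⟩ := key t ht
    have hqq := (hq cs hcs ct hct).1
    constructor
    · have tri1 : dist (q cs) (q ct) ≤ |s - cs| + dist (Φ s) (Φ t) + |t - ct| := by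
        have h4 := dist_triangle4 (q cs) (Φ s) (Φ t) (q ct)
        rw [dist_comm (q cs) (Φ s), hds, hdt] at h4
        linarith
      have habs : |s - t| ≤ |s - cs| + |cs - ct| + |ct - t| := by
        have h1 := abs_sub_le s cs t
        have h2 := abs_sub_le cs ct t
        linarith
      have hct' : |ct - t| = |t - ct| := abs_sub_comm _ _
      have hinv0 : (0:ℝ) ≤ 1 / K := by positivity
      have e1 : (1/K) * |s - t| ≤ (1/K) * (|s - cs| + |cs - ct| + |ct - t|) :=
        mul_le_mul_of_nonneg_left habs hinv0
      have e2 : (1/K) * (|s - cs| + |cs - ct| + |ct - t|)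
          = (1/K) * |s - cs| + (1/K) * |cs - ct| + (1/K) * |ct - t| := by ring
      have hKinv1 : 1/K ≤ 1 := by rw [div_le_one hK0]; exact hK
      have e3 : (1/K) * |s - cs| ≤ |s - cs| := by
        nlinarith [abs_nonneg (s - cs)]
      have e4 : (1/K) * |ct - t| ≤ |ct - t| := by
        nlinarith [abs_nonneg (ct - t)]
      linarith
    · have := upperAbs s hs t ht
      linarith
  have hA : Φ (m1 - d1) = g1 0 := by
    rcases eq_or_lt_of_le hd10 with h | h
    · subst h
      rw [sub_zero, hval2 m1 (lt_irrefl m1) hm]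
      exact hj1.symm
    · rw [hval1 _ (by linarith)]; congr 1; ring
  have hB : Φ (m2 + d2) = g2 d2 := by
    rcases eq_or_lt_of_le hd20 with h | h
    · subst h
      rw [add_zero, hval2 m2 (not_lt.2 hm) le_rfl]
      exact hj2.symm
    · rw [hval3 _ (not_lt.2 (by linarith)) (by linarith)]; congr 1; ring
  have him : Φ '' Icc (m1 - d1) (m2 + d2) ⊆ (g1 '' Icc 0 d1 ∪ q '' Icc m1 m2) ∪ g2 '' Icc 0 d2 := by
    rintro _ ⟨r, hr, rfl⟩
    by_cases h1 : r < m1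
    · exact Or.inl (Or.inl ⟨r - m1 + d1, ⟨by linarith [hr.1], by linarith⟩, (hval1 r h1).symm⟩)
    · by_cases h2 : r ≤ m2
      · exact Or.inl (Or.inr ⟨r, ⟨not_lt.1 h1, h2⟩, (hval2 r h1 h2).symm⟩)
      · exact Or.inr ⟨r - m2, ⟨by linarith [not_le.1 h2], by linarith [hr.2]⟩, (hval3 r h1 h2).symm⟩
  exact ⟨Φ, hQG, hA, hB, hmid, him, upperAbs⟩

/-- moving the endpoints of an N'-Morse geodesic a distance at most D
yields uniformly Morse geodesics: there is a gauge N'' = N''(N',D) such that any geodesic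
between the moved endpoints is N''-Morse. -/
theorem stmt10 (N' : ℝ → ℝ → ℝ) (hN' : MorseGauge N') (D : ℝ) (hD : 0 ≤ D) :
    ∃ N'' : ℝ → ℝ → ℝ, MorseGauge N'' ∧
      ∀ (X : Type) [MetricSpace X], GeodesicSpace X →
      ∀ (γ' : ℝ → X) (a b : ℝ), a ≤ b →
        IsGeodesicOn γ' (Icc a b) → IsMorseOn N' γ' (Icc a b) →
      ∀ x y : X, dist x (γ' a) ≤ D → dist y (γ' b) ≤ D →
      ∀ (σ : ℝ → X) (L : ℝ), L = dist x y →
        IsGeodesicOn σ (Icc 0 L) → σ 0 = x → σ L = y →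
        IsMorseOn N'' σ (Icc 0 L) := by
  have hM0 : 0 ≤ N' 1 (4 * D) := hN' 1 (4 * D) le_rfl (by linarith)
  refine ⟨fun K C => N' K (C + 4 * N' 1 (4 * D)) + 2 * N' 1 (4 * D) + D, ?_, ?_⟩
  · intro K C hK hC
    have := hN' K (C + 4 * N' 1 (4 * D)) hK (by linarith)
    show (0:ℝ) ≤ N' K (C + 4 * N' 1 (4 * D)) + 2 * N' 1 (4 * D) + D
    linarith
  · intro X _ hGeo γ' a b hab hgeo hMorse x y hx hy σ L hL hσ hσ0 hσL
    have hL0 : 0 ≤ L := hL ▸ dist_nonneg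
    have hσq : IsQuasigeodesicOn 1 0 σ (Icc 0 L) := by
      intro s hs t ht
      rw [hσ s hs t ht]
      constructor <;> norm_num
    obtain ⟨g1, hg1, hg10, hg1e⟩ := hGeo (γ' a) x
    obtain ⟨g2, hg2, hg20, hg2e⟩ := hGeo y (γ' b)
    have hd1D : dist (γ' a) x ≤ D := by rw [dist_comm]; exact hx
    obtain ⟨Ψ, hΨq, hΨA, hΨB, hΨmid, hΨim, hΨup⟩ :=
      concat_qg_s10 1 0 D le_rfl le_rfl hD σ 0 L hL0 hσq g1 g2 (dist (γ' a) x) (dist y (γ' b))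
        dist_nonneg hd1D dist_nonneg hy hg1 hg2 (by rw [hg1e, hσ0]) (by rw [hg20, hσL])
    have hAB : 0 - dist (γ' a) x ≤ L + dist y (γ' b) := by
      have := dist_nonneg (x := γ' a) (y := x)
      have := dist_nonneg (x := y) (y := γ' b)
      linarith
    have hΨnb : Ψ '' Icc (0 - dist (γ' a) x) (L + dist y (γ' b)) ⊆
        nbhd (γ' '' Icc a b) (N' 1 (0 + 4 * D)) :=
      hMorse 1 (0 + 4 * D) le_rfl (by linarith) Ψ _ _ hAB hΨq
        ⟨a, ⟨le_rfl, hab⟩, by rw [hΨA, hg10]⟩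
        ⟨b, ⟨hab, le_rfl⟩, by rw [hΨB, hg2e]⟩
    rw [zero_add] at hΨnb
    have hσnb : ∀ s ∈ Icc 0 L, ∃ u ∈ Icc a b, dist (σ s) (γ' u) ≤ N' 1 (4 * D) := by
      intro s hs
      have hsm : s ∈ Icc (0 - dist (γ' a) x) (L + dist y (γ' b)) := by
        constructor
        · linarith [hs.1, dist_nonneg (x := γ' a) (y := x)]
        · linarith [hs.2, dist_nonneg (x := y) (y := γ' b)]
      obtain ⟨z, ⟨u, hu, rfl⟩, hz⟩ := hΨnb ⟨s, hsm, hΨmid s hs⟩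
      exact ⟨u, hu, hz⟩
    -- reverse containment : γ' is near σ
    have hrev : ∀ w ∈ Icc a b, ∃ z ∈ σ '' Icc 0 L,
        dist (γ' w) z ≤ 2 * N' 1 (4 * D) + D := by
      intro w hw
      have hlip : ContinuousOn (fun p => dist (Ψ p) (γ' a))
          (Icc (0 - dist (γ' a) x) (L + dist y (γ' b))) := by
        have : LipschitzOnWith 1 (fun p => dist (Ψ p) (γ' a))
            (Icc (0 - dist (γ' a) x) (L + dist y (γ' b))) := by
          rw [lipschitzOnWith_iff_dist_le_mul]
          intro p hp p' hp'
          have h1 : dist (dist (Ψ p) (γ' a)) (dist (Ψ p') (γ' a)) ≤ dist (Ψ p) (Ψ p') := by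
            rw [Real.dist_eq]
            exact abs_dist_sub_le _ _ _
          have h2 := hΨup p hp p' hp'
          rw [NNReal.coe_one, one_mul, Real.dist_eq]
          calc dist (dist (Ψ p) (γ' a)) (dist (Ψ p') (γ' a)) ≤ dist (Ψ p) (Ψ p') := h1
            _ ≤ 1 * |p - p'| + 0 := h2
            _ = |p - p'| := by ring
        exact this.continuousOn
      have hA' : dist (Ψ (0 - dist (γ' a) x)) (γ' a) = 0 := by
        rw [hΨA, hg10, dist_self]
      have hB' : dist (Ψ (L + dist y (γ' b))) (γ' b) = 0 := by
        rw [hΨB, hg2e, dist_self]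
      have hB'' : dist (Ψ (L + dist y (γ' b))) (γ' a) = b - a := by
        rw [hΨB, hg2e, hgeo b ⟨hab, le_rfl⟩ a ⟨le_rfl, hab⟩, abs_of_nonneg (by linarith)]
      have hIVT := intermediate_value_Icc hAB hlip
      have hmem : w - a ∈ Icc (dist (Ψ (0 - dist (γ' a) x)) (γ' a))
          (dist (Ψ (L + dist y (γ' b))) (γ' a)) := by
        rw [hA', hB'']
        exact ⟨by linarith [hw.1], by linarith [hw.2]⟩
      obtain ⟨p, hp, hpw'⟩ := hIVT hmem
      have hpw : dist (Ψ p) (γ' a) = w - a := hpw'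
      obtain ⟨z, ⟨w', hw', rfl⟩, hz⟩ := hΨnb ⟨p, hp, rfl⟩
      have h1 : dist (γ' w') (γ' a) = w' - a := by
        rw [hgeo w' hw' a ⟨le_rfl, hab⟩, abs_of_nonneg (by linarith [hw'.1])]
      have h2 : |dist (Ψ p) (γ' a) - dist (γ' w') (γ' a)| ≤ dist (Ψ p) (γ' w') :=
        abs_dist_sub_le _ _ _
      have h4 : |w - w'| ≤ N' 1 (4 * D) := by
        rw [hpw, h1, show w - a - (w' - a) = w - w' by ring] at h2
        exact h2.trans hz
      have h3 : dist (γ' w) (Ψ p) ≤ 2 * N' 1 (4 * D) := by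
        have hd : dist (γ' w) (γ' w') = |w - w'| := hgeo w hw w' hw'
        calc dist (γ' w) (Ψ p) ≤ dist (γ' w) (γ' w') + dist (γ' w') (Ψ p) :=
              dist_triangle _ _ _
          _ = |w - w'| + dist (Ψ p) (γ' w') := by rw [hd, dist_comm]
          _ ≤ 2 * N' 1 (4 * D) := by linarith
      rcases hΨim ⟨p, hp, rfl⟩ with (hg | hq') | hg2'
      · obtain ⟨u, hu, heq⟩ := hg
        refine ⟨σ 0, ⟨0, ⟨le_rfl, hL0⟩, rfl⟩, ?_⟩
        have hud : dist (Ψ p) (σ 0) ≤ D := by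
          rw [← heq, hσ0, ← hg1e, hg1 u hu _ ⟨dist_nonneg, le_rfl⟩,
            abs_of_nonpos (by linarith [hu.2])]
          linarith [hu.1, hd1D]
        calc dist (γ' w) (σ 0) ≤ dist (γ' w) (Ψ p) + dist (Ψ p) (σ 0) := dist_triangle _ _ _
          _ ≤ 2 * N' 1 (4 * D) + D := by linarith
      · obtain ⟨u, hu, heq⟩ := hq'
        refine ⟨σ u, ⟨u, hu, rfl⟩, ?_⟩
        rw [heq]
        linarith
      · obtain ⟨u, hu, heq⟩ := hg2'
        refine ⟨σ L, ⟨L, ⟨hL0, le_rfl⟩, rfl⟩, ?_⟩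
        have hud : dist (Ψ p) (σ L) ≤ D := by
          rw [← heq, hσL, ← hg20, hg2 u hu 0 ⟨le_rfl, dist_nonneg⟩,
            abs_of_nonneg (by linarith [hu.1])]
          linarith [hu.2, hy]
        calc dist (γ' w) (σ L) ≤ dist (γ' w) (Ψ p) + dist (Ψ p) (σ L) := dist_triangle _ _ _
          _ ≤ 2 * N' 1 (4 * D) + D := by linarith
    -- main Morse property
    intro K C hK hC q a0 b0 hab0 hq hqa hqb
    obtain ⟨s, hs, hqs⟩ := hqa
    obtain ⟨t, ht, hqt⟩ := hqb
    obtain ⟨u, hu, hus⟩ := hσnb s hs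
    obtain ⟨v, hv, hvt⟩ := hσnb t ht
    obtain ⟨G1, hG1, hG10, hG1e⟩ := hGeo (γ' u) (σ s)
    obtain ⟨G2, hG2, hG20, hG2e⟩ := hGeo (σ t) (γ' v)
    have he1 : dist (γ' u) (σ s) ≤ N' 1 (4 * D) := by rw [dist_comm]; exact hus
    obtain ⟨Φ, hΦq, hΦA, hΦB, hΦmid, hΦim, hΦup⟩ :=
      concat_qg_s10 K C (N' 1 (4 * D)) hK hC hM0 q a0 b0 hab0 hq G1 G2
        (dist (γ' u) (σ s)) (dist (σ t) (γ' v)) dist_nonneg he1 dist_nonneg hvt hG1 hG2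
        (by rw [hG1e, hqs]) (by rw [hG20, hqt])
    have hAB' : a0 - dist (γ' u) (σ s) ≤ b0 + dist (σ t) (γ' v) := by
      have := dist_nonneg (x := γ' u) (y := σ s)
      have := dist_nonneg (x := σ t) (y := γ' v)
      linarith
    have hΦnb : Φ '' Icc (a0 - dist (γ' u) (σ s)) (b0 + dist (σ t) (γ' v)) ⊆
        nbhd (γ' '' Icc a b) (N' K (C + 4 * N' 1 (4 * D))) :=
      hMorse K (C + 4 * N' 1 (4 * D)) hK (by linarith) Φ _ _ hAB' hΦq
        ⟨u, hu, by rw [hΦA, hG10]⟩ ⟨v, hv, by rw [hΦB, hG2e]⟩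
    rintro _ ⟨r, hr, rfl⟩
    have hrm : r ∈ Icc (a0 - dist (γ' u) (σ s)) (b0 + dist (σ t) (γ' v)) := by
      constructor
      · linarith [hr.1, dist_nonneg (x := γ' u) (y := σ s)]
      · linarith [hr.2, dist_nonneg (x := σ t) (y := γ' v)]
    obtain ⟨z, ⟨w, hw, rfl⟩, hz⟩ := hΦnb ⟨r, hrm, rfl⟩
    obtain ⟨z', hz', hz'd⟩ := hrev w hw
    refine ⟨z', hz', ?_⟩
    have hΦr : Φ r = q r := hΦmid r hr
    show dist (q r) z' ≤ N' K (C + 4 * N' 1 (4 * D)) + 2 * N' 1 (4 * D) + D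
    calc dist (q r) z' ≤ dist (q r) (γ' w) + dist (γ' w) z' := dist_triangle _ _ _
      _ ≤ N' K (C + 4 * N' 1 (4 * D)) + (2 * N' 1 (4 * D) + D) := by
          rw [← hΦr]; exact add_le_add hz hz'd
      _ = N' K (C + 4 * N' 1 (4 * D)) + 2 * N' 1 (4 * D) + D := by ring
end

section
/- Let X be a geodesic metric space with basepoint e, and for a Morse gauge N let X_e^{(N)} be the set of points y ∈ X such that some geodesic [e,y] is N-Morse. Then X_e^{(N)}, with the restricted metric, is 8·N(3,0)-hyperbolic in the four-point Gromov product sense: for all w,x,y,z ∈ X_e^{(N)}, (x·y)_w ≥ min{(x·z)_w, (z·y)_w} − 8·N(3,0). -/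
open Set Metric Filter

/-- The set of points joined to `e` by an N-Morse geodesic. -/
def stratum {X : Type*} [MetricSpace X] (N : ℝ → ℝ → ℝ) (e : X) : Set X :=
  {y | ∃ (γ : ℝ → X) (L : ℝ), 0 ≤ L ∧ IsGeodesicOn γ (Icc 0 L) ∧
    γ 0 = e ∧ γ L = y ∧ IsMorseOn N γ (Icc 0 L)}

/-- The Gromov product `(x·y)_w`. -/
noncomputable def gromovProd {X : Type*} [MetricSpace X] (w x y : X) : ℝ :=
  (dist w x + dist w y - dist x y) / 2

namespace Stmt13Aux

variable {X : Type*} [MetricSpace X]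

lemma gp_comm (w x y : X) : gromovProd w x y = gromovProd w y x := by
  unfold gromovProd; rw [dist_comm x y]; ring

lemma gp_nonneg (w x y : X) : 0 ≤ gromovProd w x y := by
  have h := dist_triangle x w y
  unfold gromovProd
  rw [dist_comm x w] at h
  linarith

lemma gp_le_left (w x y : X) : gromovProd w x y ≤ dist w x := by
  have h := dist_triangle w x y
  unfold gromovProd; linarith

lemma gp_mono {α : ℝ → X} {L t : ℝ} (hα : IsGeodesicOn α (Icc 0 L))
    (ht : t ∈ Icc 0 L) (w : X) :
    gromovProd (α 0) (α t) w ≤ gromovProd (α 0) (α L) w := by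
  have hL : 0 ≤ L := le_trans ht.1 ht.2
  have h0 : (0:ℝ) ∈ Icc 0 L := ⟨le_rfl, hL⟩
  have hLm : L ∈ Icc 0 L := ⟨hL, le_rfl⟩
  have d1 : dist (α 0) (α t) = t := by
    rw [hα 0 h0 t ht, zero_sub, abs_neg, abs_of_nonneg ht.1]
  have d2 : dist (α 0) (α L) = L := by
    rw [hα 0 h0 L hLm, zero_sub, abs_neg, abs_of_nonneg hL]
  have d3 : dist (α t) (α L) = L - t := by
    rw [hα t ht L hLm, abs_of_nonpos (by linarith [ht.2]), neg_sub]
  have htr : dist (α L) w ≤ dist (α L) (α t) + dist (α t) w := dist_triangle _ _ _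
  rw [dist_comm (α L) (α t), d3] at htr
  unfold gromovProd
  rw [d1, d2]
  linarith

lemma gp_le_dist_geo {σ : ℝ → X} {M v : ℝ} (hσ : IsGeodesicOn σ (Icc 0 M))
    (hv : v ∈ Icc 0 M) (e : X) :
    gromovProd e (σ 0) (σ M) ≤ dist e (σ v) := by
  have hM : 0 ≤ M := le_trans hv.1 hv.2
  have h0 : (0:ℝ) ∈ Icc 0 M := ⟨le_rfl, hM⟩
  have hMm : M ∈ Icc 0 M := ⟨hM, le_rfl⟩
  have d1 : dist (σ 0) (σ v) = v := by
    rw [hσ 0 h0 v hv, zero_sub, abs_neg, abs_of_nonneg hv.1]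
  have d2 : dist (σ v) (σ M) = M - v := by
    rw [hσ v hv M hMm, abs_of_nonpos (by linarith [hv.2]), neg_sub]
  have d3 : dist (σ 0) (σ M) = M := by
    rw [hσ 0 h0 M hMm, zero_sub, abs_neg, abs_of_nonneg hM]
  have t1 : dist e (σ 0) ≤ dist e (σ v) + v := by
    have := dist_triangle e (σ v) (σ 0)
    rw [dist_comm (σ v) (σ 0), d1] at this
    linarith
  have t2 : dist e (σ M) ≤ dist e (σ v) + (M - v) := by
    have := dist_triangle e (σ v) (σ M)
    rw [d2] at this
    linarith
  unfold gromovProd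
  rw [d3]
  linarith

lemma concat_qg {η σ' : ℝ → X} {h L : ℝ} (hh : 0 ≤ h) (hL : 0 ≤ L)
    (hη : IsGeodesicOn η (Icc 0 h)) (hσ : IsGeodesicOn σ' (Icc 0 L))
    (hjoin : η h = σ' 0)
    (hmin : ∀ u ∈ Icc 0 L, h ≤ dist (η 0) (σ' u)) :
    IsQuasigeodesicOn 3 0 (fun s => if s ≤ h then η s else σ' (s - h)) (Icc 0 (h + L)) := by
  have key : ∀ s ∈ Icc 0 (h+L), ∀ t ∈ Icc 0 (h+L), s ≤ t →
      (1/3 : ℝ) * |s - t| - 0 ≤ dist (if s ≤ h then η s else σ' (s-h)) (if t ≤ h then η t else σ' (t-h)) ∧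
      dist (if s ≤ h then η s else σ' (s-h)) (if t ≤ h then η t else σ' (t-h)) ≤ 3 * |s - t| + 0 := by
    intro s hs t ht hst
    have habs : |s - t| = t - s := by rw [abs_sub_comm, abs_of_nonneg (by linarith)]
    by_cases hsh : s ≤ h
    · by_cases hth : t ≤ h
      · rw [if_pos hsh, if_pos hth, hη s ⟨hs.1, hsh⟩ t ⟨ht.1, hth⟩, habs]
        constructor <;> linarith
      · push_neg at hth
        rw [if_pos hsh, if_neg (not_le.mpr hth)]
        have hvI : t - h ∈ Icc 0 L := ⟨by linarith, by linarith [ht.2]⟩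
        have d1 : dist (η s) (η h) = h - s := by
          rw [hη s ⟨hs.1, hsh⟩ h ⟨hh, le_rfl⟩, abs_of_nonpos (by linarith), neg_sub]
        have d2 : dist (σ' 0) (σ' (t-h)) = t - h := by
          rw [hσ 0 ⟨le_rfl, hL⟩ (t-h) hvI, zero_sub, abs_neg, abs_of_nonneg hvI.1]
        have d3 : dist (η 0) (η s) = s := by
          rw [hη 0 ⟨le_rfl, hh⟩ s ⟨hs.1, hsh⟩, zero_sub, abs_neg, abs_of_nonneg hs.1]
        have hm := hmin (t-h) hvI
        have dj : dist (η s) (σ' 0) = h - s := by rw [← hjoin, d1]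
        have l1 : h - s ≤ dist (η s) (σ' (t-h)) := by
          have htr := dist_triangle (η 0) (η s) (σ' (t-h))
          linarith
        have l2 : (t - h) - (h - s) ≤ dist (η s) (σ' (t-h)) := by
          have htr := dist_triangle (σ' 0) (η s) (σ' (t-h))
          rw [dist_comm (σ' 0) (η s), dj] at htr
          linarith
        have u1 : dist (η s) (σ' (t-h)) ≤ (h - s) + (t - h) := by
          have htr := dist_triangle (η s) (σ' 0) (σ' (t-h))
          linarith
        rw [habs]
        constructor
        · rcases le_total (t - h) (2 * (h - s)) with hc|hc <;> linarith
        · linarith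
    · push_neg at hsh
      have hth : ¬ t ≤ h := by push_neg; linarith
      rw [if_neg (not_le.mpr hsh), if_neg hth]
      have : dist (σ' (s-h)) (σ' (t-h)) = |s - t| := by
        rw [hσ (s-h) ⟨by linarith, by linarith [hs.2]⟩ (t-h) ⟨by linarith [hth], by linarith [ht.2]⟩]
        congr 1; ring
      rw [this, habs]
      constructor <;> linarith
  intro s hs t ht
  rcases le_total s t with hst|hst
  · exact key s hs t ht hst
  · obtain ⟨k1, k2⟩ := key t ht s hs hst
    rw [abs_sub_comm t s, dist_comm] at k1 k2
    exact ⟨k1, k2⟩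


lemma near {N : ℝ → ℝ → ℝ} {e x z : X} {α σ η : ℝ → X} {LX M h v : ℝ}
    (hLX : 0 ≤ LX)
    (hα : IsGeodesicOn α (Icc 0 LX)) (hα0 : α 0 = e) (hαL : α LX = x)
    (hMorse : IsMorseOn N α (Icc 0 LX))
    (hσ : IsGeodesicOn σ (Icc 0 M)) (hσ0 : σ 0 = z) (hσM : σ M = x)
    (hv : v ∈ Icc 0 M)
    (hvmin : ∀ u ∈ Icc 0 M, dist e (σ v) ≤ dist e (σ u))
    (hη : IsGeodesicOn η (Icc 0 h)) (hη0 : η 0 = e) (hηh : η h = σ v)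
    (hh : h = dist e (σ v)) :
    ∀ t ∈ Icc 0 (gromovProd e x z), dist (η t) (α t) ≤ 2 * N 3 0 := by
  have hM : 0 ≤ M := le_trans hv.1 hv.2
  have hh0 : 0 ≤ h := hh ▸ dist_nonneg
  set T := gromovProd e x z with hTdef
  have hT0 : 0 ≤ T := gp_nonneg _ _ _
  have hTh : T ≤ h := by
    have hB := gp_le_dist_geo hσ hv e
    rw [hσ0, hσM] at hB
    rw [hh, hTdef, gp_comm]
    exact hB
  have hdex : dist e x = LX := by
    rw [← hα0, ← hαL, hα 0 ⟨le_rfl, hLX⟩ LX ⟨hLX, le_rfl⟩, zero_sub, abs_neg,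
      abs_of_nonneg hLX]
  have hTLX : T ≤ LX := by
    have := gp_le_left e x z
    rw [hdex] at this
    exact le_trans (le_of_eq rfl) this
  set L := M - v with hLdef
  have hL0 : 0 ≤ L := by simp [hLdef]; linarith [hv.2]
  set σ' : ℝ → X := fun u => σ (v + u) with hσ'def
  have hσ' : IsGeodesicOn σ' (Icc 0 L) := by
    intro s hs t ht
    have := hσ (v+s) ⟨by linarith [hv.1, hs.1], by linarith [hs.2]⟩
      (v+t) ⟨by linarith [hv.1, ht.1], by linarith [ht.2]⟩
    simp only [hσ'def]
    rw [this]
    congr 1; ring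
  have hmin' : ∀ u ∈ Icc 0 L, h ≤ dist (η 0) (σ' u) := by
    intro u hu
    rw [hη0, hh]
    exact hvmin (v+u) ⟨by linarith [hv.1, hu.1], by linarith [hu.2]⟩
  have hjoin : η h = σ' 0 := by
    rw [hηh]; simp only [hσ'def]; rw [add_zero]
  have hq := concat_qg hh0 hL0 hη hσ' hjoin hmin'
  set Q : ℝ → X := fun s => if s ≤ h then η s else σ' (s - h) with hQdef
  have hQ0 : Q 0 = e := by
    simp only [hQdef]
    rw [if_pos hh0, hη0]
  have hQb : Q (h + L) = x := by
    simp only [hQdef]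
    by_cases hc : h + L ≤ h
    · have hLz : L = 0 := le_antisymm (by linarith) hL0
      rw [if_pos hc, hLz, add_zero, hηh]
      have : v = M := by rw [hLdef] at hLz; linarith
      rw [this, hσM]
    · rw [if_neg hc]
      have : h + L - h = L := by ring
      rw [this]
      simp only [hσ'def]
      have : v + L = M := by rw [hLdef]; ring
      rw [this, hσM]
  have hQ0mem : Q 0 ∈ α '' Icc 0 LX := by
    rw [hQ0]; exact ⟨0, ⟨le_rfl, hLX⟩, hα0⟩
  have hQbmem : Q (h + L) ∈ α '' Icc 0 LX := by
    rw [hQb]; exact ⟨LX, ⟨hLX, le_rfl⟩, hαL⟩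
  have hsub := hMorse 3 0 (by norm_num) le_rfl Q 0 (h + L) (by linarith) hq hQ0mem hQbmem
  intro t ht
  have htT : t ≤ T := ht.2
  have ht0 : 0 ≤ t := ht.1
  have hth : t ≤ h := le_trans htT hTh
  have htLX : t ≤ LX := le_trans htT hTLX
  have hQt : Q t = η t := by simp only [hQdef]; rw [if_pos hth]
  have hmem : Q t ∈ Q '' Icc 0 (h + L) := ⟨t, ⟨ht0, by linarith⟩, rfl⟩
  obtain ⟨p, hpmem, hdp⟩ := hsub hmem
  obtain ⟨s, hsI, rfl⟩ := hpmem
  rw [hQt] at hdp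
  have dηt : dist e (η t) = t := by
    rw [← hη0, hη 0 ⟨le_rfl, hh0⟩ t ⟨ht0, hth⟩, zero_sub, abs_neg, abs_of_nonneg ht0]
  have dαs : dist e (α s) = s := by
    rw [← hα0, hα 0 ⟨le_rfl, hLX⟩ s hsI, zero_sub, abs_neg, abs_of_nonneg hsI.1]
  have hst : |s - t| ≤ N 3 0 := by
    have h2 : |dist (α s) e - dist (η t) e| ≤ dist (α s) (η t) := abs_dist_sub_le _ _ _
    rw [dist_comm (α s) e, dist_comm (η t) e, dαs, dηt, dist_comm (α s) (η t)] at h2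
    exact le_trans h2 hdp
  have dst : dist (α s) (α t) = |s - t| := hα s hsI t ⟨ht0, htLX⟩
  calc dist (η t) (α t) ≤ dist (η t) (α s) + dist (α s) (α t) := dist_triangle _ _ _
    _ ≤ N 3 0 + |s - t| := by rw [dst]; linarith
    _ ≤ 2 * N 3 0 := by linarith


lemma ft (hX : GeodesicSpace X) {N : ℝ → ℝ → ℝ} {e x z : X} {α ζ : ℝ → X} {LX LZ : ℝ}
    (hLX : 0 ≤ LX) (hα : IsGeodesicOn α (Icc 0 LX)) (hα0 : α 0 = e) (hαL : α LX = x)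
    (hαM : IsMorseOn N α (Icc 0 LX))
    (hLZ : 0 ≤ LZ) (hζ : IsGeodesicOn ζ (Icc 0 LZ)) (hζ0 : ζ 0 = e) (hζL : ζ LZ = z)
    (hζM : IsMorseOn N ζ (Icc 0 LZ)) :
    ∀ t ∈ Icc 0 (gromovProd e x z), dist (α t) (ζ t) ≤ 4 * N 3 0 := by
  obtain ⟨σ, hσ, hσ0, hσM⟩ := hX z x
  set M := dist z x with hMdef
  have hM0 : 0 ≤ M := dist_nonneg
  have hcont : ContinuousOn (fun u => dist e (σ u)) (Icc 0 M) := by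
    rw [Metric.continuousOn_iff]
    intro b hb ε hε
    refine ⟨ε, hε, fun a ha hab => ?_⟩
    have h2 : |dist (σ a) e - dist (σ b) e| ≤ dist (σ a) (σ b) := abs_dist_sub_le _ _ _
    rw [hσ a ha b hb] at h2
    have h3 : dist (dist e (σ a)) (dist e (σ b)) = |dist e (σ a) - dist e (σ b)| :=
      Real.dist_eq _ _
    rw [dist_comm (σ a) e, dist_comm (σ b) e] at h2
    calc dist (dist e (σ a)) (dist e (σ b)) = |dist e (σ a) - dist e (σ b)| := h3
      _ ≤ |a - b| := h2
      _ = dist a b := (Real.dist_eq a b).symm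
      _ < ε := hab
  obtain ⟨v, hv, hvmin'⟩ := isCompact_Icc.exists_isMinOn (nonempty_Icc.mpr hM0) hcont
  have hvmin : ∀ u ∈ Icc 0 M, dist e (σ v) ≤ dist e (σ u) := fun u hu => hvmin' hu
  obtain ⟨η, hη, hη0, hηh⟩ := hX e (σ v)
  set h := dist e (σ v) with hhdef
  have h1 := near hLX hα hα0 hαL hαM hσ hσ0 hσM hv hvmin hη hη0 hηh rfl
  -- reversed σ
  set σr : ℝ → X := fun u => σ (M - u) with hσrdef
  have hσr : IsGeodesicOn σr (Icc 0 M) := by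
    intro s hs t ht
    have := hσ (M - s) ⟨by linarith [hs.2], by linarith [hs.1]⟩
      (M - t) ⟨by linarith [ht.2], by linarith [ht.1]⟩
    simp only [hσrdef]
    rw [this]
    rw [show M - s - (M - t) = -(s - t) by ring, abs_neg]
  have hσr0 : σr 0 = x := by simp only [hσrdef]; rw [sub_zero, hσM]
  have hσrM : σr M = z := by simp only [hσrdef]; rw [sub_self, hσ0]
  have hvr : M - v ∈ Icc 0 M := ⟨by linarith [hv.2], by linarith [hv.1]⟩
  have hσrv : σr (M - v) = σ v := by
    simp only [hσrdef]; rw [show M - (M - v) = v by ring]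
  have hvminr : ∀ u ∈ Icc 0 M, dist e (σr (M - v)) ≤ dist e (σr u) := by
    intro u hu
    rw [hσrv]
    exact hvmin (M - u) ⟨by linarith [hu.2], by linarith [hu.1]⟩
  have hηhr : η h = σr (M - v) := by rw [hηh, hσrv]
  have hhr : h = dist e (σr (M - v)) := by rw [hσrv]
  have h2 := near hLZ hζ hζ0 hζL hζM hσr hσr0 hσrM hvr hvminr hη hη0 hηhr hhr
  intro t ht
  have k1 := h1 t ht
  have k2 := h2 t (by rw [gp_comm]; exact ht)
  calc dist (α t) (ζ t) ≤ dist (α t) (η t) + dist (η t) (ζ t) := dist_triangle _ _ _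
    _ ≤ 2 * N 3 0 + 2 * N 3 0 := by rw [dist_comm (α t) (η t)]; linarith
    _ = 4 * N 3 0 := by ring


lemma mainE (hX : GeodesicSpace X) {N : ℝ → ℝ → ℝ} {e : X} :
    ∀ x ∈ stratum N e, ∀ y ∈ stratum N e, ∀ z ∈ stratum N e,
      min (gromovProd e x z) (gromovProd e z y) - 4 * N 3 0 ≤ gromovProd e x y := by
  intro x hx y hy z hz
  obtain ⟨α, LX, hLX, hα, hα0, hαL, hαM⟩ := hx
  obtain ⟨β, LY, hLY, hβ, hβ0, hβL, hβM⟩ := hy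
  obtain ⟨ζ, LZ, hLZ, hζ, hζ0, hζL, hζM⟩ := hz
  set m := min (gromovProd e x z) (gromovProd e z y) with hm
  have hm0 : 0 ≤ m := le_min (gp_nonneg _ _ _) (gp_nonneg _ _ _)
  have hmxz : m ≤ gromovProd e x z := min_le_left _ _
  have hmzy : m ≤ gromovProd e z y := min_le_right _ _
  have f1 := ft hX hLX hα hα0 hαL hαM hLZ hζ hζ0 hζL hζM m ⟨hm0, hmxz⟩
  have f2 := ft hX hLZ hζ hζ0 hζL hζM hLY hβ hβ0 hβL hβM m ⟨hm0, hmzy⟩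
  have hd : dist (α m) (β m) ≤ 8 * N 3 0 := by
    have htr := dist_triangle (α m) (ζ m) (β m)
    linarith
  have hdex : dist e x = LX := by
    rw [← hα0, ← hαL, hα 0 ⟨le_rfl, hLX⟩ LX ⟨hLX, le_rfl⟩, zero_sub, abs_neg,
      abs_of_nonneg hLX]
  have hdey : dist e y = LY := by
    rw [← hβ0, ← hβL, hβ 0 ⟨le_rfl, hLY⟩ LY ⟨hLY, le_rfl⟩, zero_sub, abs_neg,
      abs_of_nonneg hLY]
  have hmLX : m ≤ LX := le_trans hmxz (hdex ▸ gp_le_left e x z)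
  have hmLY : m ≤ LY := by
    have := gp_le_left e y z
    rw [hdey] at this
    rw [gp_comm e z y] at hmzy
    exact le_trans hmzy this
  have g1 : gromovProd e (α m) (β m) ≤ gromovProd e x (β m) := by
    have := gp_mono hα ⟨hm0, hmLX⟩ (β m)
    rwa [hα0, hαL] at this
  have g2 : gromovProd e (β m) x ≤ gromovProd e y x := by
    have := gp_mono hβ ⟨hm0, hmLY⟩ x
    rwa [hβ0, hβL] at this
  have dαm : dist e (α m) = m := by
    rw [← hα0, hα 0 ⟨le_rfl, hLX⟩ m ⟨hm0, hmLX⟩, zero_sub, abs_neg, abs_of_nonneg hm0]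
  have dβm : dist e (β m) = m := by
    rw [← hβ0, hβ 0 ⟨le_rfl, hLY⟩ m ⟨hm0, hmLY⟩, zero_sub, abs_neg, abs_of_nonneg hm0]
  have glow : m - 4 * N 3 0 ≤ gromovProd e (α m) (β m) := by
    unfold gromovProd
    rw [dαm, dβm]
    linarith
  have gc1 : gromovProd e x (β m) = gromovProd e (β m) x := gp_comm _ _ _
  have gc2 : gromovProd e y x = gromovProd e x y := gp_comm _ _ _
  linarith

lemma tetra {a f b c d e2 δ : ℝ} (h1 : min b d - δ ≤ a) (h2 : min c e2 - δ ≤ a)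
    (h3 : min c b - δ ≤ f) (h4 : min e2 d - δ ≤ f) :
    min (b + e2) (d + c) - 2*δ ≤ a + f := by
  have m1 := min_le_left (b + e2) (d + c)
  have m2 := min_le_right (b + e2) (d + c)
  have H1 : b - δ ≤ a ∨ d - δ ≤ a := by
    rcases min_cases b d with ⟨h, _⟩ | ⟨h, _⟩ <;> rw [h] at h1
    · exact Or.inl h1
    · exact Or.inr h1
  have H2 : c - δ ≤ a ∨ e2 - δ ≤ a := by
    rcases min_cases c e2 with ⟨h, _⟩ | ⟨h, _⟩ <;> rw [h] at h2
    · exact Or.inl h2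
    · exact Or.inr h2
  have H3 : c - δ ≤ f ∨ b - δ ≤ f := by
    rcases min_cases c b with ⟨h, _⟩ | ⟨h, _⟩ <;> rw [h] at h3
    · exact Or.inl h3
    · exact Or.inr h3
  have H4 : e2 - δ ≤ f ∨ d - δ ≤ f := by
    rcases min_cases e2 d with ⟨h, _⟩ | ⟨h, _⟩ <;> rw [h] at h4
    · exact Or.inl h4
    · exact Or.inr h4
  rcases H1 with h1'|h1' <;> rcases H2 with h2'|h2' <;> rcases H3 with h3'|h3' <;>
    rcases H4 with h4'|h4' <;> linarith

end Stmt13Aux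

open Stmt13Aux in
/-- the stratum `X_e^{(N)}` is 8·N(3,0)-hyperbolic in the four-point
Gromov product sense. -/
theorem stmt13 {X : Type*} [MetricSpace X] (hX : GeodesicSpace X)
    (N : ℝ → ℝ → ℝ) (hN : MorseGauge N) (e : X) :
    ∀ w ∈ stratum N e, ∀ x ∈ stratum N e, ∀ y ∈ stratum N e, ∀ z ∈ stratum N e,
      min (gromovProd w x z) (gromovProd w z y) - 8 * N 3 0 ≤ gromovProd w x y := by
  intro w hw x hx y hy z hz
  have base : ∀ u v : X, gromovProd w u v =
      dist e w - gromovProd e w u - gromovProd e w v + gromovProd e u v := by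
    intro u v
    unfold gromovProd
    rw [dist_comm w u, dist_comm w v]
    ring
  have h1 := mainE hX x hx y hy z hz
  have h2 := mainE hX x hx y hy w hw
  have h3 := mainE hX w hw z hz x hx
  have h4 := mainE hX w hw z hz y hy
  rw [gp_comm e x w] at h2
  rw [gp_comm e y z] at h4
  have ht := tetra h1 h2 h3 h4
  rw [base x z, base z y, base x y]
  have m1 := min_le_left (dist e w - gromovProd e w x - gromovProd e w z + gromovProd e x z)
    (dist e w - gromovProd e w z - gromovProd e w y + gromovProd e z y)
  have m2 := min_le_right (dist e w - gromovProd e w x - gromovProd e w z + gromovProd e x z)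
    (dist e w - gromovProd e w z - gromovProd e w y + gromovProd e z y)
  rcases le_total (gromovProd e x z + gromovProd e w y)
      (gromovProd e z y + gromovProd e w x) with hc|hc
  · rw [min_eq_left hc] at ht
    linarith
  · rw [min_eq_right hc] at ht
    linarith
end
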